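/- arXiv:2309.04096 — 7 statements merged into one kernel-verified Lean document; each statement's English description precedes it below -/
import Mathlib

section
/- Let H(x,t,ρ) be C², let b(x,t,ρ) be a bounded C¹ solution of b_t + H_x b_ρ − H_ρ b_x = H_{ρρ}b² + 2H_{ρx}b + H_{xx}, and set β := H_x + bH_ρ. Let φ_x^y(ρ;t) be the flow of the ODE dρ/dz = b(z,t,ρ(z)). Then the flow satisfies ∂_t[φ_x^y(ρ;t)] = β(y,t,φ_x^y(ρ;t)) − β(x,t,ρ)·∂_ρ[φ_x^y(ρ;t)] for all x ≤ y, t, ρ. -/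
open Set

/-- Partial derivative in the first (space) variable. -/
noncomputable def pdx (F : ℝ → ℝ → ℝ → ℝ) (x t ρ : ℝ) : ℝ := deriv (fun a => F a t ρ) x

/-- Partial derivative in the second (time) variable. -/
noncomputable def pdt (F : ℝ → ℝ → ℝ → ℝ) (x t ρ : ℝ) : ℝ := deriv (fun s => F x s ρ) t

/-- Partial derivative in the third (momentum) variable. -/
noncomputable def pdr (F : ℝ → ℝ → ℝ → ℝ) (x t ρ : ℝ) : ℝ := deriv (fun r => F x t r) ρ

/-- `β = H_x + b·H_ρ`. -/
noncomputable def betaFn (H b : ℝ → ℝ → ℝ → ℝ) (x t ρ : ℝ) : ℝ :=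
  pdx H x t ρ + b x t ρ * pdr H x t ρ

lemma comp3 {F : ℝ → ℝ → ℝ → ℝ} (hF : ContDiff ℝ 1 (fun p : ℝ × ℝ × ℝ => F p.1 p.2.1 p.2.2))
    {γ₁ γ₂ γ₃ : ℝ → ℝ} {d₁ d₂ d₃ s : ℝ}
    (h₁ : HasDerivAt γ₁ d₁ s) (h₂ : HasDerivAt γ₂ d₂ s) (h₃ : HasDerivAt γ₃ d₃ s) :
    HasDerivAt (fun w => F (γ₁ w) (γ₂ w) (γ₃ w))
      (fderiv ℝ (fun p : ℝ × ℝ × ℝ => F p.1 p.2.1 p.2.2) (γ₁ s, γ₂ s, γ₃ s) (d₁, d₂, d₃)) s := by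
  exact (((hF.differentiable one_ne_zero) (γ₁ s, γ₂ s, γ₃ s)).hasFDerivAt).comp_hasDerivAt s
    (h₁.prodMk (h₂.prodMk h₃))

lemma pdx_eq {F : ℝ → ℝ → ℝ → ℝ} (hF : ContDiff ℝ 1 (fun p : ℝ × ℝ × ℝ => F p.1 p.2.1 p.2.2))
    (x t ρ : ℝ) :
    pdx F x t ρ = fderiv ℝ (fun p : ℝ × ℝ × ℝ => F p.1 p.2.1 p.2.2) (x, t, ρ) (1, 0, 0) :=
  (comp3 hF (hasDerivAt_id x) (hasDerivAt_const x t) (hasDerivAt_const x ρ)).deriv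

lemma pdt_eq {F : ℝ → ℝ → ℝ → ℝ} (hF : ContDiff ℝ 1 (fun p : ℝ × ℝ × ℝ => F p.1 p.2.1 p.2.2))
    (x t ρ : ℝ) :
    pdt F x t ρ = fderiv ℝ (fun p : ℝ × ℝ × ℝ => F p.1 p.2.1 p.2.2) (x, t, ρ) (0, 1, 0) :=
  (comp3 hF (hasDerivAt_const t x) (hasDerivAt_id t) (hasDerivAt_const t ρ)).deriv

lemma pdr_eq {F : ℝ → ℝ → ℝ → ℝ} (hF : ContDiff ℝ 1 (fun p : ℝ × ℝ × ℝ => F p.1 p.2.1 p.2.2))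
    (x t ρ : ℝ) :
    pdr F x t ρ = fderiv ℝ (fun p : ℝ × ℝ × ℝ => F p.1 p.2.1 p.2.2) (x, t, ρ) (0, 0, 1) :=
  (comp3 hF (hasDerivAt_const ρ x) (hasDerivAt_const ρ t) (hasDerivAt_id ρ)).deriv

lemma deriv_split {F : ℝ → ℝ → ℝ → ℝ}
    (hF : ContDiff ℝ 1 (fun p : ℝ × ℝ × ℝ => F p.1 p.2.1 p.2.2)) (a s r d₁ d₂ d₃ : ℝ) :
    fderiv ℝ (fun p : ℝ × ℝ × ℝ => F p.1 p.2.1 p.2.2) (a, s, r) (d₁, d₂, d₃)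
      = d₁ * pdx F a s r + d₂ * pdt F a s r + d₃ * pdr F a s r := by
  have hv : (d₁, d₂, d₃) = d₁ • ((1:ℝ), (0:ℝ), (0:ℝ)) + d₂ • ((0:ℝ), (1:ℝ), (0:ℝ))
      + d₃ • ((0:ℝ), (0:ℝ), (1:ℝ)) := by
    simp [Prod.ext_iff]
  rw [hv, map_add, map_add, map_smul, map_smul, map_smul,
    pdx_eq hF, pdt_eq hF, pdr_eq hF, smul_eq_mul, smul_eq_mul, smul_eq_mul]

lemma comp3_pd {F : ℝ → ℝ → ℝ → ℝ}
    (hF : ContDiff ℝ 1 (fun p : ℝ × ℝ × ℝ => F p.1 p.2.1 p.2.2))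
    {γ₁ γ₂ γ₃ : ℝ → ℝ} {d₁ d₂ d₃ s : ℝ}
    (h₁ : HasDerivAt γ₁ d₁ s) (h₂ : HasDerivAt γ₂ d₂ s) (h₃ : HasDerivAt γ₃ d₃ s) :
    HasDerivAt (fun w => F (γ₁ w) (γ₂ w) (γ₃ w))
      (d₁ * pdx F (γ₁ s) (γ₂ s) (γ₃ s) + d₂ * pdt F (γ₁ s) (γ₂ s) (γ₃ s)
        + d₃ * pdr F (γ₁ s) (γ₂ s) (γ₃ s)) s := by
  have h := comp3 hF h₁ h₂ h₃
  rwa [deriv_split hF] at h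

lemma comp4 {F : ℝ → ℝ → ℝ → ℝ → ℝ}
    (hF : ContDiff ℝ 1 (fun p : ℝ × ℝ × ℝ × ℝ => F p.1 p.2.1 p.2.2.1 p.2.2.2))
    {γ₁ γ₂ γ₃ γ₄ : ℝ → ℝ} {d₁ d₂ d₃ d₄ s : ℝ}
    (h₁ : HasDerivAt γ₁ d₁ s) (h₂ : HasDerivAt γ₂ d₂ s) (h₃ : HasDerivAt γ₃ d₃ s)
    (h₄ : HasDerivAt γ₄ d₄ s) :
    HasDerivAt (fun w => F (γ₁ w) (γ₂ w) (γ₃ w) (γ₄ w))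
      (fderiv ℝ (fun p : ℝ × ℝ × ℝ × ℝ => F p.1 p.2.1 p.2.2.1 p.2.2.2)
        (γ₁ s, γ₂ s, γ₃ s, γ₄ s) (d₁, d₂, d₃, d₄)) s := by
  exact (((hF.differentiable one_ne_zero) (γ₁ s, γ₂ s, γ₃ s, γ₄ s)).hasFDerivAt).comp_hasDerivAt s
    (h₁.prodMk (h₂.prodMk (h₃.prodMk h₄)))

lemma cont_dfderiv {E : Type*} [NormedAddCommGroup E] [NormedSpace ℝ E] {F : E → ℝ}
    (hF : ContDiff ℝ 1 F) (v : E) : Continuous fun p => fderiv ℝ F p v :=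
  (hF.continuous_fderiv one_ne_zero).clm_apply continuous_const

lemma pdx_congr {G G' : ℝ → ℝ → ℝ → ℝ} (h : ∀ a s r, G a s r = G' a s r) (a s r : ℝ) :
    pdx G a s r = pdx G' a s r := by
  simp only [pdx]
  congr 1
  ext a'
  exact h a' s r

lemma pdr_congr {G G' : ℝ → ℝ → ℝ → ℝ} (h : ∀ a s r, G a s r = G' a s r) (a s r : ℝ) :
    pdr G a s r = pdr G' a s r := by
  simp only [pdr]
  congr 1
  ext r'
  exact h a s r'

lemma fderiv_dcomm {E : Type*} [NormedAddCommGroup E] [NormedSpace ℝ E] {F : E → ℝ}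
    (hF : ContDiff ℝ 2 F) (p v w : E) :
    fderiv ℝ (fun q => fderiv ℝ F q v) p w = fderiv ℝ (fun q => fderiv ℝ F q w) p v := by
  have hd1 : ContDiff ℝ 1 (fderiv ℝ F) := hF.fderiv_right (by norm_num)
  have hder : HasFDerivAt (fderiv ℝ F) (fderiv ℝ (fderiv ℝ F) p) p :=
    ((hd1.differentiable one_ne_zero) p).hasFDerivAt
  have key : ∀ u w' : E,
      fderiv ℝ (fun q => fderiv ℝ F q u) p w' = fderiv ℝ (fderiv ℝ F) p w' u := by
    intro u w'
    have h3 : HasFDerivAt (fun q => fderiv ℝ F q u)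
        ((ContinuousLinearMap.apply ℝ ℝ u).comp (fderiv ℝ (fderiv ℝ F) p)) p :=
      ((ContinuousLinearMap.apply ℝ ℝ u).hasFDerivAt.comp p hder)
    rw [h3.fderiv]
    rfl
  rw [key v w, key w v]
  exact second_derivative_symmetric
    (fun y => ((hF.differentiable two_ne_zero) y).hasFDerivAt) hder w v

/-- Lemma (2.8): the flow `φ_x^y(ρ;t)` of `dρ/dz = b(z,t,ρ)` satisfies
`∂_t φ = β(y,t,φ) − β(x,t,ρ)·∂_ρ φ`. -/
theorem stmt4
    (H b : ℝ → ℝ → ℝ → ℝ) (φ : ℝ → ℝ → ℝ → ℝ → ℝ)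
    (hH : ContDiff ℝ 2 (fun p : ℝ × ℝ × ℝ => H p.1 p.2.1 p.2.2))
    (hb : ContDiff ℝ 1 (fun p : ℝ × ℝ × ℝ => b p.1 p.2.1 p.2.2))
    (hb_bdd : ∃ M : ℝ, ∀ x t ρ, |b x t ρ| ≤ M)
    (hPDE : ∀ x t ρ : ℝ,
      pdt b x t ρ + pdx H x t ρ * pdr b x t ρ - pdr H x t ρ * pdx b x t ρ
        = pdr (pdr H) x t ρ * (b x t ρ) ^ 2 + 2 * pdx (pdr H) x t ρ * b x t ρ
          + pdx (pdx H) x t ρ)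
    (hφ_init : ∀ x ρ t, φ x x ρ t = ρ)
    (hφ_ode : ∀ x z ρ t, HasDerivAt (fun w => φ x w ρ t) (b z t (φ x z ρ t)) z)
    (hφ_C1 : ContDiff ℝ 1 (fun p : ℝ × ℝ × ℝ × ℝ => φ p.1 p.2.1 p.2.2.1 p.2.2.2)) :
    ∀ x y t ρ : ℝ, x ≤ y →
      deriv (fun s => φ x y ρ s) t
        = betaFn H b y t (φ x y ρ t)
          - betaFn H b x t ρ * deriv (fun r => φ x y r t) ρ := by
  intro x y t ρ _
  set φh : ℝ × ℝ × ℝ × ℝ → ℝ := fun p => φ p.1 p.2.1 p.2.2.1 p.2.2.2 with hφh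
  set bh : ℝ × ℝ × ℝ → ℝ := fun p => b p.1 p.2.1 p.2.2 with hbh
  -- basic continuity facts
  have hφc : Continuous φh := hφ_C1.continuous
  have hbc : Continuous bh := hb.continuous
  -- the flow restricted to the data of interest
  set W : ℝ → ℝ := fun z => φ x z ρ t with hW
  set u : ℝ → ℝ := fun z => fderiv ℝ φh (x, z, ρ, t) (0, 0, 0, 1) with hu
  set v : ℝ → ℝ := fun z => fderiv ℝ φh (x, z, ρ, t) (0, 0, 1, 0) with hv
  have hcurve : Continuous fun z : ℝ => ((x, z, ρ, t) : ℝ × ℝ × ℝ × ℝ) :=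
    continuous_const.prodMk (continuous_id.prodMk continuous_const)
  have hWc : Continuous W := hφc.comp hcurve
  have huc : Continuous u := (cont_dfderiv hφ_C1 ((0:ℝ), (0:ℝ), (0:ℝ), (1:ℝ))).comp hcurve
  have hvc : Continuous v := (cont_dfderiv hφ_C1 ((0:ℝ), (0:ℝ), (1:ℝ), (0:ℝ))).comp hcurve
  -- time and momentum derivatives of the flow
  have hu_t : ∀ z s : ℝ, HasDerivAt (fun s' => φ x z ρ s')
      (fderiv ℝ φh (x, z, ρ, s) ((0:ℝ), (0:ℝ), (0:ℝ), (1:ℝ))) s := fun z s =>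
    comp4 hφ_C1 (hasDerivAt_const s x) (hasDerivAt_const s z) (hasDerivAt_const s ρ)
      (hasDerivAt_id s)
  have hv_r : ∀ z r : ℝ, HasDerivAt (fun r' => φ x z r' t)
      (fderiv ℝ φh (x, z, r, t) ((0:ℝ), (0:ℝ), (1:ℝ), (0:ℝ))) r := fun z r =>
    comp4 hφ_C1 (hasDerivAt_const r x) (hasDerivAt_const r z) (hasDerivAt_id r)
      (hasDerivAt_const r t)
  -- integral identity for the flow
  have hInt : ∀ r s z : ℝ, φ x z r s = r + ∫ w in x..z, b w s (φ x w r s) := by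
    intro r s z
    have hc4 : Continuous fun w : ℝ => ((x, w, r, s) : ℝ × ℝ × ℝ × ℝ) :=
      continuous_const.prodMk (continuous_id.prodMk continuous_const)
    have hφw : Continuous fun w => φ x w r s := hφc.comp hc4
    have hc3 : Continuous fun w : ℝ => ((w, s, φ x w r s) : ℝ × ℝ × ℝ) :=
      continuous_id.prodMk (continuous_const.prodMk hφw)
    have hcont : Continuous fun w => b w s (φ x w r s) := hbc.comp hc3
    have h := intervalIntegral.integral_eq_sub_of_hasDerivAt
      (f := fun w => φ x w r s) (f' := fun w => b w s (φ x w r s))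
      (fun w _ => hφ_ode x w r s) (hcont.intervalIntegrable x z)
    rw [h]
    simp only [hφ_init]
    ring
  -- generic continuity of the integrand
  have hgc : ∀ s : ℝ, Continuous fun w => b w s (φ x w ρ s) := by
    intro s
    have hφw : Continuous fun w => φ x w ρ s := hφc.comp
      (continuous_const.prodMk (continuous_id.prodMk continuous_const) :
        Continuous fun w : ℝ => ((x, w, ρ, s) : ℝ × ℝ × ℝ × ℝ))
    exact hbc.comp ((continuous_id.prodMk (continuous_const.prodMk hφw)) :
      Continuous fun w : ℝ => ((w, s, φ x w ρ s) : ℝ × ℝ × ℝ))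
  -- the integral equation satisfied by u
  have hu_int : ∀ z : ℝ, u z = ∫ w in x..z, (pdt b w t (W w) + pdr b w t (W w) * u w) := by
    intro z
    set F' : ℝ → ℝ → ℝ := fun s w =>
      fderiv ℝ bh (w, s, φ x w ρ s)
        ((0:ℝ), (1:ℝ), fderiv ℝ φh (x, w, ρ, s) ((0:ℝ), (0:ℝ), (0:ℝ), (1:ℝ))) with hF'
    have hq4 : Continuous fun q : ℝ × ℝ => ((x, q.1, ρ, q.2) : ℝ × ℝ × ℝ × ℝ) :=
      continuous_const.prodMk (continuous_fst.prodMk (continuous_const.prodMk continuous_snd))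
    have hφq : Continuous fun q : ℝ × ℝ => φh (x, q.1, ρ, q.2) := hφc.comp hq4
    have hF'c : Continuous fun q : ℝ × ℝ => F' q.2 q.1 := by
      have h1 : Continuous fun q : ℝ × ℝ => fderiv ℝ bh (q.1, q.2, φh (x, q.1, ρ, q.2)) :=
        (hb.continuous_fderiv one_ne_zero).comp (continuous_fst.prodMk (continuous_snd.prodMk hφq))
      have h2 : Continuous fun q : ℝ × ℝ =>
          (((0:ℝ), (1:ℝ), fderiv ℝ φh (x, q.1, ρ, q.2) ((0:ℝ),(0:ℝ),(0:ℝ),(1:ℝ))) : ℝ × ℝ × ℝ) :=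
        continuous_const.prodMk (continuous_const.prodMk
          ((cont_dfderiv hφ_C1 ((0:ℝ),(0:ℝ),(0:ℝ),(1:ℝ))).comp hq4))
      exact h1.clm_apply h2
    obtain ⟨C, hC⟩ : ∃ C, ∀ q ∈ (uIcc x z) ×ˢ (Icc (t-1) (t+1)), ‖F' q.2 q.1‖ ≤ C :=
      (isCompact_uIcc.prod isCompact_Icc).exists_bound_of_continuousOn hF'c.continuousOn
    have hmeas : ∀ᶠ s in nhds t, MeasureTheory.AEStronglyMeasurable
        (fun w => b w s (φ x w ρ s)) (MeasureTheory.volume.restrict (uIoc x z)) :=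
      Filter.Eventually.of_forall fun s => (hgc s).aestronglyMeasurable
    have hint : IntervalIntegrable (fun w => b w t (φ x w ρ t)) MeasureTheory.volume x z :=
      (hgc t).intervalIntegrable x z
    have hmeas' : MeasureTheory.AEStronglyMeasurable (F' t)
        (MeasureTheory.volume.restrict (uIoc x z)) :=
      (hF'c.comp (continuous_id.prodMk continuous_const :
        Continuous fun w : ℝ => ((w, t) : ℝ × ℝ))).aestronglyMeasurable
    have hbound : ∀ᵐ w ∂MeasureTheory.volume, w ∈ uIoc x z →
        ∀ s ∈ Metric.ball t 1, ‖F' s w‖ ≤ C := by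
      refine Filter.Eventually.of_forall fun w hw s hs => ?_
      refine hC (w, s) ⟨uIoc_subset_uIcc hw, ?_⟩
      rw [Real.ball_eq_Ioo] at hs
      exact Ioo_subset_Icc_self hs
    have hdiff : ∀ᵐ w ∂MeasureTheory.volume, w ∈ uIoc x z →
        ∀ s ∈ Metric.ball t 1, HasDerivAt (fun s' => b w s' (φ x w ρ s')) (F' s w) s := by
      refine Filter.Eventually.of_forall fun w _ s _ => ?_
      exact comp3 hb (hasDerivAt_const s w) (hasDerivAt_id s) (hu_t w s)
    have leib := (intervalIntegral.hasDerivAt_integral_of_dominated_loc_of_deriv_le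
      (Metric.ball_mem_nhds _ one_pos) hmeas hint hmeas' hbound (intervalIntegrable_const) hdiff).2
    have h2 : HasDerivAt (fun s => ρ + ∫ w in x..z, b w s (φ x w ρ s))
        (∫ w in x..z, F' t w) t := leib.const_add ρ
    have h3 : HasDerivAt (fun s => φ x z ρ s) (∫ w in x..z, F' t w) t :=
      h2.congr_of_eventuallyEq (Filter.Eventually.of_forall fun s => hInt ρ s z)
    have h4 : u z = ∫ w in x..z, F' t w := (hu_t z t).unique h3
    rw [h4]
    refine intervalIntegral.integral_congr fun w _ => ?_
    show fderiv ℝ bh (w, t, φ x w ρ t)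
        ((0:ℝ), (1:ℝ), fderiv ℝ φh (x, w, ρ, t) ((0:ℝ), (0:ℝ), (0:ℝ), (1:ℝ))) = _
    rw [deriv_split hb]
    simp only [hW, hu]
    ring
  have hv_int : ∀ z : ℝ, v z = 1 + ∫ w in x..z, pdr b w t (W w) * v w := by
    intro z
    set F' : ℝ → ℝ → ℝ := fun r w =>
      fderiv ℝ bh (w, t, φ x w r t)
        ((0:ℝ), (0:ℝ), fderiv ℝ φh (x, w, r, t) ((0:ℝ), (0:ℝ), (1:ℝ), (0:ℝ))) with hF'
    have hq4 : Continuous fun q : ℝ × ℝ => ((x, q.1, q.2, t) : ℝ × ℝ × ℝ × ℝ) :=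
      continuous_const.prodMk (continuous_fst.prodMk (continuous_snd.prodMk continuous_const))
    have hφq : Continuous fun q : ℝ × ℝ => φh (x, q.1, q.2, t) := hφc.comp hq4
    have hF'c : Continuous fun q : ℝ × ℝ => F' q.2 q.1 := by
      have h1 : Continuous fun q : ℝ × ℝ => fderiv ℝ bh (q.1, t, φh (x, q.1, q.2, t)) :=
        (hb.continuous_fderiv one_ne_zero).comp
          (continuous_fst.prodMk (continuous_const.prodMk hφq))
      have h2 : Continuous fun q : ℝ × ℝ =>
          (((0:ℝ), (0:ℝ), fderiv ℝ φh (x, q.1, q.2, t) ((0:ℝ),(0:ℝ),(1:ℝ),(0:ℝ))) : ℝ × ℝ × ℝ) :=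
        continuous_const.prodMk (continuous_const.prodMk
          ((cont_dfderiv hφ_C1 ((0:ℝ),(0:ℝ),(1:ℝ),(0:ℝ))).comp hq4))
      exact h1.clm_apply h2
    obtain ⟨C, hC⟩ : ∃ C, ∀ q ∈ (uIcc x z) ×ˢ (Icc (ρ-1) (ρ+1)), ‖F' q.2 q.1‖ ≤ C :=
      (isCompact_uIcc.prod isCompact_Icc).exists_bound_of_continuousOn hF'c.continuousOn
    have hgcr : ∀ r : ℝ, Continuous fun w => b w t (φ x w r t) := by
      intro r
      have hφw : Continuous fun w => φ x w r t := hφc.comp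
        (continuous_const.prodMk (continuous_id.prodMk continuous_const) :
          Continuous fun w : ℝ => ((x, w, r, t) : ℝ × ℝ × ℝ × ℝ))
      exact hbc.comp ((continuous_id.prodMk (continuous_const.prodMk hφw)) :
        Continuous fun w : ℝ => ((w, t, φ x w r t) : ℝ × ℝ × ℝ))
    have hmeas : ∀ᶠ r in nhds ρ, MeasureTheory.AEStronglyMeasurable
        (fun w => b w t (φ x w r t)) (MeasureTheory.volume.restrict (uIoc x z)) :=
      Filter.Eventually.of_forall fun r => (hgcr r).aestronglyMeasurable
    have hint : IntervalIntegrable (fun w => b w t (φ x w ρ t)) MeasureTheory.volume x z :=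
      (hgcr ρ).intervalIntegrable x z
    have hmeas' : MeasureTheory.AEStronglyMeasurable (F' ρ)
        (MeasureTheory.volume.restrict (uIoc x z)) :=
      (hF'c.comp (continuous_id.prodMk continuous_const :
        Continuous fun w : ℝ => ((w, ρ) : ℝ × ℝ))).aestronglyMeasurable
    have hbound : ∀ᵐ w ∂MeasureTheory.volume, w ∈ uIoc x z →
        ∀ r ∈ Metric.ball ρ 1, ‖F' r w‖ ≤ C := by
      refine Filter.Eventually.of_forall fun w hw r hr => ?_
      refine hC (w, r) ⟨uIoc_subset_uIcc hw, ?_⟩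
      rw [Real.ball_eq_Ioo] at hr
      exact Ioo_subset_Icc_self hr
    have hdiff : ∀ᵐ w ∂MeasureTheory.volume, w ∈ uIoc x z →
        ∀ r ∈ Metric.ball ρ 1, HasDerivAt (fun r' => b w t (φ x w r' t)) (F' r w) r := by
      refine Filter.Eventually.of_forall fun w _ r _ => ?_
      exact comp3 hb (hasDerivAt_const r w) (hasDerivAt_const r t) (hv_r w r)
    have leib := (intervalIntegral.hasDerivAt_integral_of_dominated_loc_of_deriv_le
      (Metric.ball_mem_nhds _ one_pos) hmeas hint hmeas' hbound (intervalIntegrable_const) hdiff).2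
    have h2 : HasDerivAt (fun r => r + ∫ w in x..z, b w t (φ x w r t))
        (1 + ∫ w in x..z, F' ρ w) ρ := (hasDerivAt_id ρ).add leib
    have h3 : HasDerivAt (fun r => φ x z r t) (1 + ∫ w in x..z, F' ρ w) ρ :=
      h2.congr_of_eventuallyEq (Filter.Eventually.of_forall fun r => hInt r t z)
    have h4 : v z = 1 + ∫ w in x..z, F' ρ w := (hv_r z ρ).unique h3
    rw [h4]
    congr 1
    refine intervalIntegral.integral_congr fun w _ => ?_
    show fderiv ℝ bh (w, t, φ x w ρ t)
        ((0:ℝ), (0:ℝ), fderiv ℝ φh (x, w, ρ, t) ((0:ℝ), (0:ℝ), (1:ℝ), (0:ℝ))) = _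
    rw [deriv_split hb]
    simp only [hW, hv]
    ring
  have hv_int : ∀ z : ℝ, v z = 1 + ∫ w in x..z, pdr b w t (W w) * v w := by
    intro z
    set F' : ℝ → ℝ → ℝ := fun r w =>
      fderiv ℝ bh (w, t, φ x w r t)
        ((0:ℝ), (0:ℝ), fderiv ℝ φh (x, w, r, t) ((0:ℝ), (0:ℝ), (1:ℝ), (0:ℝ))) with hF'
    have hq4 : Continuous fun q : ℝ × ℝ => ((x, q.1, q.2, t) : ℝ × ℝ × ℝ × ℝ) :=
      continuous_const.prodMk (continuous_fst.prodMk (continuous_snd.prodMk continuous_const))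
    have hφq : Continuous fun q : ℝ × ℝ => φh (x, q.1, q.2, t) := hφc.comp hq4
    have hF'c : Continuous fun q : ℝ × ℝ => F' q.2 q.1 := by
      have h1 : Continuous fun q : ℝ × ℝ => fderiv ℝ bh (q.1, t, φh (x, q.1, q.2, t)) :=
        (hb.continuous_fderiv one_ne_zero).comp
          (continuous_fst.prodMk (continuous_const.prodMk hφq))
      have h2 : Continuous fun q : ℝ × ℝ =>
          (((0:ℝ), (0:ℝ), fderiv ℝ φh (x, q.1, q.2, t) ((0:ℝ),(0:ℝ),(1:ℝ),(0:ℝ))) : ℝ × ℝ × ℝ) :=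
        continuous_const.prodMk (continuous_const.prodMk
          ((cont_dfderiv hφ_C1 ((0:ℝ),(0:ℝ),(1:ℝ),(0:ℝ))).comp hq4))
      exact h1.clm_apply h2
    obtain ⟨C, hC⟩ : ∃ C, ∀ q ∈ (uIcc x z) ×ˢ (Icc (ρ-1) (ρ+1)), ‖F' q.2 q.1‖ ≤ C :=
      (isCompact_uIcc.prod isCompact_Icc).exists_bound_of_continuousOn hF'c.continuousOn
    have hgcr : ∀ r : ℝ, Continuous fun w => b w t (φ x w r t) := by
      intro r
      have hφw : Continuous fun w => φ x w r t := hφc.comp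
        (continuous_const.prodMk (continuous_id.prodMk continuous_const) :
          Continuous fun w : ℝ => ((x, w, r, t) : ℝ × ℝ × ℝ × ℝ))
      exact hbc.comp ((continuous_id.prodMk (continuous_const.prodMk hφw)) :
        Continuous fun w : ℝ => ((w, t, φ x w r t) : ℝ × ℝ × ℝ))
    have hmeas : ∀ᶠ r in nhds ρ, MeasureTheory.AEStronglyMeasurable
        (fun w => b w t (φ x w r t)) (MeasureTheory.volume.restrict (uIoc x z)) :=
      Filter.Eventually.of_forall fun r => (hgcr r).aestronglyMeasurable
    have hint : IntervalIntegrable (fun w => b w t (φ x w ρ t)) MeasureTheory.volume x z :=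
      (hgcr ρ).intervalIntegrable x z
    have hmeas' : MeasureTheory.AEStronglyMeasurable (F' ρ)
        (MeasureTheory.volume.restrict (uIoc x z)) :=
      (hF'c.comp (continuous_id.prodMk continuous_const :
        Continuous fun w : ℝ => ((w, ρ) : ℝ × ℝ))).aestronglyMeasurable
    have hbound : ∀ᵐ w ∂MeasureTheory.volume, w ∈ uIoc x z →
        ∀ r ∈ Metric.ball ρ 1, ‖F' r w‖ ≤ C := by
      refine Filter.Eventually.of_forall fun w hw r hr => ?_
      refine hC (w, r) ⟨uIoc_subset_uIcc hw, ?_⟩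
      rw [Real.ball_eq_Ioo] at hr
      exact Ioo_subset_Icc_self hr
    have hdiff : ∀ᵐ w ∂MeasureTheory.volume, w ∈ uIoc x z →
        ∀ r ∈ Metric.ball ρ 1, HasDerivAt (fun r' => b w t (φ x w r' t)) (F' r w) r := by
      refine Filter.Eventually.of_forall fun w _ r _ => ?_
      exact comp3 hb (hasDerivAt_const r w) (hasDerivAt_const r t) (hv_r w r)
    have leib := (intervalIntegral.hasDerivAt_integral_of_dominated_loc_of_deriv_le
      (Metric.ball_mem_nhds _ one_pos) hmeas hint hmeas' hbound (intervalIntegrable_const) hdiff).2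
    have h2 : HasDerivAt (fun r => r + ∫ w in x..z, b w t (φ x w r t))
        (1 + ∫ w in x..z, F' ρ w) ρ := (hasDerivAt_id ρ).add leib
    have h3 : HasDerivAt (fun r => φ x z r t) (1 + ∫ w in x..z, F' ρ w) ρ :=
      h2.congr_of_eventuallyEq (Filter.Eventually.of_forall fun r => hInt r t z)
    have h4 : v z = 1 + ∫ w in x..z, F' ρ w := (hv_r z ρ).unique h3
    rw [h4]
    congr 1
    refine intervalIntegral.integral_congr fun w _ => ?_
    show fderiv ℝ bh (w, t, φ x w ρ t)
        ((0:ℝ), (0:ℝ), fderiv ℝ φh (x, w, ρ, t) ((0:ℝ), (0:ℝ), (1:ℝ), (0:ℝ))) = _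
    rw [deriv_split hb]
    simp only [hW, hv]
    ring
  -- second derivative machinery for H
  set Hh : ℝ × ℝ × ℝ → ℝ := fun p => H p.1 p.2.1 p.2.2 with hHh
  have hH1 : ContDiff ℝ 1 Hh := hH.of_le one_le_two
  set Hx3 : ℝ → ℝ → ℝ → ℝ := fun a s r => fderiv ℝ Hh (a, s, r) ((1:ℝ), (0:ℝ), (0:ℝ)) with hHx3
  set Hr3 : ℝ → ℝ → ℝ → ℝ := fun a s r => fderiv ℝ Hh (a, s, r) ((0:ℝ), (0:ℝ), (1:ℝ)) with hHr3
  have hHd : ContDiff ℝ 1 (fderiv ℝ Hh) := hH.fderiv_right (by norm_num)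
  have hHx3C : ContDiff ℝ 1 (fun p : ℝ × ℝ × ℝ => Hx3 p.1 p.2.1 p.2.2) :=
    hHd.clm_apply contDiff_const
  have hHr3C : ContDiff ℝ 1 (fun p : ℝ × ℝ × ℝ => Hr3 p.1 p.2.1 p.2.2) :=
    hHd.clm_apply contDiff_const
  have hpdxH : ∀ a s r, pdx H a s r = Hx3 a s r := fun a s r => pdx_eq hH1 a s r
  have hpdrH : ∀ a s r, pdr H a s r = Hr3 a s r := fun a s r => pdr_eq hH1 a s r
  have hsym : ∀ a s r : ℝ, pdr (pdx H) a s r = pdx (pdr H) a s r := by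
    intro a s r
    rw [pdr_congr hpdxH, pdx_congr hpdrH, pdr_eq hHx3C, pdx_eq hHr3C]
    exact fderiv_dcomm hH (a, s, r) ((1:ℝ), (0:ℝ), (0:ℝ)) ((0:ℝ), (0:ℝ), (1:ℝ))
  -- derivative of the flow line
  have hW' : ∀ z : ℝ, HasDerivAt W (b z t (W z)) z := fun z => hφ_ode x z ρ t
  -- continuity of pd-compositions along the flow line
  have hcurve3 : Continuous fun w : ℝ => ((w, t, W w) : ℝ × ℝ × ℝ) :=
    continuous_id.prodMk (continuous_const.prodMk hWc)
  have hpdtb_c : Continuous fun w => pdt b w t (W w) := by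
    have h1 : Continuous fun w => fderiv ℝ bh (w, t, W w) ((0:ℝ), (1:ℝ), (0:ℝ)) :=
      (cont_dfderiv hb _).comp hcurve3
    have he : (fun w => pdt b w t (W w))
        = fun w => fderiv ℝ bh (w, t, W w) ((0:ℝ), (1:ℝ), (0:ℝ)) :=
      funext fun w => pdt_eq hb w t (W w)
    rw [he]; exact h1
  have hpdrb_c : Continuous fun w => pdr b w t (W w) := by
    have h1 : Continuous fun w => fderiv ℝ bh (w, t, W w) ((0:ℝ), (0:ℝ), (1:ℝ)) :=
      (cont_dfderiv hb _).comp hcurve3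
    have he : (fun w => pdr b w t (W w))
        = fun w => fderiv ℝ bh (w, t, W w) ((0:ℝ), (0:ℝ), (1:ℝ)) :=
      funext fun w => pdr_eq hb w t (W w)
    rw [he]; exact h1
  -- ODEs satisfied by u and v
  have hu' : ∀ z : ℝ, HasDerivAt u (pdt b z t (W z) + pdr b z t (W z) * u z) z := by
    intro z
    have hψc : Continuous fun w => pdt b w t (W w) + pdr b w t (W w) * u w :=
      hpdtb_c.add (hpdrb_c.mul huc)
    have hF := intervalIntegral.integral_hasDerivAt_right
      (hψc.intervalIntegrable x z) (hψc.stronglyMeasurableAtFilter _ _) hψc.continuousAt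
    exact hF.congr_of_eventuallyEq (Filter.Eventually.of_forall hu_int)
  have hv' : ∀ z : ℝ, HasDerivAt v (pdr b z t (W z) * v z) z := by
    intro z
    have hψc : Continuous fun w => pdr b w t (W w) * v w := hpdrb_c.mul hvc
    have hF := intervalIntegral.integral_hasDerivAt_right
      (hψc.intervalIntegrable x z) (hψc.stronglyMeasurableAtFilter _ _) hψc.continuousAt
    exact (hF.const_add 1).congr_of_eventuallyEq (Filter.Eventually.of_forall hv_int)
  -- derivative of z ↦ β(z, t, W z)
  have hB : ∀ z : ℝ, HasDerivAt (fun z' => betaFn H b z' t (W z'))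
      ((1 * pdx Hx3 z t (W z) + 0 * pdt Hx3 z t (W z) + b z t (W z) * pdr Hx3 z t (W z))
        + ((1 * pdx b z t (W z) + 0 * pdt b z t (W z) + b z t (W z) * pdr b z t (W z))
            * pdr H z t (W z)
          + b z t (W z) * (1 * pdx Hr3 z t (W z) + 0 * pdt Hr3 z t (W z)
              + b z t (W z) * pdr Hr3 z t (W z)))) z := by
    intro z
    have q1' := comp3_pd hHx3C (hasDerivAt_id z) (hasDerivAt_const z t) (hW' z)
    have q1 : HasDerivAt (fun z' => pdx H z' t (W z'))
        (1 * pdx Hx3 z t (W z) + 0 * pdt Hx3 z t (W z) + b z t (W z) * pdr Hx3 z t (W z)) z :=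
      q1'.congr_of_eventuallyEq (Filter.Eventually.of_forall fun z' => hpdxH z' t (W z'))
    have q2 : HasDerivAt (fun z' => b z' t (W z'))
        (1 * pdx b z t (W z) + 0 * pdt b z t (W z) + b z t (W z) * pdr b z t (W z)) z :=
      comp3_pd hb (hasDerivAt_id z) (hasDerivAt_const z t) (hW' z)
    have q3' := comp3_pd hHr3C (hasDerivAt_id z) (hasDerivAt_const z t) (hW' z)
    have q3 : HasDerivAt (fun z' => pdr H z' t (W z'))
        (1 * pdx Hr3 z t (W z) + 0 * pdt Hr3 z t (W z) + b z t (W z) * pdr Hr3 z t (W z)) z :=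
      q3'.congr_of_eventuallyEq (Filter.Eventually.of_forall fun z' => hpdrH z' t (W z'))
    exact q1.add (q2.mul q3)
  -- the function F and its linear ODE
  set Fq : ℝ → ℝ := fun z => u z - betaFn H b z t (W z) + betaFn H b x t ρ * v z with hFq
  have hF' : ∀ z : ℝ, HasDerivAt Fq (pdr b z t (W z) * Fq z) z := by
    intro z
    have hq := ((hu' z).sub (hB z)).add ((hv' z).const_mul (betaFn H b x t ρ))
    have hval : (pdt b z t (W z) + pdr b z t (W z) * u z
          - ((1 * pdx Hx3 z t (W z) + 0 * pdt Hx3 z t (W z) + b z t (W z) * pdr Hx3 z t (W z))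
            + ((1 * pdx b z t (W z) + 0 * pdt b z t (W z) + b z t (W z) * pdr b z t (W z))
                * pdr H z t (W z)
              + b z t (W z) * (1 * pdx Hr3 z t (W z) + 0 * pdt Hr3 z t (W z)
                  + b z t (W z) * pdr Hr3 z t (W z))))
          + betaFn H b x t ρ * (pdr b z t (W z) * v z))
        = pdr b z t (W z) * Fq z := by
      have pde := hPDE z t (W z)
      have e1 : pdx Hx3 z t (W z) = pdx (pdx H) z t (W z) := (pdx_congr hpdxH z t (W z)).symm
      have e2 : pdr Hx3 z t (W z) = pdx (pdr H) z t (W z) :=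
        (pdr_congr hpdxH z t (W z)).symm.trans (hsym z t (W z))
      have e3 : pdx Hr3 z t (W z) = pdx (pdr H) z t (W z) := (pdx_congr hpdrH z t (W z)).symm
      have e4 : pdr Hr3 z t (W z) = pdr (pdr H) z t (W z) := (pdr_congr hpdrH z t (W z)).symm
      rw [e1, e2, e3, e4]
      simp only [hFq, betaFn]
      linear_combination pde
    rw [← hval]
    exact hq
  -- integrating factor
  set G : ℝ → ℝ := fun z => ∫ w in x..z, pdr b w t (W w) with hGdef
  have hG' : ∀ z : ℝ, HasDerivAt G (pdr b z t (W z)) z := fun z =>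
    intervalIntegral.integral_hasDerivAt_right (hpdrb_c.intervalIntegrable x z)
      (hpdrb_c.stronglyMeasurableAtFilter _ _) hpdrb_c.continuousAt
  have hE : ∀ z : ℝ, HasDerivAt (fun w => Fq w * Real.exp (-G w)) 0 z := by
    intro z
    have h := (hF' z).mul (((hG' z).neg).exp)
    exact h.congr_deriv (by ring)
  have hconst := is_const_of_deriv_eq_zero
    (fun z => (hE z).differentiableAt) (fun z => (hE z).deriv) y x
  -- F vanishes at x
  have hux : u x = 0 := by rw [hu_int x, intervalIntegral.integral_same]
  have hvx : v x = 1 := by rw [hv_int x, intervalIntegral.integral_same]; norm_num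
  have hWx : W x = ρ := hφ_init x ρ t
  have hFqx : Fq x = 0 := by
    simp only [hFq]
    rw [hux, hvx, hWx]
    ring
  have hFqy : Fq y = 0 := by
    rw [hFqx, zero_mul] at hconst
    rcases mul_eq_zero.1 hconst with h | h
    · exact h
    · exact absurd h (Real.exp_ne_zero _)
  -- conclusion
  rw [(hu_t y t).deriv, (hv_r y ρ).deriv]
  simp only [hFq, hu, hv, hW] at hFqy
  linarith [hFqy]
end

section
/- Assume the kinetic setting below, with f a C¹ solution of the kinetic equation f_t − (vf)_x − C⁺f − C⁻f = Q⁺(f) − Q⁻(f). Then the zeroth moment λ(x,t,ρ) = ∫_ρ^∞ f(x,t,ρ,ρ₊)dρ₊ and the flux moment A(x,t,ρ) = ∫_ρ^∞ v(x,t,ρ,ρ₊)f(x,t,ρ,ρ₊)dρ₊ satisfy the transport identity λ_t(x,t,ρ) + β(x,t,ρ)λ_ρ(x,t,ρ) = b(x,t,ρ)A_ρ(x,t,ρ) + A_x(x,t,ρ). -/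
open MeasureTheory Set

/-- The Rankine–Hugoniot velocity `v(x,t,ρ₋,ρ₊) = (H(x,t,ρ₋)−H(x,t,ρ₊))/(ρ₋−ρ₊)`,
extended by `H_ρ` on the diagonal. -/
noncomputable def vel (H : ℝ → ℝ → ℝ → ℝ) (x t a c : ℝ) : ℝ :=
  if a = c then deriv (fun r => H x t r) a else (H x t a - H x t c) / (a - c)

/-- The zeroth moment `λ(x,t,ρ) = ∫_ρ^∞ f(x,t,ρ,ρ₊) dρ₊`. -/
noncomputable def lamF (f : ℝ → ℝ → ℝ → ℝ → ℝ) (x t ρ : ℝ) : ℝ :=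
  ∫ rp in Ioi ρ, f x t ρ rp

/-- The flux moment `A(x,t,ρ) = ∫_ρ^∞ v(x,t,ρ,ρ₊) f(x,t,ρ,ρ₊) dρ₊`. -/
noncomputable def AF (H : ℝ → ℝ → ℝ → ℝ) (f : ℝ → ℝ → ℝ → ℝ → ℝ) (x t ρ : ℝ) : ℝ :=
  ∫ rp in Ioi ρ, vel H x t ρ rp * f x t ρ rp

/-- `β = H_x + b·H_ρ`. -/
noncomputable def betaF (H b : ℝ → ℝ → ℝ → ℝ) (x t ρ : ℝ) : ℝ :=
  deriv (fun a => H a t ρ) x + b x t ρ * deriv (fun r => H x t r) ρ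

/-- `K(x,t,ρ₊,ρ₋) = b(x,t,ρ₊)v(x,t,ρ₋,ρ₊) − β(x,t,ρ₊)`. -/
noncomputable def KF (H b : ℝ → ℝ → ℝ → ℝ) (x t rp rm : ℝ) : ℝ :=
  b x t rp * vel H x t rm rp - betaF H b x t rp

/-- The coagulation gain term `Q⁺(f)`. -/
noncomputable def QplusF (H : ℝ → ℝ → ℝ → ℝ) (f : ℝ → ℝ → ℝ → ℝ → ℝ)
    (x t rm rp : ℝ) : ℝ :=
  ∫ rs in Ioo rm rp, (vel H x t rs rp - vel H x t rm rs) * f x t rm rs * f x t rs rp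

/-- The loss kernel `Jf`. -/
noncomputable def JF (H : ℝ → ℝ → ℝ → ℝ) (f : ℝ → ℝ → ℝ → ℝ → ℝ)
    (x t rm rp : ℝ) : ℝ :=
  AF H f x t rp - AF H f x t rm - vel H x t rm rp * (lamF f x t rp - lamF f x t rm)

/-- The boundary-drift operator `C⁺f = ∂_{ρ₊}[K(x,t,ρ₊,ρ₋) f(x,t,ρ₋,ρ₊)]`. -/
noncomputable def CplusF (H b : ℝ → ℝ → ℝ → ℝ) (f : ℝ → ℝ → ℝ → ℝ → ℝ)
    (x t rm rp : ℝ) : ℝ :=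
  deriv (fun r => KF H b x t r rm * f x t rm r) rp

/-- The boundary-drift operator `C⁻f = b ∂_{ρ₋}(vf) − β ∂_{ρ₋}f`. -/
noncomputable def CminusF (H b : ℝ → ℝ → ℝ → ℝ) (f : ℝ → ℝ → ℝ → ℝ → ℝ)
    (x t rm rp : ℝ) : ℝ :=
  b x t rm * deriv (fun r => vel H x t r rp * f x t r rp) rm
    - betaF H b x t rm * deriv (fun r => f x t r rp) rm

/-- `f` solves the kinetic equation `f_t − (vf)_x − C⁺f − C⁻f = Q⁺(f) − f·Jf`. -/
def SolvesKineticF (H b : ℝ → ℝ → ℝ → ℝ) (f : ℝ → ℝ → ℝ → ℝ → ℝ) : Prop :=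
  ∀ x t rm rp : ℝ,
    deriv (fun s => f x s rm rp) t - deriv (fun z => vel H z t rm rp * f z t rm rp) x
        - CplusF H b f x t rm rp - CminusF H b f x t rm rp
      = QplusF H f x t rm rp - f x t rm rp * JF H f x t rm rp

/-! ### Auxiliary lemmas -/

set_option synthInstance.maxHeartbeats 1000000
set_option maxHeartbeats 2000000

namespace StmtAux

/-- Directional partial derivative of a three-variable function. -/
noncomputable def dH (H : ℝ → ℝ → ℝ → ℝ) (v : ℝ × ℝ × ℝ) (p : ℝ × ℝ × ℝ) : ℝ :=
  fderiv ℝ (fun p : ℝ × ℝ × ℝ => H p.1 p.2.1 p.2.2) p v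

theorem contDiff_dH {H : ℝ → ℝ → ℝ → ℝ}
    (hH : ContDiff ℝ 2 (fun p : ℝ × ℝ × ℝ => H p.1 p.2.1 p.2.2)) (v : ℝ × ℝ × ℝ) :
    ContDiff ℝ 1 (dH H v) :=
  (hH.fderiv_right (by norm_num)).clm_apply contDiff_const

theorem hasDerivAt_H3 {H : ℝ → ℝ → ℝ → ℝ}
    (hH : ContDiff ℝ 2 (fun p : ℝ × ℝ × ℝ => H p.1 p.2.1 p.2.2))
    (x t r : ℝ) : HasDerivAt (fun r' => H x t r') (dH H (0,0,1) (x, t, r)) r := by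
  have hinner : HasDerivAt (fun r' : ℝ => ((x, t, r') : ℝ × ℝ × ℝ)) ((0:ℝ), (0:ℝ), (1:ℝ)) r :=
    (hasDerivAt_const r x).prodMk ((hasDerivAt_const r t).prodMk (hasDerivAt_id r))
  exact ((hH.differentiable (by norm_num) (x,t,r)).hasFDerivAt).comp_hasDerivAt r hinner

theorem hasDerivAt_H1 {H : ℝ → ℝ → ℝ → ℝ}
    (hH : ContDiff ℝ 2 (fun p : ℝ × ℝ × ℝ => H p.1 p.2.1 p.2.2))
    (x t r : ℝ) : HasDerivAt (fun a => H a t r) (dH H (1,0,0) (x, t, r)) x := by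
  have hinner : HasDerivAt (fun a : ℝ => ((a, t, r) : ℝ × ℝ × ℝ)) ((1:ℝ), (0:ℝ), (0:ℝ)) x :=
    (hasDerivAt_id x).prodMk ((hasDerivAt_const x t).prodMk (hasDerivAt_const x r))
  exact ((hH.differentiable (by norm_num) (x,t,r)).hasFDerivAt).comp_hasDerivAt x hinner

theorem vel_eq {H : ℝ → ℝ → ℝ → ℝ}
    (hH : ContDiff ℝ 2 (fun p : ℝ × ℝ × ℝ => H p.1 p.2.1 p.2.2)) (x t a c : ℝ) :
    vel H x t a c = ∫ s in (0:ℝ)..1, dH H (0,0,1) (x, t, c + s * (a - c)) := by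
  have hcont : Continuous (fun s : ℝ => dH H (0,0,1) (x, t, c + s * (a - c))) := by
    exact (contDiff_dH hH _).continuous.comp
      (by continuity : Continuous fun s : ℝ => ((x, t, c + s * (a - c)) : ℝ × ℝ × ℝ))
  rcases eq_or_ne a c with h | h
  · subst h
    simp only [vel, if_pos rfl, sub_self, mul_zero, add_zero]
    rw [intervalIntegral.integral_const, (hasDerivAt_H3 hH x t a).deriv]
    norm_num
  · have key : ∀ s ∈ uIcc (0:ℝ) 1,
        HasDerivAt (fun s : ℝ => H x t (c + s * (a - c)))
          (dH H (0,0,1) (x, t, c + s * (a - c)) * (a - c)) s := by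
      intro s _
      have h1 : HasDerivAt (fun s : ℝ => c + s * (a - c)) (a - c) s := by
        simpa using ((hasDerivAt_id s).mul_const (a - c)).const_add c
      exact (hasDerivAt_H3 hH x t (c + s * (a - c))).comp s h1
    have hint : IntervalIntegrable
        (fun s : ℝ => dH H (0,0,1) (x, t, c + s * (a - c)) * (a - c)) volume 0 1 :=
      (hcont.mul continuous_const).intervalIntegrable _ _
    have hmain := intervalIntegral.integral_eq_sub_of_hasDerivAt key hint
    rw [intervalIntegral.integral_mul_const] at hmain
    simp only [one_mul, zero_mul, add_zero] at hmain
    have hac : c + (a - c) = a := by ring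
    rw [hac] at hmain
    rw [vel, if_neg h, eq_comm, eq_div_iff (sub_ne_zero.mpr h)]
    exact hmain

/-- A parametric interval integral of a `C¹` integrand is `C¹`. -/
theorem contDiff_param_integral {E : Type*} [NormedAddCommGroup E] [NormedSpace ℝ E]
    {G : ℝ × E → ℝ} (hG : ContDiff ℝ 1 G) [ProperSpace E] :
    ContDiff ℝ 1 (fun p : E => ∫ s in (0:ℝ)..1, G (s, p)) := by
  set L : E →L[ℝ] ℝ × E := (0 : E →L[ℝ] ℝ).prod (ContinuousLinearMap.id ℝ E) with hL
  set F' : ℝ → E → (E →L[ℝ] ℝ) := fun s p => (fderiv ℝ G (s, p)).comp L with hF'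
  have hGc : Continuous G := hG.continuous
  have hfd : Continuous (fderiv ℝ G) := (hG.fderiv_right (m := 0) (by norm_num)).continuous
  have hF'c : Continuous (fun q : ℝ × E => F' q.1 q.2) :=
    Continuous.clm_comp (hfd.comp continuous_id) continuous_const
  have hdiff : ∀ (s : ℝ) (p : E), HasFDerivAt (fun p' => G (s, p')) (F' s p) p := by
    intro s p
    exact ((hG.differentiable one_ne_zero (s, p)).hasFDerivAt).comp p
      ((hasFDerivAt_const s p).prodMk (hasFDerivAt_id p))
  have key : ∀ p : E, HasFDerivAt (fun p' : E => ∫ s in (0:ℝ)..1, G (s, p'))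
      (∫ s in (0:ℝ)..1, F' s p) p := by
    intro p
    have hK : IsCompact (Icc (0:ℝ) 1 ×ˢ Metric.closedBall p 1) :=
      isCompact_Icc.prod (isCompact_closedBall p 1)
    obtain ⟨C, hC⟩ := hK.exists_bound_of_continuousOn hF'c.continuousOn
    apply intervalIntegral.hasFDerivAt_integral_of_dominated_of_fderiv_le
      (F := fun (p' : E) (s : ℝ) => G (s, p')) (F' := fun (p' : E) (s : ℝ) => F' s p')
      (s := Metric.ball p 1) (bound := fun _ => C) (Metric.ball_mem_nhds p one_pos)
    · filter_upwards with p'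
      exact (hGc.comp (continuous_id.prodMk continuous_const)).aestronglyMeasurable
    · exact (hGc.comp (continuous_id.prodMk continuous_const)).intervalIntegrable _ _
    · exact (hF'c.comp (continuous_id.prodMk continuous_const)).aestronglyMeasurable
    · filter_upwards with s hs p' hp'
      rw [uIoc_of_le (by norm_num : (0:ℝ) ≤ 1)] at hs
      exact hC (s, p') ⟨⟨le_of_lt hs.1, hs.2⟩, Metric.ball_subset_closedBall hp'⟩
    · exact intervalIntegrable_const
    · filter_upwards with s hs p' hp'
      exact hdiff s p'
  rw [contDiff_one_iff_fderiv]
  refine ⟨fun p => (key p).differentiableAt, ?_⟩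
  have hfW : (fderiv ℝ fun p' : E => ∫ s in (0:ℝ)..1, G (s, p')) =
      fun p => ∫ s in (0:ℝ)..1, F' s p := funext fun p => (key p).fderiv
  rw [hfW]
  have heq : (fun p => ∫ s in (0:ℝ)..1, F' s p)
      = fun p => ∫ s in Ioc (0:ℝ) 1, F' s p := by
    funext p; rw [intervalIntegral.integral_of_le (by norm_num : (0:ℝ) ≤ 1)]
  rw [heq, continuous_iff_continuousAt]
  intro p₀
  have hK : IsCompact (Icc (0:ℝ) 1 ×ˢ Metric.closedBall p₀ 1) :=
    isCompact_Icc.prod (isCompact_closedBall p₀ 1)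
  obtain ⟨C, hC⟩ := hK.exists_bound_of_continuousOn hF'c.continuousOn
  apply continuousAt_of_dominated (bound := fun _ => C)
  · filter_upwards with p
    exact (hF'c.comp (continuous_id.prodMk continuous_const)).aestronglyMeasurable
  · filter_upwards [Metric.ball_mem_nhds p₀ one_pos] with p hp
    rw [ae_restrict_iff' measurableSet_Ioc]
    filter_upwards with s hs
    exact hC (s, p) ⟨⟨le_of_lt hs.1, hs.2⟩, Metric.ball_subset_closedBall hp⟩
  · exact integrableOn_const measure_Ioc_lt_top.ne
  · filter_upwards with s
    exact (hF'c.comp (continuous_const.prodMk continuous_id)).continuousAt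

theorem contDiff_vel {H : ℝ → ℝ → ℝ → ℝ}
    (hH : ContDiff ℝ 2 (fun p : ℝ × ℝ × ℝ => H p.1 p.2.1 p.2.2)) :
    ContDiff ℝ 1 (fun p : ℝ × ℝ × ℝ × ℝ => vel H p.1 p.2.1 p.2.2.1 p.2.2.2) := by
  have hinner : ContDiff ℝ 1 (fun q : ℝ × (ℝ × ℝ × ℝ × ℝ) =>
      ((q.2.1, q.2.2.1, q.2.2.2.2 + q.1 * (q.2.2.2.1 - q.2.2.2.2)) : ℝ × ℝ × ℝ)) := by fun_prop
  have hG := (contDiff_dH hH ((0:ℝ),(0:ℝ),(1:ℝ))).comp hinner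
  have hmain := contDiff_param_integral (G := fun q : ℝ × (ℝ × ℝ × ℝ × ℝ) =>
      dH H (0,0,1) (q.2.1, q.2.2.1, q.2.2.2.2 + q.1 * (q.2.2.2.1 - q.2.2.2.2))) hG
  have he : (fun p : ℝ × ℝ × ℝ × ℝ => vel H p.1 p.2.1 p.2.2.1 p.2.2.2)
      = fun p : ℝ × ℝ × ℝ × ℝ => ∫ s in (0:ℝ)..1,
          dH H (0,0,1) (p.1, p.2.1, p.2.2.2 + s * (p.2.2.1 - p.2.2.2)) := by
    funext p; exact vel_eq hH p.1 p.2.1 p.2.2.1 p.2.2.2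
  rw [he]; exact hmain

/-- Differentiation under the integral sign for a compactly supported `C¹` integrand. -/
theorem hasDerivAt_param (g : ℝ → ℝ → ℝ) (hg : ContDiff ℝ 1 (fun q : ℝ × ℝ => g q.1 q.2))
    (c d u₀ : ℝ) (hsupp : ∀ u y, y ∉ Icc c d → g u y = 0) :
    (Integrable fun y => deriv (fun u => g u y) u₀) ∧
      HasDerivAt (fun u => ∫ y, g u y) (∫ y, deriv (fun u => g u y) u₀) u₀ := by
  set D : ℝ → ℝ → ℝ := fun u y => fderiv ℝ (fun q : ℝ × ℝ => g q.1 q.2) (u, y) (1, 0) with hD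
  have hDc : Continuous fun q : ℝ × ℝ => D q.1 q.2 :=
    ((hg.fderiv_right (m := 0) (by norm_num)).clm_apply contDiff_const).continuous
  have hder : ∀ u y, HasDerivAt (fun u' => g u' y) (D u y) u := fun u y =>
    ((hg.differentiable one_ne_zero (u, y)).hasFDerivAt).comp_hasDerivAt (f := fun x : ℝ => (x, y)) u
      ((hasDerivAt_id' u).prodMk (hasDerivAt_const u y))
  have hderiv_eq : ∀ y, deriv (fun u => g u y) u₀ = D u₀ y := fun y => (hder u₀ y).deriv
  have hD0 : ∀ u y, y ∉ Icc c d → D u y = 0 := by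
    intro u y hy
    have h1 : (fun u' => g u' y) = fun _ => 0 := funext fun u' => hsupp u' y hy
    have h2 := (hder u y).deriv
    rw [h1, deriv_const] at h2; exact h2.symm
  obtain ⟨C, hC⟩ :=
    ((isCompact_Icc (a := u₀ - 1) (b := u₀ + 1)).prod
      (isCompact_Icc (a := c) (b := d))).exists_bound_of_continuousOn hDc.continuousOn
  have main := hasDerivAt_integral_of_dominated_loc_of_deriv_le (μ := volume)
    (F := fun u y => g u y) (F' := D) (bound := (Icc c d).indicator fun _ => max C 0)
    (s := Metric.ball u₀ 1) (Metric.ball_mem_nhds u₀ one_pos)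
    (by filter_upwards with u
        exact (hg.continuous.comp (continuous_const.prodMk continuous_id)).aestronglyMeasurable)
    ((hg.continuous.comp (continuous_const.prodMk continuous_id)).integrable_of_hasCompactSupport
      (HasCompactSupport.intro isCompact_Icc fun y hy => hsupp u₀ y hy))
    ((hDc.comp (continuous_const.prodMk continuous_id)).aestronglyMeasurable)
    (by filter_upwards with y
        intro u hu
        by_cases hy : y ∈ Icc c d
        · rw [indicator_of_mem hy]
          have hud := Metric.mem_ball.mp hu
          rw [Real.dist_eq] at hud
          have h1 := abs_lt.mp hud
          refine le_trans (hC (u, y) ⟨⟨by linarith [h1.1], by linarith [h1.2]⟩, hy⟩) ?_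
          exact le_max_left _ _
        · rw [indicator_of_notMem hy, hD0 u y hy, norm_zero])
    ((integrableOn_const measure_Icc_lt_top.ne).integrable_indicator measurableSet_Icc)
    (by filter_upwards with y
        intro u hu
        exact hder u y)
  have heq : (fun y => deriv (fun u => g u y) u₀) = fun y => D u₀ y := funext hderiv_eq
  rw [heq]
  exact main

theorem cont_param (g : ℝ → ℝ → ℝ) (hg : ContDiff ℝ 1 (fun q : ℝ × ℝ => g q.1 q.2))
    (c d : ℝ) (hsupp : ∀ u y, y ∉ Icc c d → g u y = 0) :
    Continuous (fun u => ∫ y, g u y) :=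
  continuous_iff_continuousAt.mpr fun u =>
    ((hasDerivAt_param g hg c d u hsupp).2).continuousAt

theorem integrable_of_supp (g : ℝ → ℝ) (hg : Continuous g) (c d : ℝ)
    (h0 : ∀ y, y ∉ Icc c d → g y = 0) : Integrable g :=
  hg.integrable_of_hasCompactSupport (HasCompactSupport.intro isCompact_Icc h0)

theorem deriv_zero_outside (g : ℝ → ℝ) (c d : ℝ) (h0 : ∀ y, y ∉ Icc c d → g y = 0) :
    ∀ y, y ∉ Icc c d → deriv g y = 0 := by
  intro y hy
  have hnb : (Icc c d)ᶜ ∈ nhds y := (isOpen_compl_iff.mpr isClosed_Icc).mem_nhds hy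
  have hev : g =ᶠ[nhds y] fun _ => 0 := by
    filter_upwards [hnb] with z hz
    exact h0 z hz
  rw [hev.deriv_eq, deriv_const]

theorem integral_deriv_zero (g : ℝ → ℝ) (hg : ContDiff ℝ 1 g) (c d : ℝ)
    (h0 : ∀ y, y ∉ Icc c d → g y = 0) : ∫ y, deriv g y = 0 := by
  have hd : Continuous (deriv g) := hg.continuous_deriv le_rfl
  by_cases hcd : c ≤ d
  · have h1 : ∫ y, deriv g y = ∫ y in Ioc (c - 1) (d + 1), deriv g y := by
      refine (setIntegral_eq_integral_of_forall_compl_eq_zero fun y hy => ?_).symm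
      refine deriv_zero_outside g c d h0 y fun hmem => hy ⟨by linarith [hmem.1], by linarith [hmem.2]⟩
    rw [h1, ← intervalIntegral.integral_of_le (by linarith : c - 1 ≤ d + 1)]
    rw [intervalIntegral.integral_deriv_eq_sub
      (fun y _ => (hg.differentiable one_ne_zero).differentiableAt) (hd.intervalIntegrable _ _)]
    rw [h0 (d + 1) (fun hmem => by linarith [hmem.2]),
      h0 (c - 1) (fun hmem => by linarith [hmem.1]), sub_zero]
  · have hg0 : ∀ y, g y = 0 := fun y => h0 y (fun hmem => hcd (le_trans hmem.1 hmem.2))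
    have h2 : (fun y => deriv g y) = fun _ => (0:ℝ) := by
      funext y
      rw [funext hg0, deriv_const]
    rw [h2, integral_zero]

end StmtAux

open StmtAux

/-- Lemma (2.9): the moments of a solution of the kinetic equation satisfy
`λ_t + β λ_ρ = b A_ρ + A_x`. -/
theorem stmt6
    (H b : ℝ → ℝ → ℝ → ℝ) (f : ℝ → ℝ → ℝ → ℝ → ℝ) (Pm Pp : ℝ)
    (hH : ContDiff ℝ 2 (fun p : ℝ × ℝ × ℝ => H p.1 p.2.1 p.2.2))
    (hb : ContDiff ℝ 1 (fun p : ℝ × ℝ × ℝ => b p.1 p.2.1 p.2.2))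
    (hf_C1 : ContDiff ℝ 1 (fun p : ℝ × ℝ × ℝ × ℝ => f p.1 p.2.1 p.2.2.1 p.2.2.2))
    (hf_nonneg : ∀ x t rm rp, 0 ≤ f x t rm rp)
    (hf_supp : ∀ x t rm rp, ¬ (Pm ≤ rm ∧ rm ≤ rp ∧ rp ≤ Pp) → f x t rm rp = 0)
    (hf_kin : SolvesKineticF H b f) :
    ∀ x t ρ : ℝ,
      deriv (fun s => lamF f x s ρ) t + betaF H b x t ρ * deriv (fun r => lamF f x t r) ρ
        = b x t ρ * deriv (fun r => AF H f x t r) ρ + deriv (fun z => AF H f z t ρ) x := by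
  have hfc : Continuous (fun p : ℝ × ℝ × ℝ × ℝ => f p.1 p.2.1 p.2.2.1 p.2.2.2) :=
    hf_C1.continuous
  -- basic support facts
  have hzero : ∀ x' t' rm rp : ℝ, rp ≤ rm → f x' t' rm rp = 0 := by
    intro x' t' rm rp h
    rcases eq_or_lt_of_le h with heq | hlt
    · rw [← heq]
      have hc : Continuous (fun y : ℝ => f x' t' rp y) := by fun_prop
      have h1 : Filter.Tendsto (fun y => f x' t' rp y) (nhdsWithin rp (Iio rp))
          (nhds (f x' t' rp rp)) := (hc.tendsto rp).mono_left nhdsWithin_le_nhds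
      have h2 : Filter.Tendsto (fun y => f x' t' rp y) (nhdsWithin rp (Iio rp)) (nhds 0) := by
        apply Filter.Tendsto.congr' _ tendsto_const_nhds
        filter_upwards [self_mem_nhdsWithin] with y hy
        exact (hf_supp _ _ _ _ fun hcc => absurd hcc.2.1 (not_le.mpr hy)).symm
      exact tendsto_nhds_unique h1 h2
    · exact hf_supp _ _ _ _ fun hc => absurd hc.2.1 (not_le.mpr hlt)
  have hsy : ∀ x' t' rm y : ℝ, y ∉ Icc Pm Pp → f x' t' rm y = 0 := by
    intro x' t' rm y hy
    apply hf_supp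
    rintro ⟨h1, h2, h3⟩
    exact hy ⟨le_trans h1 h2, h3⟩
  have hV : ContDiff ℝ 1 (fun p : ℝ × ℝ × ℝ × ℝ => vel H p.1 p.2.1 p.2.2.1 p.2.2.2) :=
    contDiff_vel hH
  have hVc : Continuous (fun p : ℝ × ℝ × ℝ × ℝ => vel H p.1 p.2.1 p.2.2.1 p.2.2.2) :=
    hV.continuous
  -- betaF is C¹
  have hbeta3 : ContDiff ℝ 1 (fun p : ℝ × ℝ × ℝ => betaF H b p.1 p.2.1 p.2.2) := by
    have he : (fun p : ℝ × ℝ × ℝ => betaF H b p.1 p.2.1 p.2.2)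
        = fun p : ℝ × ℝ × ℝ => dH H (1,0,0) p + b p.1 p.2.1 p.2.2 * dH H (0,0,1) p := by
      funext p
      unfold betaF
      rw [(hasDerivAt_H1 hH p.1 p.2.1 p.2.2).deriv, (hasDerivAt_H3 hH p.1 p.2.1 p.2.2).deriv]
    rw [he]
    exact (contDiff_dH hH _).add (hb.mul (contDiff_dH hH _))
  -- moment rewrites
  have hlam_eq : ∀ x' t' r, lamF f x' t' r = ∫ y, f x' t' r y := by
    intro x' t' r
    exact setIntegral_eq_integral_of_forall_compl_eq_zero fun y hy =>
      hzero x' t' r y (le_of_not_gt hy)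
  have hA_eq : ∀ x' t' r, AF H f x' t' r = ∫ y, vel H x' t' r y * f x' t' r y := by
    intro x' t' r
    exact setIntegral_eq_integral_of_forall_compl_eq_zero fun y hy => by
      rw [hzero x' t' r y (le_of_not_gt hy), mul_zero]
  intro x t ρ
  -- the four differentiations under the integral sign
  have L1 := hasDerivAt_param (fun u y => f x u ρ y) (by fun_prop) Pm Pp t
    (fun u y hy => hsy x u ρ y hy)
  have L2 := hasDerivAt_param (fun u y => f x t u y) (by fun_prop) Pm Pp ρ
    (fun u y hy => hsy x t u y hy)
  have L3 := hasDerivAt_param (fun u y => vel H x t u y * f x t u y) (by fun_prop) Pm Pp ρ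
    (fun u y hy => by show vel H x t u y * f x t u y = 0; rw [hsy x t u y hy, mul_zero])
  have L4 := hasDerivAt_param (fun u y => vel H u t ρ y * f u t ρ y) (by fun_prop) Pm Pp x
    (fun u y hy => by show vel H u t ρ y * f u t ρ y = 0; rw [hsy u t ρ y hy, mul_zero])
  -- continuity of the moments in the third variable
  have hlamc : Continuous (fun r => lamF f x t r) := by
    have he : (fun r => lamF f x t r) = fun r => ∫ y, f x t r y :=
      funext fun r => hlam_eq x t r
    rw [he]
    exact cont_param (fun u y => f x t u y) (by fun_prop) Pm Pp (fun u y hy => hsy x t u y hy)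
  have hAc : Continuous (fun r => AF H f x t r) := by
    have he : (fun r => AF H f x t r) = fun r => ∫ y, vel H x t r y * f x t r y :=
      funext fun r => hA_eq x t r
    rw [he]
    exact cont_param (fun u y => vel H x t u y * f x t u y) (by fun_prop) Pm Pp
      (fun u y hy => by show vel H x t u y * f x t u y = 0; rw [hsy x t u y hy, mul_zero])
  -- rewrite goal derivatives
  have g1 : deriv (fun s => lamF f x s ρ) t = ∫ y, deriv (fun s => f x s ρ y) t := by
    rw [show (fun s => lamF f x s ρ) = fun s => ∫ y, f x s ρ y from
      funext fun s => hlam_eq x s ρ]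
    exact L1.2.deriv
  have g2 : deriv (fun r => lamF f x t r) ρ = ∫ y, deriv (fun r => f x t r y) ρ := by
    rw [show (fun r => lamF f x t r) = fun r => ∫ y, f x t r y from
      funext fun r => hlam_eq x t r]
    exact L2.2.deriv
  have g3 : deriv (fun r => AF H f x t r) ρ
      = ∫ y, deriv (fun r => vel H x t r y * f x t r y) ρ := by
    rw [show (fun r => AF H f x t r) = fun r => ∫ y, vel H x t r y * f x t r y from
      funext fun r => hA_eq x t r]
    exact L3.2.deriv
  have g4 : deriv (fun z => AF H f z t ρ) x
      = ∫ y, deriv (fun z => vel H z t ρ y * f z t ρ y) x := by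
    rw [show (fun z => AF H f z t ρ) = fun z => ∫ y, vel H z t ρ y * f z t ρ y from
      funext fun z => hA_eq z t ρ]
    exact L4.2.deriv
  rw [g1, g2, g3, g4]
  -- pointwise kinetic identity, rearranged
  have hkin : ∀ y, deriv (fun s => f x s ρ y) t
      + betaF H b x t ρ * deriv (fun r => f x t r y) ρ
      - b x t ρ * deriv (fun r => vel H x t r y * f x t r y) ρ
      - deriv (fun z => vel H z t ρ y * f z t ρ y) x
      = CplusF H b f x t ρ y
        + (QplusF H f x t ρ y - f x t ρ y * JF H f x t ρ y) := by
    intro y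
    have hk := hf_kin x t ρ y
    unfold CminusF at hk
    linarith
  -- the C⁺ term integrates to zero
  have hgK : ContDiff ℝ 1 (fun y => KF H b x t y ρ * f x t ρ y) := by
    show ContDiff ℝ 1 (fun y =>
      (b x t y * vel H x t ρ y - betaF H b x t y) * f x t ρ y)
    fun_prop
  have hKsupp : ∀ y, y ∉ Icc Pm Pp → KF H b x t y ρ * f x t ρ y = 0 := by
    intro y hy
    rw [hsy x t ρ y hy, mul_zero]
  have IC : Integrable (fun y => CplusF H b f x t ρ y) := by
    unfold CplusF
    exact integrable_of_supp _ (hgK.continuous_deriv le_rfl) Pm Pp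
      (deriv_zero_outside _ Pm Pp hKsupp)
  have hCzero : ∫ y, CplusF H b f x t ρ y = 0 := by
    show ∫ y, deriv (fun r => KF H b x t r ρ * f x t ρ r) y = 0
    exact integral_deriv_zero _ hgK Pm Pp hKsupp
  -- The Fubini argument : ∫ (Q⁺ − f·Jf) = 0
  set φ : ℝ × ℝ → ℝ := fun q =>
    (vel H x t q.1 q.2 - vel H x t ρ q.1) * f x t ρ q.1 * f x t q.1 q.2 with hφ
  have hφc : Continuous φ := by rw [hφ]; fun_prop
  have hφsupp : ∀ q : ℝ × ℝ, q ∉ (Icc Pm Pp ×ˢ Icc Pm Pp) → φ q = 0 := by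
    intro q hq
    rw [mem_prod, not_and_or] at hq
    rcases hq with h | h
    · rw [hφ]; simp only; rw [hsy x t ρ q.1 h, mul_zero, zero_mul]
    · rw [hφ]; simp only; rw [hsy x t q.1 q.2 h, mul_zero]
  have hφint : Integrable φ ((volume : Measure ℝ).prod volume) := by
    have h1 : Integrable φ (volume : Measure (ℝ × ℝ)) :=
      hφc.integrable_of_hasCompactSupport
        (HasCompactSupport.intro (isCompact_Icc.prod isCompact_Icc) hφsupp)
    rwa [Measure.volume_eq_prod] at h1
  set S : Set (ℝ × ℝ) := {q | ρ < q.1} ∩ {q | q.1 < q.2} with hS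
  have hSm : MeasurableSet S :=
    (measurableSet_lt measurable_const measurable_fst).inter
      (measurableSet_lt measurable_fst measurable_snd)
  have hint : Integrable (S.indicator φ) ((volume : Measure ℝ).prod volume) :=
    hφint.indicator hSm
  have claimA : ∀ y, QplusF H f x t ρ y = ∫ s, S.indicator φ (s, y) := by
    intro y
    have hfun : (fun s => S.indicator φ (s, y)) = (Ioo ρ y).indicator (fun s => φ (s, y)) := by
      funext s
      by_cases hs : s ∈ Ioo ρ y
      · rw [indicator_of_mem hs]
        exact indicator_of_mem (show (s, y) ∈ S from ⟨hs.1, hs.2⟩) φ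
      · rw [indicator_of_notMem hs,
          indicator_of_notMem (fun hc : (s,y) ∈ S => hs ⟨hc.1, hc.2⟩)]
    rw [hfun, integral_indicator measurableSet_Ioo]
    rfl
  have claimQint : Integrable (fun y => QplusF H f x t ρ y) := by
    rw [show (fun y => QplusF H f x t ρ y) = fun y => ∫ s, S.indicator φ (s, y) from
      funext claimA]
    exact hint.integral_prod_right
  set Φf : ℝ → ℝ := fun s =>
    f x t ρ s * AF H f x t s - f x t ρ s * vel H x t ρ s * lamF f x t s with hΦf
  have claimC : ∀ s, ∫ y, S.indicator φ (s, y) = (Ioi ρ).indicator Φf s := by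
    intro s
    by_cases hs : ρ < s
    · rw [indicator_of_mem (mem_Ioi.mpr hs)]
      have hfun : (fun y => S.indicator φ (s, y)) = (Ioi s).indicator (fun y => φ (s, y)) := by
        funext y
        by_cases hy : s < y
        · rw [indicator_of_mem (mem_Ioi.mpr hy)]
          exact indicator_of_mem (show (s, y) ∈ S from ⟨hs, hy⟩) φ
        · rw [indicator_of_notMem (fun hc : y ∈ Ioi s => hy hc),
            indicator_of_notMem (fun hc : (s,y) ∈ S => hy hc.2)]
      rw [hfun, integral_indicator measurableSet_Ioi]
      have hre : (fun y => φ (s, y)) = fun y =>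
          f x t ρ s * (vel H x t s y * f x t s y)
            - (f x t ρ s * vel H x t ρ s) * f x t s y := by
        funext y
        rw [hφ]
        simp only
        ring
      rw [hre]
      have hI1 : IntegrableOn (fun y => f x t ρ s * (vel H x t s y * f x t s y)) (Ioi s) := by
        apply Integrable.integrableOn
        apply Integrable.const_mul
        exact integrable_of_supp _ (by fun_prop) Pm Pp
          (fun y hy => by rw [hsy x t s y hy, mul_zero])
      have hI2 : IntegrableOn (fun y => (f x t ρ s * vel H x t ρ s) * f x t s y) (Ioi s) := by
        apply Integrable.integrableOn
        apply Integrable.const_mul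
        exact integrable_of_supp _ (by fun_prop) Pm Pp (fun y hy => hsy x t s y hy)
      rw [integral_sub hI1 hI2, integral_const_mul, integral_const_mul, hΦf]
      unfold AF lamF
      try ring
      try rfl
    · rw [indicator_of_notMem (fun hc : s ∈ Ioi ρ => hs hc)]
      have hfun : (fun y => S.indicator φ (s, y)) = fun _ => (0:ℝ) :=
        funext fun y => indicator_of_notMem (fun hc : (s,y) ∈ S => hs hc.1) φ
      rw [hfun, integral_zero]
  have hQval : ∫ y, QplusF H f x t ρ y = ∫ s, (Ioi ρ).indicator Φf s := by
    rw [show (fun y => QplusF H f x t ρ y) = fun y => ∫ s, S.indicator φ (s, y) from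
      funext claimA]
    rw [← integral_integral_swap (f := fun s y => S.indicator φ (s, y)) hint]
    exact integral_congr_ae (Filter.Eventually.of_forall claimC)
  -- the loss term
  set T1 : ℝ → ℝ := fun y =>
    f x t ρ y * AF H f x t y - vel H x t ρ y * f x t ρ y * lamF f x t y with hT1
  set T2 : ℝ → ℝ := fun y =>
    lamF f x t ρ * (vel H x t ρ y * f x t ρ y) - AF H f x t ρ * f x t ρ y with hT2
  have hT1c : Continuous T1 := by rw [hT1]; fun_prop
  have IT1 : Integrable T1 := by
    apply integrable_of_supp _ hT1c Pm Pp
    intro y hy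
    rw [hT1]
    simp only
    rw [hsy x t ρ y hy]
    ring
  have Ivf : Integrable (fun y => vel H x t ρ y * f x t ρ y) :=
    integrable_of_supp _ (by fun_prop) Pm Pp
      (fun y hy => by rw [hsy x t ρ y hy, mul_zero])
  have If : Integrable (fun y => f x t ρ y) :=
    integrable_of_supp _ (by fun_prop) Pm Pp (fun y hy => hsy x t ρ y hy)
  have IT2 : Integrable T2 := by
    rw [hT2]
    exact (Ivf.const_mul _).sub (If.const_mul _)
  have hT2zero : ∫ y, T2 y = 0 := by
    rw [hT2]
    rw [integral_sub (Ivf.const_mul _) (If.const_mul _), integral_const_mul,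
      integral_const_mul, ← hA_eq x t ρ, ← hlam_eq x t ρ]
    ring
  have hfJ_eq : (fun y => f x t ρ y * JF H f x t ρ y) = fun y => T1 y + T2 y := by
    funext y
    rw [hT1, hT2]
    simp only
    unfold JF
    ring
  have IfJ : Integrable (fun y => f x t ρ y * JF H f x t ρ y) := by
    rw [hfJ_eq]; exact IT1.add IT2
  have hT1val : ∫ y, T1 y = ∫ s, (Ioi ρ).indicator Φf s := by
    apply integral_congr_ae
    apply Filter.Eventually.of_forall
    intro y
    by_cases hy : ρ < y
    · rw [indicator_of_mem (mem_Ioi.mpr hy), hT1, hΦf]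
      simp only
      ring
    · rw [indicator_of_notMem (fun hc : y ∈ Ioi ρ => hy hc), hT1]
      simp only
      rw [hzero x t ρ y (le_of_not_gt hy)]
      ring
  have hfJval : ∫ y, f x t ρ y * JF H f x t ρ y = ∫ s, (Ioi ρ).indicator Φf s := by
    rw [hfJ_eq, integral_add IT1 IT2, hT2zero, add_zero, hT1val]
  have hRzero : ∫ y, (QplusF H f x t ρ y - f x t ρ y * JF H f x t ρ y) = 0 := by
    rw [integral_sub claimQint IfJ, hQval, hfJval, sub_self]
  have IR : Integrable (fun y => QplusF H f x t ρ y - f x t ρ y * JF H f x t ρ y) :=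
    claimQint.sub IfJ
  -- final assembly
  have I1 : Integrable (fun y => deriv (fun s => f x s ρ y) t) volume := L1.1
  have I2 : Integrable (fun y => deriv (fun r => f x t r y) ρ) volume := L2.1
  have I3 : Integrable (fun y => deriv (fun r => vel H x t r y * f x t r y) ρ) volume := L3.1
  have I4 : Integrable (fun y => deriv (fun z => vel H z t ρ y * f z t ρ y) x) volume := L4.1
  have I2m : Integrable (fun y => betaF H b x t ρ * deriv (fun r => f x t r y) ρ) volume :=
    I2.const_mul _
  have I3m : Integrable
      (fun y => b x t ρ * deriv (fun r => vel H x t r y * f x t r y) ρ) volume :=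
    I3.const_mul _
  have I12 : Integrable (fun y => deriv (fun s => f x s ρ y) t
      + betaF H b x t ρ * deriv (fun r => f x t r y) ρ) volume := I1.add I2m
  have I123 : Integrable (fun y => deriv (fun s => f x s ρ y) t
      + betaF H b x t ρ * deriv (fun r => f x t r y) ρ
      - b x t ρ * deriv (fun r => vel H x t r y * f x t r y) ρ) volume := I12.sub I3m
  have hsplitL : ∫ y, (deriv (fun s => f x s ρ y) t
      + betaF H b x t ρ * deriv (fun r => f x t r y) ρ
      - b x t ρ * deriv (fun r => vel H x t r y * f x t r y) ρ
      - deriv (fun z => vel H z t ρ y * f z t ρ y) x)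
      = (∫ y, deriv (fun s => f x s ρ y) t)
        + betaF H b x t ρ * (∫ y, deriv (fun r => f x t r y) ρ)
        - b x t ρ * (∫ y, deriv (fun r => vel H x t r y * f x t r y) ρ)
        - ∫ y, deriv (fun z => vel H z t ρ y * f z t ρ y) x := by
    rw [integral_sub I123 I4, integral_sub I12 I3m, integral_add I1 I2m,
      integral_const_mul, integral_const_mul]
  have hsplitR : ∫ y, (deriv (fun s => f x s ρ y) t
      + betaF H b x t ρ * deriv (fun r => f x t r y) ρ
      - b x t ρ * deriv (fun r => vel H x t r y * f x t r y) ρ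
      - deriv (fun z => vel H z t ρ y * f z t ρ y) x) = 0 := by
    rw [show (fun y => deriv (fun s => f x s ρ y) t
      + betaF H b x t ρ * deriv (fun r => f x t r y) ρ
      - b x t ρ * deriv (fun r => vel H x t r y * f x t r y) ρ
      - deriv (fun z => vel H z t ρ y * f z t ρ y) x)
      = fun y => CplusF H b f x t ρ y
        + (QplusF H f x t ρ y - f x t ρ y * JF H f x t ρ y) from funext hkin]
    rw [integral_add IC IR, hCzero, hRzero, add_zero]
  rw [hsplitR] at hsplitL
  linarith [hsplitL]
end

section
/- Assume the kinetic setting below with f a nonnegative C¹ kernel vanishing unless P₋ ≤ ρ₋ ≤ ρ₊ ≤ P₊. Then the collision operator Q(f) = Q⁺(f) − Q⁻(f) has vanishing zeroth moment: for every (x,t,ρ), ∫_ρ^∞ Q(f)(x,t,ρ,ρ₊)dρ₊ = 0. -/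
open MeasureTheory Set

private lemma aux_int {P Q D : ℝ} (hD : 0 ≤ D) {φ : ℝ → ℝ}
    (hm : AEStronglyMeasurable φ (volume : Measure ℝ))
    (h0 : ∀ s, φ s ≠ 0 → s ∈ Icc P Q) (hb : ∀ s, |φ s| ≤ D) :
    Integrable φ ∧ (|∫ s, φ s| ≤ D * (volume (Icc P Q)).toReal) ∧
      (∀ c : ℝ, |∫ s in Ioi c, φ s| ≤ D * (volume (Icc P Q)).toReal) := by
  have ind : Integrable ((Icc P Q).indicator fun _ => D) (volume : Measure ℝ) := by
    refine (integrableOn_const measure_Icc_lt_top.ne).integrable_indicator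
      measurableSet_Icc
  have hle : ∀ s, ‖φ s‖ ≤ (Icc P Q).indicator (fun _ => D) s := by
    intro s
    by_cases h : φ s = 0
    · simp only [h, norm_zero]
      exact Set.indicator_nonneg (fun _ _ => hD) s
    · rw [Set.indicator_of_mem (h0 s h)]
      simpa [Real.norm_eq_abs] using hb s
  have hint : Integrable φ := ind.mono' hm (Filter.Eventually.of_forall hle)
  have hindval : ∫ s, (Icc P Q).indicator (fun _ => D) s = D * (volume (Icc P Q)).toReal := by
    rw [integral_indicator_const D measurableSet_Icc, smul_eq_mul, mul_comm]; rfl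
  refine ⟨hint, ?_, ?_⟩
  · calc |∫ s, φ s| ≤ ∫ s, ‖φ s‖ := by
          simpa [Real.norm_eq_abs] using norm_integral_le_integral_norm φ
      _ ≤ ∫ s, (Icc P Q).indicator (fun _ => D) s :=
          integral_mono hint.norm ind hle
      _ = D * (volume (Icc P Q)).toReal := hindval
  · intro c
    calc |∫ s in Ioi c, φ s| ≤ ∫ s in Ioi c, ‖φ s‖ := by
          simpa [Real.norm_eq_abs] using norm_integral_le_integral_norm (μ := volume.restrict (Ioi c)) φ
      _ ≤ ∫ s in Ioi c, (Icc P Q).indicator (fun _ => D) s :=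
          integral_mono hint.norm.integrableOn ind.integrableOn hle
      _ ≤ ∫ s, (Icc P Q).indicator (fun _ => D) s := by
          refine setIntegral_le_integral ind (Filter.Eventually.of_forall ?_)
          intro s
          exact Set.indicator_nonneg (fun _ _ => hD) s
      _ = D * (volume (Icc P Q)).toReal := hindval

private noncomputable def lamV (g : ℝ → ℝ → ℝ) (c : ℝ) : ℝ := ∫ s in Ioi c, g c s
private noncomputable def AV (v g : ℝ → ℝ → ℝ) (c : ℝ) : ℝ := ∫ s in Ioi c, v c s * g c s

private theorem key (v g : ℝ → ℝ → ℝ) (P Q M C : ℝ) (hM : 0 ≤ M) (hC : 0 ≤ C)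
    (hvm : Measurable fun p : ℝ × ℝ => v p.1 p.2)
    (hgc : Continuous fun p : ℝ × ℝ => g p.1 p.2)
    (hvb : ∀ a ∈ Icc P Q, ∀ c ∈ Icc P Q, |v a c| ≤ M)
    (hgb : ∀ a c, |g a c| ≤ C)
    (hgs : ∀ a c, g a c ≠ 0 → a ∈ Icc P Q ∧ c ∈ Icc P Q)
    (ρ : ℝ) :
    ∫ c in Ioi ρ, ((∫ s in Ioo ρ c, (v s c - v ρ s) * g ρ s * g s c) -
        g ρ c * (AV v g c - AV v g ρ - v ρ c * (lamV g c - lamV g ρ))) = 0 := by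
  set len : ℝ := (volume (Icc P Q)).toReal with hlen
  have hlen0 : 0 ≤ len := ENNReal.toReal_nonneg
  -- basic one-variable measurability
  have hg1 : ∀ a, Continuous fun s => g a s :=
    fun a => hgc.comp (continuous_const.prodMk continuous_id)
  have hg2 : ∀ c, Continuous fun s => g s c :=
    fun c => hgc.comp (continuous_id.prodMk continuous_const)
  have hv1 : ∀ a, Measurable fun s => v a s :=
    fun a => hvm.comp (measurable_const.prodMk measurable_id)
  have hv2 : ∀ c, Measurable fun s => v s c :=
    fun c => hvm.comp (measurable_id.prodMk measurable_const)
  -- integrability of slices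
  have hbvg : ∀ a s, |v a s * g a s| ≤ M * C := by
    intro a s
    by_cases h : g a s = 0
    · simp [h]; positivity
    · obtain ⟨ha, hs⟩ := hgs a s h
      rw [abs_mul]
      exact mul_le_mul (hvb a ha s hs) (hgb a s) (abs_nonneg _) hM
  have h1 : ∀ a, Integrable (fun s => g a s) ∧ (|∫ s, g a s| ≤ C * len) ∧
      (∀ c, |∫ s in Ioi c, g a s| ≤ C * len) := by
    intro a
    exact aux_int hC (hg1 a).aestronglyMeasurable (fun s h => (hgs a s h).2) (hgb a)
  have h2 : ∀ a, Integrable (fun s => v a s * g a s) ∧ (|∫ s, v a s * g a s| ≤ M * C * len) ∧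
      (∀ c, |∫ s in Ioi c, v a s * g a s| ≤ M * C * len) := by
    intro a
    refine aux_int (by positivity) ((hv1 a).mul (hg1 a).measurable).aestronglyMeasurable
      (fun s h => (hgs a s (right_ne_zero_of_mul h)).2) (hbvg a)
  -- bounds on lamV and AV
  have hlamb : ∀ c, |lamV g c| ≤ C * len := fun c => (h1 c).2.2 c
  have hAVb : ∀ c, |AV v g c| ≤ M * C * len := fun c => (h2 c).2.2 c
  -- measurability of lamV and AV
  have hlam_meas : StronglyMeasurable (lamV g) := by
    have hF : Measurable fun p : ℝ × ℝ => if p.1 < p.2 then g p.1 p.2 else 0 :=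
      Measurable.ite (measurableSet_lt measurable_fst measurable_snd)
        hgc.measurable measurable_const
    have heq : lamV g = fun c => ∫ s, (fun p : ℝ × ℝ => if p.1 < p.2 then g p.1 p.2 else 0) (c, s) := by
      funext c
      rw [lamV, ← integral_indicator measurableSet_Ioi]
      congr 1
    rw [heq]
    exact hF.stronglyMeasurable.integral_prod_right'
  have hAV_meas : StronglyMeasurable (AV v g) := by
    have hF : Measurable fun p : ℝ × ℝ => if p.1 < p.2 then v p.1 p.2 * g p.1 p.2 else 0 :=
      Measurable.ite (measurableSet_lt measurable_fst measurable_snd)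
        (hvm.mul hgc.measurable) measurable_const
    have heq : AV v g = fun c => ∫ s, (fun p : ℝ × ℝ => if p.1 < p.2 then v p.1 p.2 * g p.1 p.2 else 0) (c, s) := by
      funext c
      rw [AV, ← integral_indicator measurableSet_Ioi]
      congr 1
    rw [heq]
    exact hF.stronglyMeasurable.integral_prod_right'
    -- the Fubini kernel
  set e2 : ℝ → ℝ → ℝ := fun c s =>
    if ρ < s ∧ s < c then (v s c - v ρ s) * g ρ s * g s c else 0 with he2
  set D2 : ℝ := (M + M) * C * C with hD2
  have hD2' : 0 ≤ D2 := by rw [hD2]; positivity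
  have he_meas : Measurable (Function.uncurry e2) := by
    rw [he2]
    refine Measurable.ite ?_ ?_ measurable_const
    · exact (measurableSet_lt measurable_const measurable_snd).inter
        (measurableSet_lt measurable_snd measurable_fst)
    · exact (((hvm.comp (measurable_snd.prodMk measurable_fst)).sub
        (hvm.comp (measurable_const.prodMk measurable_snd))).mul
        (hgc.measurable.comp (measurable_const.prodMk measurable_snd))).mul
        (hgc.measurable.comp (measurable_snd.prodMk measurable_fst))
  have he_bd : ∀ c s, |e2 c s| ≤ D2 := by
    intro c s
    rw [he2]
    dsimp only
    split_ifs with hcond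
    · by_cases hz1 : g ρ s = 0
      · simp only [hz1, mul_zero, zero_mul, abs_zero]; exact hD2'
      by_cases hz2 : g s c = 0
      · simp only [hz2, mul_zero, zero_mul, abs_zero]; exact hD2'
      obtain ⟨hρI, hsI⟩ := hgs ρ s hz1
      obtain ⟨_, hcI⟩ := hgs s c hz2
      rw [hD2, abs_mul, abs_mul]
      have hvv : |v s c - v ρ s| ≤ M + M :=
        (abs_sub _ _).trans (add_le_add (hvb s hsI c hcI) (hvb ρ hρI s hsI))
      exact mul_le_mul (mul_le_mul hvv (hgb ρ s) (abs_nonneg _) (by positivity))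
        (hgb s c) (abs_nonneg _) (by positivity)
    · simpa using hD2'
  have he_supp : ∀ c s, e2 c s ≠ 0 → c ∈ Icc P Q ∧ s ∈ Icc P Q := by
    intro c s h
    rw [he2] at h
    dsimp only at h
    by_cases hcond : ρ < s ∧ s < c
    · rw [if_pos hcond] at h
      have hz2 : g s c ≠ 0 := right_ne_zero_of_mul h
      have hz1 : g ρ s ≠ 0 := right_ne_zero_of_mul (left_ne_zero_of_mul h)
      exact ⟨(hgs s c hz2).2, (hgs ρ s hz1).2⟩
    · exact absurd (if_neg hcond) (fun hh => h (by rw [hh]))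
  have he_int : Integrable (Function.uncurry e2) ((volume : Measure ℝ).prod volume) := by
    have hprodfin : ((volume : Measure ℝ).prod volume) (Icc P Q ×ˢ Icc P Q) < ⊤ := by
      rw [Measure.prod_prod]
      exact ENNReal.mul_lt_top measure_Icc_lt_top measure_Icc_lt_top
    have hind : Integrable ((Icc P Q ×ˢ Icc P Q).indicator fun _ => D2)
        ((volume : Measure ℝ).prod volume) :=
      (integrableOn_const hprodfin.ne).integrable_indicator
        (measurableSet_Icc.prod measurableSet_Icc)
    refine hind.mono' he_meas.aestronglyMeasurable (Filter.Eventually.of_forall ?_)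
    rintro ⟨c, s⟩
    by_cases h : e2 c s = 0
    · simp only [Function.uncurry, h, norm_zero]
      exact Set.indicator_nonneg (fun _ _ => hD2') _
    · obtain ⟨hcI, hsI⟩ := he_supp c s h
      rw [Set.indicator_of_mem (Set.mk_mem_prod hcI hsI)]
      simpa [Function.uncurry, Real.norm_eq_abs] using he_bd c s
  -- rewriting the inner Q⁺ integral
  have hQ_eq : ∀ c, (∫ s in Ioo ρ c, (v s c - v ρ s) * g ρ s * g s c) = ∫ s, e2 c s := by
    intro c
    rw [← integral_indicator measurableSet_Ioo]
    congr 1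
    funext s
    rw [he2]
    simp [Set.indicator_apply, Set.mem_Ioo]
  -- evaluating the swapped inner integral
  have h4 : ∀ s, (∫ c, e2 c s)
      = if ρ < s then g ρ s * (AV v g s - v ρ s * lamV g s) else 0 := by
    intro s
    by_cases hρs : ρ < s
    · have hpt : ∀ c, e2 c s = (Ioi s).indicator
          (fun c => g ρ s * (v s c * g s c) - g ρ s * (v ρ s * g s c)) c := by
        intro c
        rw [he2]
        dsimp only
        by_cases h : s < c
        · rw [if_pos ⟨hρs, h⟩, Set.indicator_of_mem (Set.mem_Ioi.mpr h)]; ring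
        · rw [if_neg (fun hc => h hc.2),
            Set.indicator_of_notMem (by simpa [Set.mem_Ioi] using h)]
      rw [if_pos hρs]
      calc (∫ c, e2 c s) = ∫ c, (Ioi s).indicator
            (fun c => g ρ s * (v s c * g s c) - g ρ s * (v ρ s * g s c)) c := by
            simp only [hpt]
        _ = ∫ c in Ioi s, (g ρ s * (v s c * g s c) - g ρ s * (v ρ s * g s c)) :=
            integral_indicator measurableSet_Ioi
        _ = (∫ c in Ioi s, g ρ s * (v s c * g s c))
              - ∫ c in Ioi s, g ρ s * (v ρ s * g s c) := by
            refine integral_sub ?_ ?_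
            · exact ((h2 s).1.const_mul _).integrableOn
            · exact (((h1 s).1.const_mul _).const_mul _).integrableOn
        _ = g ρ s * (AV v g s) - g ρ s * (v ρ s * lamV g s) := by
            rw [integral_const_mul, integral_const_mul, integral_const_mul]
            rfl
        _ = g ρ s * (AV v g s - v ρ s * lamV g s) := by ring
    · rw [if_neg hρs]
      have hz : ∀ c, e2 c s = 0 := by
        intro c
        rw [he2]
        exact if_neg (fun hc => hρs hc.1)
      simp only [hz, integral_zero]
  -- integrability of Q⁺ slice
  have hQ_int : Integrable (fun c => ∫ s in Ioo ρ c, (v s c - v ρ s) * g ρ s * g s c) := by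
    have hmeq : (fun c => ∫ s in Ioo ρ c, (v s c - v ρ s) * g ρ s * g s c)
        = fun c => ∫ s, Function.uncurry e2 (c, s) := by
      funext c
      rw [hQ_eq c]
      rfl
    refine (aux_int (P := P) (Q := Q) (D := D2 * len) (by positivity) ?_ ?_ ?_).1
    · rw [hmeq]
      exact he_meas.stronglyMeasurable.integral_prod_right'.aestronglyMeasurable
    · intro c hc
      by_contra hnot
      apply hc
      rw [hQ_eq c]
      have hz : ∀ s, e2 c s = 0 := by
        intro s
        by_cases hcond : ρ < s ∧ s < c
        · have hgz : g s c = 0 := by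
            by_contra hne
            exact hnot (hgs s c hne).2
          rw [he2]
          dsimp only
          rw [if_pos hcond, hgz, mul_zero]
        · rw [he2]; exact if_neg hcond
      simp only [hz, integral_zero]
    · intro c
      rw [hQ_eq c]
      exact (aux_int hD2' (he_meas.comp (measurable_const.prodMk measurable_id)).aestronglyMeasurable
        (fun s h => (he_supp c s h).2) (he_bd c)).2.1
  -- integrability of φ1 and of the loss slice
  have habsJ : ∀ c, ρ ∈ Icc P Q → c ∈ Icc P Q →
      |AV v g c - v ρ c * lamV g c| ≤ M * C * len + M * (C * len) := by
    intro c hρI hcI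
    calc |AV v g c - v ρ c * lamV g c| ≤ |AV v g c| + |v ρ c * lamV g c| := abs_sub _ _
      _ ≤ M * C * len + M * (C * len) := by
          refine add_le_add (hAVb c) ?_
          rw [abs_mul]
          exact mul_le_mul (hvb ρ hρI c hcI) (hlamb c) (abs_nonneg _) hM
  have hphi1_int : Integrable (fun c => g ρ c * (AV v g c - v ρ c * lamV g c)) := by
    refine (aux_int (P := P) (Q := Q) (D := C * (M * C * len + M * (C * len)))
      (by positivity) ?_ ?_ ?_).1
    · exact ((hg1 ρ).measurable.mul (hAV_meas.measurable.sub
        ((hv1 ρ).mul hlam_meas.measurable))).aestronglyMeasurable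
    · intro c h
      exact (hgs ρ c (left_ne_zero_of_mul h)).2
    · intro c
      by_cases hz : g ρ c = 0
      · simp only [hz, zero_mul, abs_zero]; positivity
      · obtain ⟨hρI, hcI⟩ := hgs ρ c hz
        rw [abs_mul]
        exact mul_le_mul (hgb ρ c) (habsJ c hρI hcI) (abs_nonneg _) hC
  have hJg_int : Integrable (fun c => g ρ c *
      (AV v g c - AV v g ρ - v ρ c * (lamV g c - lamV g ρ))) := by
    refine (aux_int (P := P) (Q := Q)
      (D := C * ((M * C * len + M * C * len) + M * (C * len + C * len)))
      (by positivity) ?_ ?_ ?_).1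
    · exact ((hg1 ρ).measurable.mul ((hAV_meas.measurable.sub measurable_const).sub
        ((hv1 ρ).mul (hlam_meas.measurable.sub measurable_const)))).aestronglyMeasurable
    · intro c h
      exact (hgs ρ c (left_ne_zero_of_mul h)).2
    · intro c
      by_cases hz : g ρ c = 0
      · simp only [hz, zero_mul, abs_zero]; positivity
      · obtain ⟨hρI, hcI⟩ := hgs ρ c hz
        rw [abs_mul]
        refine mul_le_mul (hgb ρ c) ?_ (abs_nonneg _) hC
        calc |AV v g c - AV v g ρ - v ρ c * (lamV g c - lamV g ρ)|
            ≤ |AV v g c - AV v g ρ| + |v ρ c * (lamV g c - lamV g ρ)| := abs_sub _ _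
          _ ≤ (|AV v g c| + |AV v g ρ|) + |v ρ c| * (|lamV g c| + |lamV g ρ|) := by
              refine add_le_add (abs_sub _ _) ?_
              rw [abs_mul]
              exact mul_le_mul_of_nonneg_left (abs_sub _ _) (abs_nonneg _)
          _ ≤ (M * C * len + M * C * len) + M * (C * len + C * len) := by
              refine add_le_add (add_le_add (hAVb c) (hAVb ρ)) ?_
              exact mul_le_mul (hvb ρ hρI c hcI) (add_le_add (hlamb c) (hlamb ρ))
                (by positivity) hM
  -- the two integral identities
  have E1 : (∫ c in Ioi ρ, ∫ s in Ioo ρ c, (v s c - v ρ s) * g ρ s * g s c)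
      = ∫ s in Ioi ρ, g ρ s * (AV v g s - v ρ s * lamV g s) := by
    rw [setIntegral_eq_integral_of_forall_compl_eq_zero (f := fun c =>
      ∫ s in Ioo ρ c, (v s c - v ρ s) * g ρ s * g s c) ?_]
    · calc (∫ c, ∫ s in Ioo ρ c, (v s c - v ρ s) * g ρ s * g s c)
          = ∫ c, ∫ s, e2 c s := by simp only [hQ_eq]
        _ = ∫ s, ∫ c, e2 c s := integral_integral_swap he_int
        _ = ∫ s, (Ioi ρ).indicator (fun s => g ρ s * (AV v g s - v ρ s * lamV g s)) s := by
            congr 1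
            funext s
            rw [h4 s]
            simp [Set.indicator_apply, Set.mem_Ioi]
        _ = ∫ s in Ioi ρ, g ρ s * (AV v g s - v ρ s * lamV g s) :=
            integral_indicator measurableSet_Ioi
    · intro c hc
      have hcρ : ¬ ρ < c := by simpa [Set.mem_Ioi] using hc
      rw [Ioo_eq_empty (fun h => hcρ h)]
      simp
  have E2 : (∫ c in Ioi ρ, g ρ c * (AV v g c - AV v g ρ - v ρ c * (lamV g c - lamV g ρ)))
      = ∫ c in Ioi ρ, g ρ c * (AV v g c - v ρ c * lamV g c) := by
    have hsplit : ∀ c, g ρ c * (AV v g c - AV v g ρ - v ρ c * (lamV g c - lamV g ρ))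
        = g ρ c * (AV v g c - v ρ c * lamV g c)
          + (lamV g ρ * (v ρ c * g ρ c) - AV v g ρ * g ρ c) := by
      intro c; ring
    simp only [hsplit]
    have hsubint : Integrable (fun c => lamV g ρ * (v ρ c * g ρ c) - AV v g ρ * g ρ c) := by
      exact ((h2 ρ).1.const_mul (lamV g ρ)).sub ((h1 ρ).1.const_mul (AV v g ρ))
    rw [integral_add hphi1_int.integrableOn hsubint.integrableOn]
    have hz : (∫ c in Ioi ρ, (lamV g ρ * (v ρ c * g ρ c) - AV v g ρ * g ρ c))
        = lamV g ρ * AV v g ρ - AV v g ρ * lamV g ρ := by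
      rw [integral_sub (((h2 ρ).1.const_mul (lamV g ρ)).integrableOn)
        (((h1 ρ).1.const_mul (AV v g ρ)).integrableOn), integral_const_mul, integral_const_mul]
      rfl
    rw [hz]
    ring
  rw [integral_sub hQ_int.integrableOn hJg_int.integrableOn, E1, E2, sub_self]


private lemma velC2 {H : ℝ → ℝ → ℝ → ℝ}
    (hH : ContDiff ℝ 2 (fun p : ℝ × ℝ × ℝ => H p.1 p.2.1 p.2.2)) (x t : ℝ) :
    ContDiff ℝ 2 (fun r : ℝ => H x t r) := by
  have := hH.comp (ContDiff.prodMk (contDiff_const (c := x)) (ContDiff.prodMk (contDiff_const (c := t)) contDiff_id))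
  exact this

private lemma vel_meas {H : ℝ → ℝ → ℝ → ℝ}
    (hH : ContDiff ℝ 2 (fun p : ℝ × ℝ × ℝ => H p.1 p.2.1 p.2.2)) (x t : ℝ) :
    Measurable (fun p : ℝ × ℝ => vel H x t p.1 p.2) := by
  have hH3 := velC2 hH x t
  have hd : Continuous (deriv fun r => H x t r) := hH3.continuous_deriv (by norm_num)
  unfold vel
  refine Measurable.ite (measurableSet_eq_fun measurable_fst measurable_snd) ?_ ?_
  · exact hd.measurable.comp measurable_fst
  · exact ((hH3.continuous.measurable.comp measurable_fst).sub
      (hH3.continuous.measurable.comp measurable_snd)).div (measurable_fst.sub measurable_snd)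

private lemma vel_bound {H : ℝ → ℝ → ℝ → ℝ}
    (hH : ContDiff ℝ 2 (fun p : ℝ × ℝ × ℝ => H p.1 p.2.1 p.2.2)) (x t P Q : ℝ) :
    ∃ M : ℝ, 0 ≤ M ∧ ∀ a ∈ Icc P Q, ∀ c ∈ Icc P Q, |vel H x t a c| ≤ M := by
  have hH3 := velC2 hH x t
  have hd : Continuous (deriv fun r => H x t r) := hH3.continuous_deriv (by norm_num)
  obtain ⟨M0, hM0⟩ := (isCompact_Icc (a := P) (b := Q)).exists_bound_of_continuousOn
    hd.continuousOn
  refine ⟨max M0 0, le_max_right _ _, ?_⟩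
  have key : ∀ a ∈ Icc P Q, ∀ c ∈ Icc P Q, a < c →
      |(H x t a - H x t c) / (a - c)| ≤ max M0 0 := by
    intro a ha c hc hac
    obtain ⟨ξ, hξ, hslope⟩ := exists_deriv_eq_slope (fun r => H x t r) hac
      (hH3.continuous.continuousOn)
      ((hH3.differentiable (by norm_num)).differentiableOn)
    have hmem : ξ ∈ Icc P Q := ⟨ha.1.trans hξ.1.le, hξ.2.le.trans hc.2⟩
    have : (H x t a - H x t c) / (a - c) = deriv (fun r => H x t r) ξ := by
      rw [hslope]
      rw [div_eq_div_iff (by linarith) (by linarith)]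
      ring
    rw [this]
    exact le_max_of_le_left (by simpa [Real.norm_eq_abs] using hM0 ξ hmem)
  intro a ha c hc
  rcases lt_trichotomy a c with h | h | h
  · rw [vel, if_neg h.ne]; exact key a ha c hc h
  · rw [vel, if_pos h]
    exact le_max_of_le_left (by simpa [Real.norm_eq_abs] using hM0 a ha)
  · rw [vel, if_neg h.ne']
    have : (H x t a - H x t c) / (a - c) = (H x t c - H x t a) / (c - a) := by
      rw [div_eq_div_iff (by linarith) (by linarith)]; ring
    rw [this]
    exact key c hc a ha h

/-- Identity (2.12): the collision operator `Q(f) = Q⁺(f) − f·Jf` has vanishing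
zeroth moment. -/
theorem stmt8
    (H : ℝ → ℝ → ℝ → ℝ) (f : ℝ → ℝ → ℝ → ℝ → ℝ) (Pm Pp : ℝ)
    (hH : ContDiff ℝ 2 (fun p : ℝ × ℝ × ℝ => H p.1 p.2.1 p.2.2))
    (hf_C1 : ContDiff ℝ 1 (fun p : ℝ × ℝ × ℝ × ℝ => f p.1 p.2.1 p.2.2.1 p.2.2.2))
    (hf_nonneg : ∀ x t rm rp, 0 ≤ f x t rm rp)
    (hf_supp : ∀ x t rm rp, ¬ (Pm ≤ rm ∧ rm ≤ rp ∧ rp ≤ Pp) → f x t rm rp = 0) :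
    ∀ x t ρ : ℝ,
      ∫ rp in Ioi ρ, (QplusF H f x t ρ rp - f x t ρ rp * JF H f x t ρ rp) = 0 := by
  intro x t ρ
  obtain ⟨M, hM0, hMb⟩ := vel_bound hH x t Pm Pp
  have hgc : Continuous (fun p : ℝ × ℝ => f x t p.1 p.2) :=
    hf_C1.continuous.comp (continuous_const.prodMk (continuous_const.prodMk
      (continuous_fst.prodMk continuous_snd)))
  obtain ⟨C0, hC0⟩ := ((isCompact_Icc (a := Pm) (b := Pp)).prod isCompact_Icc).exists_bound_of_continuousOn
    hgc.continuousOn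
  have hgs : ∀ a c, f x t a c ≠ 0 → a ∈ Icc Pm Pp ∧ c ∈ Icc Pm Pp := by
    intro a c h
    have h3 : Pm ≤ a ∧ a ≤ c ∧ c ≤ Pp := by
      by_contra hcon
      exact h (hf_supp x t a c hcon)
    exact ⟨⟨h3.1, h3.2.1.trans h3.2.2⟩, ⟨h3.1.trans h3.2.1, h3.2.2⟩⟩
  have hgb : ∀ a c, |f x t a c| ≤ max C0 0 := by
    intro a c
    by_cases h : f x t a c = 0
    · rw [h, abs_zero]
      exact le_max_right _ _
    · obtain ⟨ha, hc⟩ := hgs a c h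
      exact le_max_of_le_left
        (by simpa [Real.norm_eq_abs] using hC0 (a, c) (Set.mk_mem_prod ha hc))
  have hkey := key (fun a c => vel H x t a c) (fun a c => f x t a c) Pm Pp M (max C0 0)
    hM0 (le_max_right _ _) (vel_meas hH x t) hgc hMb hgb hgs ρ
  simpa only [QplusF, JF, AF, lamF, AV, lamV] using hkey
end

section
/- Let L(x,θ,v) be C² on ℝ×[s,T]×ℝ, strictly concave in v, with −c₀+c₂v² ≤ −L(x,θ,v) ≤ c₀+c₁v² for positive constants c₀,c₁,c₂. Fix s < t ≤ T, y ∈ ℝ and x₁ < x₂. For i = 1,2 let ξⁱ ∈ C²([s,t]) maximize the action ξ ↦ ∫_s^t L(ξ(θ),θ,ξ̇(θ))dθ over all absolutely continuous paths with square-integrable derivative satisfying ξ(s) = y and ξ(t) = xᵢ; assume every such maximizer is C² and satisfies the Euler–Lagrange equation d/dθ[L_v(ξ(θ),θ,ξ̇(θ))] = L_x(ξ(θ),θ,ξ̇(θ)), whose solutions are uniquely determined by the data (ξ(θ₀), ξ̇(θ₀)) at any θ₀. Then ξ¹(θ) < ξ²(θ) for every θ ∈ (s,t]. -/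
open MeasureTheory Set

/-- The action `∫_s^t L(ξ(θ),θ,ξ'(θ)) dθ` of a path `ξ` with velocity `ξ'`. -/
noncomputable def pathAction (L : ℝ → ℝ → ℝ → ℝ) (s t : ℝ) (ξ ξ' : ℝ → ℝ) : ℝ :=
  ∫ θ in s..t, L (ξ θ) θ (ξ' θ)

/-- An admissible path from `(y,s)` to `(x,t)`: absolutely continuous with
square-integrable derivative `ξ'`, i.e. `ξ(θ) = y + ∫_s^θ ξ'` on `[s,t]`. -/
def AdmissiblePath (s t y x : ℝ) (ξ ξ' : ℝ → ℝ) : Prop :=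
  ξ s = y ∧ ξ t = x ∧
  (∀ θ ∈ Icc s t, ξ θ = y + ∫ u in s..θ, ξ' u) ∧
  IntegrableOn ξ' (Icc s t) ∧
  IntegrableOn (fun u => (ξ' u) ^ 2) (Icc s t)

/-- `ξ` is twice continuously differentiable on `[s,t]`. -/
def C2On (s t : ℝ) (ξ : ℝ → ℝ) : Prop :=
  (∀ θ ∈ Icc s t, HasDerivAt ξ (deriv ξ θ) θ) ∧
  (∀ θ ∈ Icc s t, HasDerivAt (deriv ξ) (deriv (deriv ξ) θ) θ) ∧
  ContinuousOn (deriv (deriv ξ)) (Icc s t)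

/-- The Euler--Lagrange equation
`d/dθ [L_v(ξ(θ),θ,ξ̇(θ))] = L_x(ξ(θ),θ,ξ̇(θ))` on `[s,t]`. -/
def SatisfiesEL (L : ℝ → ℝ → ℝ → ℝ) (s t : ℝ) (ξ : ℝ → ℝ) : Prop :=
  ∀ θ ∈ Icc s t,
    HasDerivAt (fun u => deriv (fun w => L (ξ u) u w) (deriv ξ u))
      (deriv (fun a => L a θ (deriv ξ θ)) (ξ θ)) θ

/-- `ξ` (with velocity `ξ'`) maximizes the action among admissible paths from
`(y,s)` to `(x,t)`. -/
def IsMaximizer (L : ℝ → ℝ → ℝ → ℝ) (s t y x : ℝ) (ξ ξ' : ℝ → ℝ) : Prop :=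
  AdmissiblePath s t y x ξ ξ' ∧
  ∀ η η' : ℝ → ℝ, AdmissiblePath s t y x η η' →
    pathAction L s t η η' ≤ pathAction L s t ξ ξ'

/-- If two functions agree on a nondegenerate interval, their (two-sided)
derivatives agree at every point of that interval. -/
private lemma deriv_eq_of_eqOn {f g : ℝ → ℝ} {a b p f' g' : ℝ} (hab : a < b)
    (hp : p ∈ Icc a b) (heq : EqOn f g (Icc a b))
    (hf : HasDerivAt f f' p) (hg : HasDerivAt g g' p) : f' = g' := by
  have hu : UniqueDiffWithinAt ℝ (Icc a b) p := uniqueDiffOn_Icc hab p hp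
  have h1 : HasDerivWithinAt f f' (Icc a b) p := hf.hasDerivWithinAt
  have h2 : HasDerivWithinAt f g' (Icc a b) p :=
    (hg.hasDerivWithinAt).congr (fun x hx => heq hx) (heq hp)
  rw [← h1.derivWithin hu, ← h2.derivWithin hu]

/-- A function that agrees with continuous functions on the two pieces of
`[s,t]` split at `θ0` is integrable on `[s,t]`. -/
private lemma integrableOn_piece {H F G : ℝ → ℝ} {s θ0 t : ℝ} (hs : s ≤ θ0) (ht : θ0 ≤ t)
    (hHF : ∀ u ∈ Icc s θ0, H u = F u) (hHG : ∀ u ∈ Ioc θ0 t, H u = G u)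
    (hF : ContinuousOn F (Icc s t)) (hG : ContinuousOn G (Icc s t)) :
    IntegrableOn H (Icc s t) := by
  have h1 : IntegrableOn F (Icc s θ0) :=
    (hF.mono (Icc_subset_Icc le_rfl ht)).integrableOn_Icc
  have h2 : IntegrableOn G (Ioc θ0 t) :=
    ((hG.mono (Icc_subset_Icc hs le_rfl)).integrableOn_Icc).mono_set Ioc_subset_Icc_self
  have hH1 : IntegrableOn H (Icc s θ0) :=
    h1.congr_fun (fun u hu => (hHF u hu).symm) measurableSet_Icc
  have hH2 : IntegrableOn H (Ioc θ0 t) :=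
    h2.congr_fun (fun u hu => (hHG u hu).symm) measurableSet_Ioc
  rw [← Icc_union_Ioc_eq_Icc hs ht]
  exact hH1.union hH2

/-- Splitting an integral of a piecewise-defined function at `θ0`. -/
private lemma integral_glue {H F G : ℝ → ℝ} {s θ0 t : ℝ} (hs : s ≤ θ0) (ht : θ0 ≤ t)
    (hHF : ∀ u ∈ Ioc s θ0, H u = F u) (hHG : ∀ u ∈ Ioc θ0 t, H u = G u)
    (hF : ContinuousOn F (Icc s t)) (hG : ContinuousOn G (Icc s t)) :
    (∫ u in s..t, H u) = (∫ u in s..θ0, F u) + ∫ u in θ0..t, G u := by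
  have h1 : IntegrableOn F (Ioc s θ0) :=
    ((hF.mono (Icc_subset_Icc le_rfl ht)).integrableOn_Icc).mono_set Ioc_subset_Icc_self
  have h2 : IntegrableOn G (Ioc θ0 t) :=
    ((hG.mono (Icc_subset_Icc hs le_rfl)).integrableOn_Icc).mono_set Ioc_subset_Icc_self
  have hH1 : IntegrableOn H (Ioc s θ0) :=
    h1.congr_fun (fun u hu => (hHF u hu).symm) measurableSet_Ioc
  have hH2 : IntegrableOn H (Ioc θ0 t) :=
    h2.congr_fun (fun u hu => (hHG u hu).symm) measurableSet_Ioc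
  rw [intervalIntegral.integral_of_le (hs.trans ht), intervalIntegral.integral_of_le hs,
    intervalIntegral.integral_of_le ht, ← Ioc_union_Ioc_eq_Ioc hs ht,
    setIntegral_union (Ioc_disjoint_Ioc_of_le le_rfl) measurableSet_Ioc hH1 hH2,
    setIntegral_congr_fun measurableSet_Ioc hHF, setIntegral_congr_fun measurableSet_Ioc hHG]

/-- The gluing of two paths at `θ0`. -/
noncomputable def pglue (θ0 : ℝ) (f g : ℝ → ℝ) : ℝ → ℝ := fun u => if u ≤ θ0 then f u else g u

/-- Proposition 5.2(i): maximizing paths with the same starting point `(y,s)`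
and ordered endpoints `x₁ < x₂` stay strictly ordered on `(s,t]`. -/
theorem stmt10
    (L : ℝ → ℝ → ℝ → ℝ) (s t T c0 c1 c2 y x1 x2 : ℝ)
    (hst : s < t) (htT : t ≤ T)
    (hc0 : 0 < c0) (hc1 : 0 < c1) (hc2 : 0 < c2)
    (hL : ContDiff ℝ 2 (fun p : ℝ × ℝ × ℝ => L p.1 p.2.1 p.2.2))
    (hconc : ∀ a θ, StrictConcaveOn ℝ univ (fun w => L a θ w))
    (hgrowth : ∀ a θ w, -c0 + c2 * w ^ 2 ≤ -(L a θ w) ∧ -(L a θ w) ≤ c0 + c1 * w ^ 2)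
    (hx : x1 < x2)
    (ξ1 ξ2 : ℝ → ℝ)
    (hξ1C2 : C2On s t ξ1) (hξ2C2 : C2On s t ξ2)
    (hmax1 : IsMaximizer L s t y x1 ξ1 (deriv ξ1))
    (hmax2 : IsMaximizer L s t y x2 ξ2 (deriv ξ2))
    (hEL1 : SatisfiesEL L s t ξ1) (hEL2 : SatisfiesEL L s t ξ2)
    (hreg : ∀ y' x' : ℝ, ∀ ξ ξ' : ℝ → ℝ, AdmissiblePath s t y' x' ξ ξ' →
      (∀ η η', AdmissiblePath s t y' x' η η' →
        pathAction L s t η η' ≤ pathAction L s t ξ ξ') →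
      ∃ ζ : ℝ → ℝ, C2On s t ζ ∧ SatisfiesEL L s t ζ ∧ ∀ θ ∈ Icc s t, ζ θ = ξ θ)
    (huniq : ∀ ζ1 ζ2 : ℝ → ℝ, C2On s t ζ1 → C2On s t ζ2 →
      SatisfiesEL L s t ζ1 → SatisfiesEL L s t ζ2 →
      ∀ θ0 ∈ Icc s t, ζ1 θ0 = ζ2 θ0 → deriv ζ1 θ0 = deriv ζ2 θ0 →
      ∀ θ ∈ Icc s t, ζ1 θ = ζ2 θ) :
    ∀ θ ∈ Ioc s t, ξ1 θ < ξ2 θ := by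
  by_contra hcon
  push_neg at hcon
  obtain ⟨θs, hθs, hle⟩ := hcon
  -- basic continuity facts
  have hLcont : Continuous (fun p : ℝ × ℝ × ℝ => L p.1 p.2.1 p.2.2) := hL.continuous
  have hξ1c : ContinuousOn ξ1 (Icc s t) := fun θ hθ =>
    ((hξ1C2.1 θ hθ).continuousAt).continuousWithinAt
  have hξ2c : ContinuousOn ξ2 (Icc s t) := fun θ hθ =>
    ((hξ2C2.1 θ hθ).continuousAt).continuousWithinAt
  have hξ1d : ContinuousOn (deriv ξ1) (Icc s t) := fun θ hθ =>
    ((hξ1C2.2.1 θ hθ).continuousAt).continuousWithinAt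
  have hξ2d : ContinuousOn (deriv ξ2) (Icc s t) := fun θ hθ =>
    ((hξ2C2.2.1 θ hθ).continuousAt).continuousWithinAt
  have hξ1t : ξ1 t = x1 := hmax1.1.2.1
  have hξ2t : ξ2 t = x2 := hmax2.1.2.1
  -- find a crossing point θ0 with s < θ0 < t
  have hθst : θs < t := by
    rcases lt_or_eq_of_le hθs.2 with h | h
    · exact h
    · exfalso; rw [h, hξ1t, hξ2t] at hle; linarith
  have hIcc_sub : Icc θs t ⊆ Icc s t := Icc_subset_Icc hθs.1.le le_rfl
  have hgc : ContinuousOn (fun u => ξ2 u - ξ1 u) (Icc θs t) :=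
    ((hξ2c.mono hIcc_sub).sub (hξ1c.mono hIcc_sub))
  have h0mem : (0 : ℝ) ∈ Icc (ξ2 θs - ξ1 θs) (ξ2 t - ξ1 t) := by
    constructor
    · linarith
    · rw [hξ1t, hξ2t]; linarith
  obtain ⟨θ0, hθ0mem, hθ0eq⟩ := intermediate_value_Icc hθst.le hgc h0mem
  have hθ0eq' : ξ2 θ0 - ξ1 θ0 = 0 := hθ0eq
  have hcross : ξ1 θ0 = ξ2 θ0 := by linarith
  have hsθ0 : s < θ0 := lt_of_lt_of_le hθs.1 hθ0mem.1
  have hθ0t : θ0 < t := by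
    rcases lt_or_eq_of_le hθ0mem.2 with h | h
    · exact h
    · exfalso
      rw [h] at hcross
      rw [hξ1t, hξ2t] at hcross; linarith
  have hθ0I : θ0 ∈ Icc s t := ⟨hsθ0.le, hθ0t.le⟩
  -- glue properties
  have hglue_left : ∀ f g : ℝ → ℝ, ∀ u ∈ Icc s θ0, pglue θ0 f g u = f u := by
    intro f g u hu; exact if_pos hu.2
  have hglue_right : ∀ f g : ℝ → ℝ, ∀ u ∈ Ioc θ0 t, pglue θ0 f g u = g u := by
    intro f g u hu; exact if_neg (not_le.2 hu.1)
  -- admissibility of glued paths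
  have hadm : ∀ f g : ℝ → ℝ, AdmissiblePath s t y x1 f (deriv f) ∨ True →
      AdmissiblePath s t y (f t) f (deriv f) → AdmissiblePath s t y (g t) g (deriv g) →
      ContinuousOn (deriv f) (Icc s t) → ContinuousOn (deriv g) (Icc s t) →
      f θ0 = g θ0 →
      AdmissiblePath s t y (g t) (pglue θ0 f g) (pglue θ0 (deriv f) (deriv g)) := by
    intro f g _ hf hg hfd hgd hfg
    obtain ⟨hfs, -, hfint, hfi, hfi2⟩ := hf
    obtain ⟨hgs, -, hgint, hgi, hgi2⟩ := hg
    refine ⟨?_, ?_, ?_, ?_, ?_⟩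
    · rw [hglue_left f g s ⟨le_rfl, hsθ0.le⟩]; exact hfs
    · rw [hglue_right f g t ⟨hθ0t, le_rfl⟩]
    · intro θ hθ
      rcases le_or_gt θ θ0 with hc | hc
      · have hθI : θ ∈ Icc s θ0 := ⟨hθ.1, hc⟩
        rw [hglue_left f g θ hθI]
        have : (∫ u in s..θ, pglue θ0 (deriv f) (deriv g) u) = ∫ u in s..θ, deriv f u := by
          rw [intervalIntegral.integral_of_le hθ.1, intervalIntegral.integral_of_le hθ.1]
          exact setIntegral_congr_fun measurableSet_Ioc
            (fun u hu => hglue_left (deriv f) (deriv g) u ⟨hu.1.le, hu.2.trans hc⟩)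
        rw [this]
        exact hfint θ ⟨hθ.1, hc.trans hθ0t.le⟩
      · have hglueθ : pglue θ0 f g θ = g θ := hglue_right f g θ ⟨hc, hθ.2⟩
        rw [hglueθ]
        have hsplit : (∫ u in s..θ, pglue θ0 (deriv f) (deriv g) u)
            = (∫ u in s..θ0, deriv f u) + ∫ u in θ0..θ, deriv g u := by
          apply integral_glue hsθ0.le hc.le
          · intro u hu; exact hglue_left (deriv f) (deriv g) u ⟨hu.1.le, hu.2⟩
          · intro u hu; exact if_neg (not_le.2 hu.1)
          · exact hfd.mono (Icc_subset_Icc le_rfl hθ.2)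
          · exact hgd.mono (Icc_subset_Icc le_rfl hθ.2)
        rw [hsplit]
        have h1 : f θ0 = y + ∫ u in s..θ0, deriv f u := hfint θ0 hθ0I
        have hIg1 : IntervalIntegrable (deriv g) volume s θ0 := by
          apply ContinuousOn.intervalIntegrable
          rw [uIcc_of_le hsθ0.le]
          exact hgd.mono (Icc_subset_Icc le_rfl hθ0t.le)
        have hIg2 : IntervalIntegrable (deriv g) volume θ0 θ := by
          apply ContinuousOn.intervalIntegrable
          rw [uIcc_of_le hc.le]
          exact hgd.mono (Icc_subset_Icc hsθ0.le hθ.2)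
        have h2 : g θ = y + ∫ u in s..θ, deriv g u := hgint θ hθ
        have h3 : g θ0 = y + ∫ u in s..θ0, deriv g u := hgint θ0 hθ0I
        have h4 : (∫ u in s..θ0, deriv g u) + (∫ u in θ0..θ, deriv g u)
            = ∫ u in s..θ, deriv g u := intervalIntegral.integral_add_adjacent_intervals hIg1 hIg2
        have h5 : (∫ u in θ0..θ, deriv g u) = g θ - g θ0 := by linarith
        have h6 : (∫ u in s..θ0, deriv f u) = f θ0 - y := by linarith
        rw [h5, h6, hfg]; ring
    · exact integrableOn_piece hsθ0.le hθ0t.le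
        (hglue_left (deriv f) (deriv g)) (hglue_right (deriv f) (deriv g)) hfd hgd
    · exact integrableOn_piece hsθ0.le hθ0t.le
        (fun u hu => by rw [hglue_left (deriv f) (deriv g) u hu]; rfl)
        (fun u hu => by rw [hglue_right (deriv f) (deriv g) u hu]; rfl)
        (hfd.pow 2) (hgd.pow 2)
  -- continuity of the Lagrangian along a C¹ path
  have hLpath : ∀ f : ℝ → ℝ, ContinuousOn f (Icc s t) → ContinuousOn (deriv f) (Icc s t) →
      ContinuousOn (fun u => L (f u) u (deriv f u)) (Icc s t) := by
    intro f hfc hfd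
    exact hLcont.comp_continuousOn (hfc.prodMk (continuousOn_id.prodMk hfd))
  -- action of glued paths
  have hact : ∀ f g : ℝ → ℝ, ContinuousOn f (Icc s t) → ContinuousOn g (Icc s t) →
      ContinuousOn (deriv f) (Icc s t) → ContinuousOn (deriv g) (Icc s t) →
      pathAction L s t (pglue θ0 f g) (pglue θ0 (deriv f) (deriv g))
        = (∫ u in s..θ0, L (f u) u (deriv f u)) + ∫ u in θ0..t, L (g u) u (deriv g u) := by
    intro f g hfc hgc hfd hgd
    apply integral_glue hsθ0.le hθ0t.le
    · intro u hu
      rw [hglue_left f g u ⟨hu.1.le, hu.2⟩, hglue_left (deriv f) (deriv g) u ⟨hu.1.le, hu.2⟩]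
    · intro u hu
      rw [hglue_right f g u hu, hglue_right (deriv f) (deriv g) u hu]
    · exact hLpath f hfc hfd
    · exact hLpath g hgc hgd
  -- splitting the original actions
  have hsplitf : ∀ f : ℝ → ℝ, ContinuousOn f (Icc s t) → ContinuousOn (deriv f) (Icc s t) →
      pathAction L s t f (deriv f)
        = (∫ u in s..θ0, L (f u) u (deriv f u)) + ∫ u in θ0..t, L (f u) u (deriv f u) := by
    intro f hfc hfd
    exact integral_glue hsθ0.le hθ0t.le (fun u _ => rfl) (fun u _ => rfl)
      (hLpath f hfc hfd) (hLpath f hfc hfd)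
  -- admissible glued paths
  have hadm1 : AdmissiblePath s t y x2 (pglue θ0 ξ1 ξ2) (pglue θ0 (deriv ξ1) (deriv ξ2)) := by
    have := hadm ξ1 ξ2 (Or.inr trivial)
      (by rw [hξ1t]; exact hmax1.1) (by rw [hξ2t]; exact hmax2.1) hξ1d hξ2d hcross
    rwa [hξ2t] at this
  have hadm2 : AdmissiblePath s t y x1 (pglue θ0 ξ2 ξ1) (pglue θ0 (deriv ξ2) (deriv ξ1)) := by
    have := hadm ξ2 ξ1 (Or.inr trivial)
      (by rw [hξ2t]; exact hmax2.1) (by rw [hξ1t]; exact hmax1.1) hξ2d hξ1d hcross.symm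
    rwa [hξ1t] at this
  -- action bookkeeping
  have hA1 := hact ξ1 ξ2 hξ1c hξ2c hξ1d hξ2d
  have hA2 := hact ξ2 ξ1 hξ2c hξ1c hξ2d hξ1d
  have hS1 := hsplitf ξ1 hξ1c hξ1d
  have hS2 := hsplitf ξ2 hξ2c hξ2d
  have hle1 : pathAction L s t (pglue θ0 ξ1 ξ2) (pglue θ0 (deriv ξ1) (deriv ξ2))
      ≤ pathAction L s t ξ2 (deriv ξ2) := hmax2.2 _ _ hadm1
  have hle2 : pathAction L s t (pglue θ0 ξ2 ξ1) (pglue θ0 (deriv ξ2) (deriv ξ1))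
      ≤ pathAction L s t ξ1 (deriv ξ1) := hmax1.2 _ _ hadm2
  have heqA : pathAction L s t (pglue θ0 ξ1 ξ2) (pglue θ0 (deriv ξ1) (deriv ξ2))
      = pathAction L s t ξ2 (deriv ξ2) := by
    rw [hA1, hS2] at hle1 ⊢
    rw [hA2, hS1] at hle2
    linarith
  -- the glued path pglue θ0 ξ1 ξ2 is a maximizer from (y,s) to (x2,t)
  obtain ⟨ζ, hζC2, hζEL, hζeq⟩ := hreg y x2 _ _ hadm1
    (fun η η' hη => (hmax2.2 η η' hη).trans_eq heqA.symm)
  -- ζ agrees with ξ2 on [θ0, t]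
  have hζξ2 : EqOn ζ ξ2 (Icc θ0 t) := by
    intro θ hθ
    have hθI : θ ∈ Icc s t := ⟨hsθ0.le.trans hθ.1, hθ.2⟩
    rw [hζeq θ hθI]
    rcases eq_or_lt_of_le hθ.1 with h | h
    · have he : pglue θ0 ξ1 ξ2 θ = ξ1 θ := hglue_left ξ1 ξ2 θ ⟨hsθ0.le.trans hθ.1, h.symm.le⟩
      rw [he, ← h]; exact hcross
    · exact hglue_right ξ1 ξ2 θ ⟨h, hθ.2⟩
  have htI : t ∈ Icc s t := ⟨hst.le, le_rfl⟩
  have hdζ2 : deriv ζ t = deriv ξ2 t :=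
    deriv_eq_of_eqOn hθ0t (right_mem_Icc.2 hθ0t.le) hζξ2 (hζC2.1 t htI) (hξ2C2.1 t htI)
  have hζall : ∀ θ ∈ Icc s t, ζ θ = ξ2 θ :=
    huniq ζ ξ2 hζC2 hξ2C2 hζEL hEL2 t htI (hζξ2 (right_mem_Icc.2 hθ0t.le)) hdζ2
  -- hence ξ1 = ξ2 on [s, θ0]
  have hξ12 : EqOn ξ1 ξ2 (Icc s θ0) := by
    intro θ hθ
    have hθI : θ ∈ Icc s t := ⟨hθ.1, hθ.2.trans hθ0t.le⟩
    rw [← hglue_left ξ1 ξ2 θ hθ, ← hζeq θ hθI, hζall θ hθI]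
  have hdξ12 : deriv ξ1 θ0 = deriv ξ2 θ0 :=
    deriv_eq_of_eqOn hsθ0 (right_mem_Icc.2 hsθ0.le) hξ12 (hξ1C2.1 θ0 hθ0I) (hξ2C2.1 θ0 hθ0I)
  have hall : ∀ θ ∈ Icc s t, ξ1 θ = ξ2 θ :=
    huniq ξ1 ξ2 hξ1C2 hξ2C2 hEL1 hEL2 θ0 hθ0I hcross hdξ12
  have : x1 = x2 := by rw [← hξ1t, ← hξ2t]; exact hall t htI
  linarith
end

section
/- Let L(x,θ,v) be C² on ℝ×[s,T]×ℝ, strictly concave in v, with −c₀+c₂v² ≤ −L(x,θ,v) ≤ c₀+c₁v² for positive constants c₀,c₁,c₂. Fix s < t ≤ T, x ∈ ℝ and y₁ < y₂. For i = 1,2 let ξⁱ ∈ C²([s,t]) maximize the action ξ ↦ ∫_s^t L(ξ(θ),θ,ξ̇(θ))dθ over all absolutely continuous paths with square-integrable derivative satisfying ξ(s) = yᵢ and ξ(t) = x; assume every such maximizer is C² and satisfies the Euler–Lagrange equation d/dθ[L_v(ξ(θ),θ,ξ̇(θ))] = L_x(ξ(θ),θ,ξ̇(θ)), whose solutions are uniquely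 determined by (ξ(θ₀), ξ̇(θ₀)). Then ξ¹(θ) < ξ²(θ) for every θ ∈ [s,t), ξ̇¹(t) > ξ̇²(t), and consequently L_v(x,t,ξ̇¹(t)) < L_v(x,t,ξ̇²(t)); in particular the fundamental-solution gradient M(x,t;y,s) := L_v(x,t,ξ̇(t)) is strictly increasing in the starting point y. -/
open MeasureTheory Set

set_option maxHeartbeats 1000000

/- ## Auxiliary lemmas -/

/-- If two functions agree on a nondegenerate interval and both are differentiable at a
point of it, their derivatives agree there. -/
lemma deriv_eq_of_eqOn_Icc {f g : ℝ → ℝ} {f' g' a b p : ℝ} (hab : a < b) (hp : p ∈ Icc a b)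
    (heq : EqOn f g (Icc a b)) (hf : HasDerivAt f f' p) (hg : HasDerivAt g g' p) : f' = g' := by
  have hu : UniqueDiffWithinAt ℝ (Icc a b) p := (uniqueDiffOn_Icc hab) p hp
  have h1 : HasDerivWithinAt f f' (Icc a b) p := hf.hasDerivWithinAt
  have h2 : HasDerivWithinAt g f' (Icc a b) p :=
    h1.congr (fun y hy => (heq hy).symm) (heq hp).symm
  rw [← h2.derivWithin hu, ← hg.hasDerivWithinAt.derivWithin hu]

lemma glue_integrableOn {s t θ0 : ℝ} {f g : ℝ → ℝ} (hsθ : s ≤ θ0) (hθt : θ0 ≤ t)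
    (hf : IntegrableOn f (Icc s t)) (hg : IntegrableOn g (Icc s t)) :
    IntegrableOn (fun θ => if θ ≤ θ0 then f θ else g θ) (Icc s t) := by
  have hst : s ≤ t := hsθ.trans hθt
  rw [← Icc_union_Icc_eq_Icc hsθ hθt]
  apply IntegrableOn.union
  · exact (hf.mono_set (Icc_subset_Icc le_rfl hθt)).congr_fun
      (fun θ hθ => (if_pos hθ.2).symm) measurableSet_Icc
  · rw [integrableOn_Icc_iff_integrableOn_Ioc]
    exact (hg.mono_set ((Ioc_subset_Icc_self).trans (Icc_subset_Icc hsθ le_rfl))).congr_fun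
      (fun θ hθ => (if_neg (not_le.2 hθ.1)).symm) measurableSet_Ioc

lemma glue_admissible {s t θ0 ya yb x : ℝ} {ξa ξa' ξb ξb' : ℝ → ℝ}
    (hsθ : s ≤ θ0) (hθt : θ0 < t)
    (ha : AdmissiblePath s t ya x ξa ξa') (hb : AdmissiblePath s t yb x ξb ξb')
    (heq : ξa θ0 = ξb θ0) :
    AdmissiblePath s t ya x (fun θ => if θ ≤ θ0 then ξa θ else ξb θ)
      (fun θ => if θ ≤ θ0 then ξa' θ else ξb' θ) := by
  obtain ⟨has, hat, harep, hai, hai2⟩ := ha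
  obtain ⟨hbs, hbt, hbrep, hbi, hbi2⟩ := hb
  set G' : ℝ → ℝ := fun θ => if θ ≤ θ0 then ξa' θ else ξb' θ with hG'
  have hgint : IntegrableOn G' (Icc s t) := glue_integrableOn hsθ hθt.le hai hbi
  have ii : ∀ a b : ℝ, s ≤ a → a ≤ b → b ≤ t → IntervalIntegrable G' volume a b :=
    fun a b h1 h2 h3 => (hgint.mono_set
      (by rw [uIcc_of_le h2]; exact Icc_subset_Icc h1 h3)).intervalIntegrable
  have iib : ∀ a b : ℝ, s ≤ a → a ≤ b → b ≤ t → IntervalIntegrable ξb' volume a b :=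
    fun a b h1 h2 h3 => (hbi.mono_set
      (by rw [uIcc_of_le h2]; exact Icc_subset_Icc h1 h3)).intervalIntegrable
  refine ⟨by simp [hsθ, has], by simp [not_le.2 hθt, hbt], ?_, hgint, ?_⟩
  · intro θ hθ
    by_cases hc : θ ≤ θ0
    · simp only [if_pos hc]
      rw [harep θ hθ]
      congr 1
      refine intervalIntegral.integral_congr fun u hu => ?_
      rw [uIcc_of_le hθ.1] at hu
      exact (if_pos (hu.2.trans hc)).symm
    · push_neg at hc
      simp only [if_neg (not_le.2 hc)]
      rw [← intervalIntegral.integral_add_adjacent_intervals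
        (ii s θ0 le_rfl hsθ hθt.le) (ii θ0 θ hsθ hc.le hθ.2)]
      have e1 : (∫ u in s..θ0, G' u) = ∫ u in s..θ0, ξa' u := by
        refine intervalIntegral.integral_congr fun u hu => ?_
        rw [uIcc_of_le hsθ] at hu
        exact if_pos hu.2
      have e2 : (∫ u in θ0..θ, G' u) = ∫ u in θ0..θ, ξb' u := by
        refine intervalIntegral.integral_congr_ae (Filter.Eventually.of_forall fun u hu => ?_)
        rw [uIoc_of_le hc.le] at hu
        exact if_neg (not_le.2 hu.1)
      have e3 := harep θ0 ⟨hsθ, hθt.le⟩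
      have e4 := hbrep θ0 ⟨hsθ, hθt.le⟩
      have e5 := hbrep θ hθ
      have e6 : (∫ u in s..θ, ξb' u) = (∫ u in s..θ0, ξb' u) + ∫ u in θ0..θ, ξb' u :=
        (intervalIntegral.integral_add_adjacent_intervals
          (iib s θ0 le_rfl hsθ hθt.le) (iib θ0 θ hsθ hc.le hθ.2)).symm
      rw [e1, e2]
      rw [e6] at e5
      linarith [heq]
  · have h2 : (fun u => (G' u) ^ 2) = fun u => if u ≤ θ0 then (ξa' u) ^ 2 else (ξb' u) ^ 2 := by
      funext u; by_cases h : u ≤ θ0 <;> simp [hG', h]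
    rw [h2]
    exact glue_integrableOn hsθ hθt.le hai2 hbi2

lemma glue_action {L : ℝ → ℝ → ℝ → ℝ} {s t θ0 : ℝ} {ξa ξa' ξb ξb' : ℝ → ℝ}
    (hsθ : s ≤ θ0) (hθt : θ0 ≤ t)
    (hFa : IntegrableOn (fun θ => L (ξa θ) θ (ξa' θ)) (Icc s t))
    (hFb : IntegrableOn (fun θ => L (ξb θ) θ (ξb' θ)) (Icc s t)) :
    pathAction L s t (fun θ => if θ ≤ θ0 then ξa θ else ξb θ)
        (fun θ => if θ ≤ θ0 then ξa' θ else ξb' θ)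
      = (∫ θ in s..θ0, L (ξa θ) θ (ξa' θ)) + ∫ θ in θ0..t, L (ξb θ) θ (ξb' θ) := by
  have hG : (fun θ => L ((if θ ≤ θ0 then ξa θ else ξb θ)) θ ((if θ ≤ θ0 then ξa' θ else ξb' θ)))
      = fun θ => if θ ≤ θ0 then L (ξa θ) θ (ξa' θ) else L (ξb θ) θ (ξb' θ) := by
    funext u; by_cases h : u ≤ θ0 <;> simp [h]
  have hGi : IntegrableOn
      (fun θ => if θ ≤ θ0 then L (ξa θ) θ (ξa' θ) else L (ξb θ) θ (ξb' θ)) (Icc s t) :=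
    glue_integrableOn hsθ hθt hFa hFb
  have ii : ∀ a b : ℝ, s ≤ a → a ≤ b → b ≤ t → IntervalIntegrable
      (fun θ => if θ ≤ θ0 then L (ξa θ) θ (ξa' θ) else L (ξb θ) θ (ξb' θ)) volume a b :=
    fun a b h1 h2 h3 => (hGi.mono_set
      (by rw [uIcc_of_le h2]; exact Icc_subset_Icc h1 h3)).intervalIntegrable
  rw [pathAction]
  simp only [hG]
  rw [← intervalIntegral.integral_add_adjacent_intervals
    (ii s θ0 le_rfl hsθ hθt) (ii θ0 t hsθ hθt le_rfl)]
  congr 1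
  · refine intervalIntegral.integral_congr fun u hu => ?_
    rw [uIcc_of_le hsθ] at hu
    exact if_pos hu.2
  · refine intervalIntegral.integral_congr_ae (Filter.Eventually.of_forall fun u hu => ?_)
    rw [uIoc_of_le hθt] at hu
    exact if_neg (not_le.2 hu.1)

/-- Proposition 5.2(ii): maximizing paths with ordered starting points
`y₁ < y₂` and the same endpoint `(x,t)` stay strictly ordered on `[s,t)`,
their terminal velocities satisfy `ξ̇¹(t) > ξ̇²(t)`, and hence the
fundamental-solution gradient `M(x,t;y,s) = L_v(x,t,ξ̇(t))` is strictly
increasing in `y`. -/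
theorem stmt11
    (L : ℝ → ℝ → ℝ → ℝ) (s t T c0 c1 c2 x y1 y2 : ℝ)
    (hst : s < t) (htT : t ≤ T)
    (hc0 : 0 < c0) (hc1 : 0 < c1) (hc2 : 0 < c2)
    (hL : ContDiff ℝ 2 (fun p : ℝ × ℝ × ℝ => L p.1 p.2.1 p.2.2))
    (hconc : ∀ a θ, StrictConcaveOn ℝ univ (fun w => L a θ w))
    (hgrowth : ∀ a θ w, -c0 + c2 * w ^ 2 ≤ -(L a θ w) ∧ -(L a θ w) ≤ c0 + c1 * w ^ 2)
    (hy : y1 < y2)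
    (ξ1 ξ2 : ℝ → ℝ)
    (hξ1C2 : C2On s t ξ1) (hξ2C2 : C2On s t ξ2)
    (hmax1 : IsMaximizer L s t y1 x ξ1 (deriv ξ1))
    (hmax2 : IsMaximizer L s t y2 x ξ2 (deriv ξ2))
    (hEL1 : SatisfiesEL L s t ξ1) (hEL2 : SatisfiesEL L s t ξ2)
    (hreg : ∀ y' x' : ℝ, ∀ ξ ξ' : ℝ → ℝ, AdmissiblePath s t y' x' ξ ξ' →
      (∀ η η', AdmissiblePath s t y' x' η η' →
        pathAction L s t η η' ≤ pathAction L s t ξ ξ') →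
      ∃ ζ : ℝ → ℝ, C2On s t ζ ∧ SatisfiesEL L s t ζ ∧ ∀ θ ∈ Icc s t, ζ θ = ξ θ)
    (huniq : ∀ ζ1 ζ2 : ℝ → ℝ, C2On s t ζ1 → C2On s t ζ2 →
      SatisfiesEL L s t ζ1 → SatisfiesEL L s t ζ2 →
      ∀ θ0 ∈ Icc s t, ζ1 θ0 = ζ2 θ0 → deriv ζ1 θ0 = deriv ζ2 θ0 →
      ∀ θ ∈ Icc s t, ζ1 θ = ζ2 θ) :
    (∀ θ ∈ Ico s t, ξ1 θ < ξ2 θ) ∧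
    deriv ξ2 t < deriv ξ1 t ∧
    deriv (fun w => L x t w) (deriv ξ1 t) < deriv (fun w => L x t w) (deriv ξ2 t) := by
  have hmemt : t ∈ Icc s t := ⟨hst.le, le_rfl⟩
  have hmems : s ∈ Icc s t := ⟨le_rfl, hst.le⟩
  -- basic facts
  have hξ1s : ξ1 s = y1 := hmax1.1.1
  have hξ2s : ξ2 s = y2 := hmax2.1.1
  have hξ1t : ξ1 t = x := hmax1.1.2.1
  have hξ2t : ξ2 t = x := hmax2.1.2.1
  -- key 1: paths can't agree in value and derivative anywhere
  have key1 : ∀ θ0 ∈ Icc s t, ξ1 θ0 = ξ2 θ0 → deriv ξ1 θ0 ≠ deriv ξ2 θ0 := by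
    intro θ0 hθ0 hval hder
    have := huniq ξ1 ξ2 hξ1C2 hξ2C2 hEL1 hEL2 θ0 hθ0 hval hder s hmems
    rw [hξ1s, hξ2s] at this
    exact absurd this (ne_of_lt hy)
  -- continuity of paths and integrands
  have hcξ1 : ContinuousOn ξ1 (Icc s t) := fun θ hθ =>
    (hξ1C2.1 θ hθ).continuousAt.continuousWithinAt
  have hcξ2 : ContinuousOn ξ2 (Icc s t) := fun θ hθ =>
    (hξ2C2.1 θ hθ).continuousAt.continuousWithinAt
  have hcd1 : ContinuousOn (deriv ξ1) (Icc s t) := fun θ hθ =>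
    (hξ1C2.2.1 θ hθ).continuousAt.continuousWithinAt
  have hcd2 : ContinuousOn (deriv ξ2) (Icc s t) := fun θ hθ =>
    (hξ2C2.2.1 θ hθ).continuousAt.continuousWithinAt
  have hF1 : IntegrableOn (fun θ => L (ξ1 θ) θ (deriv ξ1 θ)) (Icc s t) := by
    have hc : ContinuousOn (fun θ => L (ξ1 θ) θ (deriv ξ1 θ)) (Icc s t) :=
      hL.continuous.comp_continuousOn (hcξ1.prodMk (continuousOn_id.prodMk hcd1))
    exact hc.integrableOn_Icc
  have hF2 : IntegrableOn (fun θ => L (ξ2 θ) θ (deriv ξ2 θ)) (Icc s t) := by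
    have hc : ContinuousOn (fun θ => L (ξ2 θ) θ (deriv ξ2 θ)) (Icc s t) :=
      hL.continuous.comp_continuousOn (hcξ2.prodMk (continuousOn_id.prodMk hcd2))
    exact hc.integrableOn_Icc
  -- key 2: no interior crossing
  have key2 : ∀ θ0 ∈ Ioo s t, ξ1 θ0 ≠ ξ2 θ0 := by
    intro θ0 hθ0 hval
    have hθ0m : θ0 ∈ Icc s t := ⟨hθ0.1.le, hθ0.2.le⟩
    have ii1 : ∀ a b : ℝ, s ≤ a → a ≤ b → b ≤ t →
        IntervalIntegrable (fun θ => L (ξ1 θ) θ (deriv ξ1 θ)) volume a b :=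
      fun a b h1 h2 h3 => (hF1.mono_set
        (by rw [uIcc_of_le h2]; exact Icc_subset_Icc h1 h3)).intervalIntegrable
    have ii2 : ∀ a b : ℝ, s ≤ a → a ≤ b → b ≤ t →
        IntervalIntegrable (fun θ => L (ξ2 θ) θ (deriv ξ2 θ)) volume a b :=
      fun a b h1 h2 h3 => (hF2.mono_set
        (by rw [uIcc_of_le h2]; exact Icc_subset_Icc h1 h3)).intervalIntegrable
    set A1a := ∫ θ in s..θ0, L (ξ1 θ) θ (deriv ξ1 θ) with hA1a
    set A1b := ∫ θ in θ0..t, L (ξ1 θ) θ (deriv ξ1 θ) with hA1b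
    set A2a := ∫ θ in s..θ0, L (ξ2 θ) θ (deriv ξ2 θ) with hA2a
    set A2b := ∫ θ in θ0..t, L (ξ2 θ) θ (deriv ξ2 θ) with hA2b
    have split1 : pathAction L s t ξ1 (deriv ξ1) = A1a + A1b :=
      (intervalIntegral.integral_add_adjacent_intervals
        (ii1 s θ0 le_rfl hθ0.1.le hθ0.2.le) (ii1 θ0 t hθ0.1.le hθ0.2.le le_rfl)).symm
    have split2 : pathAction L s t ξ2 (deriv ξ2) = A2a + A2b :=
      (intervalIntegral.integral_add_adjacent_intervals
        (ii2 s θ0 le_rfl hθ0.1.le hθ0.2.le) (ii2 θ0 t hθ0.1.le hθ0.2.le le_rfl)).symm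
    -- glued paths
    have hadmη : AdmissiblePath s t y2 x (fun θ => if θ ≤ θ0 then ξ2 θ else ξ1 θ)
        (fun θ => if θ ≤ θ0 then deriv ξ2 θ else deriv ξ1 θ) :=
      glue_admissible hθ0.1.le hθ0.2 hmax2.1 hmax1.1 hval.symm
    have hadmη' : AdmissiblePath s t y1 x (fun θ => if θ ≤ θ0 then ξ1 θ else ξ2 θ)
        (fun θ => if θ ≤ θ0 then deriv ξ1 θ else deriv ξ2 θ) :=
      glue_admissible hθ0.1.le hθ0.2 hmax1.1 hmax2.1 hval
    have hactη : pathAction L s t (fun θ => if θ ≤ θ0 then ξ2 θ else ξ1 θ)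
        (fun θ => if θ ≤ θ0 then deriv ξ2 θ else deriv ξ1 θ) = A2a + A1b :=
      glue_action hθ0.1.le hθ0.2.le hF2 hF1
    have hactη' : pathAction L s t (fun θ => if θ ≤ θ0 then ξ1 θ else ξ2 θ)
        (fun θ => if θ ≤ θ0 then deriv ξ1 θ else deriv ξ2 θ) = A1a + A2b :=
      glue_action hθ0.1.le hθ0.2.le hF1 hF2
    have h1 := hmax2.2 _ _ hadmη
    have h2 := hmax1.2 _ _ hadmη'
    rw [hactη, split2] at h1
    rw [hactη', split1] at h2
    -- the glued path η is a maximizer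
    have hmaxη : ∀ η0 η0', AdmissiblePath s t y2 x η0 η0' →
        pathAction L s t η0 η0' ≤ pathAction L s t
          (fun θ => if θ ≤ θ0 then ξ2 θ else ξ1 θ)
          (fun θ => if θ ≤ θ0 then deriv ξ2 θ else deriv ξ1 θ) := by
      intro η0 η0' hadm
      have := hmax2.2 η0 η0' hadm
      rw [hactη, split2] at *
      linarith
    obtain ⟨ζ, hζC2, hζEL, hζeq⟩ := hreg y2 x _ _ hadmη hmaxη
    -- ζ agrees with ξ2 on [s,θ0] and with ξ1 on [θ0,t]
    have heqL : EqOn ζ ξ2 (Icc s θ0) := by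
      intro θ hθ
      rw [hζeq θ ⟨hθ.1, hθ.2.trans hθ0.2.le⟩]
      exact if_pos hθ.2
    have heqR : EqOn ζ ξ1 (Icc θ0 t) := by
      intro θ hθ
      rw [hζeq θ ⟨hθ0.1.le.trans hθ.1, hθ.2⟩]
      by_cases h : θ ≤ θ0
      · rw [if_pos h]
        have : θ = θ0 := le_antisymm h hθ.1
        rw [this, ← hval]
      · exact if_neg h
    have hd2 : deriv ζ θ0 = deriv ξ2 θ0 :=
      deriv_eq_of_eqOn_Icc hθ0.1 ⟨hθ0.1.le, le_rfl⟩ heqL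
        (hζC2.1 θ0 hθ0m) (hξ2C2.1 θ0 hθ0m)
    have hd1 : deriv ζ θ0 = deriv ξ1 θ0 :=
      deriv_eq_of_eqOn_Icc hθ0.2 ⟨le_rfl, hθ0.2.le⟩ heqR
        (hζC2.1 θ0 hθ0m) (hξ1C2.1 θ0 hθ0m)
    exact key1 θ0 hθ0m hval (by rw [← hd1, hd2])
  -- ordering on [s,t)
  have horder : ∀ θ ∈ Ico s t, ξ1 θ < ξ2 θ := by
    intro θ hθ
    rcases eq_or_lt_of_le hθ.1 with rfl | hsθ
    · rw [hξ1s, hξ2s]; exact hy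
    · rcases lt_trichotomy (ξ1 θ) (ξ2 θ) with h | h | h
      · exact h
      · exact absurd h (key2 θ ⟨hsθ, hθ.2⟩)
      · exfalso
        -- IVT on g = ξ2 - ξ1 on [s,θ]
        have hcg : ContinuousOn (fun u => ξ2 u - ξ1 u) (Icc s θ) :=
          (hcξ2.mono (Icc_subset_Icc le_rfl hθ.2.le)).sub
            (hcξ1.mono (Icc_subset_Icc le_rfl hθ.2.le))
        have h0 : (0 : ℝ) ∈ Ioo (ξ2 θ - ξ1 θ) (ξ2 s - ξ1 s) := by
          constructor
          · linarith
          · rw [hξ1s, hξ2s]; linarith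
        obtain ⟨c, hc, hc0⟩ := intermediate_value_Ioo' hsθ.le hcg h0
        have hc0' : ξ2 c - ξ1 c = 0 := hc0
        exact key2 c ⟨hc.1, hc.2.trans_le hθ.2.le⟩ (by linarith)
  -- derivative at t
  have hne : deriv ξ1 t ≠ deriv ξ2 t := key1 t hmemt (by rw [hξ1t, hξ2t])
  have hd : HasDerivAt (fun θ => ξ2 θ - ξ1 θ) (deriv ξ2 t - deriv ξ1 t) t :=
    (hξ2C2.1 t hmemt).sub (hξ1C2.1 t hmemt)
  have hle : deriv ξ2 t - deriv ξ1 t ≤ 0 := by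
    have hdiff : Iio t \ {t} = Iio t := diff_singleton_eq_self (by simp)
    have hslope : Filter.Tendsto (slope (fun θ => ξ2 θ - ξ1 θ) t)
        (nhdsWithin t (Iio t)) (nhds (deriv ξ2 t - deriv ξ1 t)) := by
      have := hasDerivWithinAt_iff_tendsto_slope.1 (hd.hasDerivWithinAt (s := Iio t))
      rwa [hdiff] at this
    refine le_of_tendsto hslope ?_
    have hmem : Ioo s t ∈ nhdsWithin t (Iio t) :=
      Ioo_mem_nhdsLT_of_mem ⟨hst, le_rfl⟩
    filter_upwards [hmem] with u hu
    have hpos : 0 < ξ2 u - ξ1 u := sub_pos.2 (horder u ⟨hu.1.le, hu.2⟩)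
    have hneg : u - t < 0 := sub_neg.2 hu.2
    have hft : ξ2 t - ξ1 t = 0 := by rw [hξ1t, hξ2t]; ring
    rw [slope_def_field]
    exact div_nonpos_of_nonneg_of_nonpos (by linarith) (by linarith)
  have hder_lt : deriv ξ2 t < deriv ξ1 t := by
    rcases lt_or_eq_of_le hle with h | h
    · linarith
    · exact absurd (by linarith : deriv ξ1 t = deriv ξ2 t) hne
  -- strict antitonicity of L_v
  have hLv : ∀ w : ℝ, DifferentiableAt ℝ (fun w => L x t w) w := by
    intro w
    have : ContDiff ℝ 2 (fun w : ℝ => L x t w) :=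
      hL.comp (contDiff_const.prodMk (contDiff_const.prodMk contDiff_id))
    exact (this.differentiable (by norm_num)).differentiableAt
  have hanti := (hconc x t).strictAntiOn_deriv (fun w _ => hLv w)
  exact ⟨horder, hder_lt,
    hanti (mem_univ _) (mem_univ _) hder_lt⟩
end

section
/- Let L(x,θ,v) be C² on ℝ×[s,T]×ℝ, strictly concave in v, and suppose positive constants c₀,c₁,c₂ exist with: −c₀+c₂v² ≤ −L ≤ c₀+c₁v², −c₀+c₂|v| ≤ |L_v| ≤ c₀+c₁|v|, and |L_{xv}| + |L_{xx}| ≤ c₁; let H(x,θ,p) := sup_v(L(x,θ,v) − pv) be the associated Hamiltonian and assume |H_x| + |H_{xρ}| ≤ c₁ and −c₀+c₂|H_ρ(x,θ,ρ)| ≤ |ρ| ≤ c₀+c₁|H_ρ(x,θ,ρ)|. Then for every s < T and δ ∈ (0,1) there exist positive constants C₀ = C₀(s,δ,T) and C₁ = C₁(s,δ,T) with the following property: for every t ∈ (s,T], every x with |x| ≥ C₀, every y with |y| ≤ (1−δ)|x|, and every C² maximizing path ξ of the action from (y,s) to (x,t) satisfying the Euler–Lagrange equation, the terminal momentum p :=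 L_v(x,t,ξ̇(t)) satisfies x·p < 0 and |p| ≥ C₁|x|. -/
open MeasureTheory Set

section Aux

lemma aux_deriv_contDiff {f : ℝ → ℝ} (hf : ContDiff ℝ 2 f) : ContDiff ℝ 1 (deriv f) := by
  have h : ContDiff ℝ ((1 : ℕ) + 1) f := by exact_mod_cast hf
  exact (contDiff_succ_iff_deriv.mp h).2.2

lemma aux_exists_diffpt {G : ℝ → ℝ} (hG : ConvexOn ℝ univ G)
    (hGbd : ∀ R : ℝ, ∃ M, ∀ z : ℝ, |z| < R → |G z| ≤ M)
    {l r : ℝ} (hlr : l < r) : ∃ z ∈ Ioo l r, DifferentiableAt ℝ G z := by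
  set R : ℝ := max |l| |r| + 1 with hR
  obtain ⟨M, hM⟩ := hGbd (R + 1)
  have hball : ConvexOn ℝ (Metric.ball (0:ℝ) (R+1)) G :=
    hG.subset (subset_univ _) (convex_ball _ _)
  have him : Bornology.IsBounded (G '' Metric.ball (0:ℝ) (R+1)) := by
    rw [isBounded_iff_forall_norm_le]
    refine ⟨M, ?_⟩
    rintro _ ⟨z, hz, rfl⟩
    simp only [Metric.mem_ball, Real.dist_eq, sub_zero] at hz
    simpa [Real.norm_eq_abs] using hM z hz
  obtain ⟨K, hlip⟩ := hball.exists_lipschitzOnWith_of_isBounded (by linarith : R < R + 1) him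
  have hae := hlip.ae_differentiableWithinAt_of_mem (μ := volume)
  have hsub : Ioo l r ⊆ Metric.ball (0:ℝ) R := by
    intro z hz
    simp only [Metric.mem_ball, Real.dist_eq, sub_zero]
    have h1 : z ≤ max |l| |r| := le_trans (le_of_lt hz.2) (le_trans (le_abs_self r) (le_max_right _ _))
    have h2 : -(max |l| |r|) ≤ z := by
      have := neg_abs_le l
      have h3 : -(max |l| |r|) ≤ -|l| := neg_le_neg (le_max_left _ _)
      linarith [hz.1]
    rw [abs_lt]; constructor <;> [linarith; linarith]
  by_contra hcon
  push_neg at hcon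
  have hnull : Ioo l r ⊆ {z : ℝ | ¬ (z ∈ Metric.ball (0:ℝ) R →
      DifferentiableWithinAt ℝ G (Metric.ball (0:ℝ) R) z)} := by
    intro z hz
    simp only [mem_setOf_eq, Classical.not_imp]
    refine ⟨hsub hz, fun hd => hcon z hz ?_⟩
    exact hd.differentiableAt (Metric.isOpen_ball.mem_nhds (hsub hz))
  have h0 : volume (Ioo l r) = 0 := measure_mono_null hnull (ae_iff.1 hae)
  rw [Real.volume_Ioo] at h0
  simp only [ENNReal.ofReal_eq_zero] at h0
  linarith


set_option maxHeartbeats 1000000 in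
lemma key_Lx {L H : ℝ → ℝ → ℝ → ℝ} {c0 c1 c2 : ℝ}
    (hc0 : 0 < c0) (hc1 : 0 < c1) (hc2 : 0 < c2)
    (hL : ContDiff ℝ 2 (fun p : ℝ × ℝ × ℝ => L p.1 p.2.1 p.2.2))
    (hconc : ∀ a θ, StrictConcaveOn ℝ univ (fun w => L a θ w))
    (hL1 : ∀ a θ w, -c0 + c2 * w ^ 2 ≤ -(L a θ w) ∧ -(L a θ w) ≤ c0 + c1 * w ^ 2)
    (hL3 : ∀ a θ w, |deriv (fun z => deriv (fun u => L z θ u) w) a|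
      + |deriv (fun z => deriv (fun z' => L z' θ w) z) a| ≤ c1)
    (hH : ∀ a θ p, IsLUB (Set.range fun w => L a θ w - p * w) (H a θ p))
    (hH1 : ∀ a θ p, |deriv (fun z => H z θ p) a|
      + |deriv (fun z => deriv (fun q => H z θ q) p) a| ≤ c1)
    (a θ w : ℝ) : |deriv (fun z => L z θ w) a| ≤ c1 := by
  have hLv : ContDiff ℝ 2 (fun u => L a θ u) :=
    hL.comp ((contDiff_const (c := a)).prodMk ((contDiff_const (c := θ)).prodMk contDiff_id))
  have hgd : Differentiable ℝ (fun u => L a θ u) := hLv.differentiable two_ne_zero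
  set p : ℝ := deriv (fun u => L a θ u) w with hp
  have hgw : HasDerivAt (fun u => L a θ u) p w := by rw [hp]; exact (hgd w).hasDerivAt
  have hcc : ConcaveOn ℝ univ (fun u => L a θ u) := (hconc a θ).concaveOn
  -- step A : w maximizes u ↦ L a θ u - p u
  have hmax : ∀ u, L a θ u - p * u ≤ L a θ w - p * w := by
    intro u
    rcases lt_trichotomy u w with h | h | h
    · have hs := hcc.le_slope_of_hasDerivAt (mem_univ u) (mem_univ w) h hgw
      rw [slope_def_field] at hs
      have hwu : (0:ℝ) < w - u := by linarith
      rw [le_div_iff₀ hwu] at hs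
      nlinarith
    · rw [h]
    · have hs := hcc.slope_le_of_hasDerivAt (mem_univ w) (mem_univ u) h hgw
      rw [slope_def_field] at hs
      have huw : (0:ℝ) < u - w := by linarith
      rw [div_le_iff₀ huw] at hs
      nlinarith
  -- step B
  have hHval : H a θ p = L a θ w - p * w := by
    have h1 : L a θ w - p * w ≤ H a θ p := (hH a θ p).1 ⟨w, rfl⟩
    have h2 : H a θ p ≤ L a θ w - p * w := (hH a θ p).2 (by rintro zz ⟨u, rfl⟩; exact hmax u)
    linarith
  -- step C
  have hHge : ∀ z, L z θ w - p * w ≤ H z θ p := fun z => (hH z θ p).1 ⟨w, rfl⟩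
  -- crude global bounds on H
  have hHub : ∀ z, H z θ p ≤ c0 + p^2/(4*c2) := by
    intro z
    refine (hH z θ p).2 ?_
    rintro zz ⟨u, rfl⟩
    have h1 := (hL1 z θ u).1
    have hr : (4*c2) * (p^2/(4*c2)) = p^2 := by field_simp
    nlinarith [sq_nonneg (2*c2*u + p)]
  have hHlb : ∀ z, -c0 ≤ H z θ p := by
    intro z
    have h := (hH z θ p).1 ⟨0, rfl⟩
    have h2 := (hL1 z θ 0).2
    simp only [mul_zero, sub_zero] at h
    nlinarith
  -- family of convex functions
  have hfam : ∀ w' : ℝ, ConvexOn ℝ univ (fun z => L z θ w' - p * w' + c1/2 * z^2) := by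
    intro w'
    have hC : ContDiff ℝ 2 (fun z => L z θ w') :=
      hL.comp (contDiff_id.prodMk (contDiff_const (c := (θ, w'))))
    have hd1 : Differentiable ℝ (fun z => L z θ w') := hC.differentiable two_ne_zero
    have hd2 : Differentiable ℝ (deriv (fun z => L z θ w')) :=
      (aux_deriv_contDiff hC).differentiable one_ne_zero
    have h1 : ∀ z : ℝ, HasDerivAt (fun z => L z θ w' - p * w' + c1/2 * z^2)
        (deriv (fun z' => L z' θ w') z + c1 * z) z := by
      intro z
      have ha : HasDerivAt (fun z' => L z' θ w') (deriv (fun z' => L z' θ w') z) z :=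
        (hd1 z).hasDerivAt
      have hb : HasDerivAt (fun z : ℝ => c1/2 * z^2) (c1 * z) z := by
        have h := (hasDerivAt_pow 2 z).const_mul (c1/2)
        refine h.congr_deriv ?_
        push_cast
        ring
      exact (ha.sub_const (p * w')).add hb
    have h2 : ∀ z : ℝ, HasDerivAt (fun z => deriv (fun z' => L z' θ w') z + c1 * z)
        (deriv (fun z => deriv (fun z' => L z' θ w') z) z + c1) z := by
      intro z
      have ha : HasDerivAt (fun z => deriv (fun z' => L z' θ w') z)
          (deriv (fun z => deriv (fun z' => L z' θ w') z) z) z := (hd2 z).hasDerivAt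
      have hb : HasDerivAt (fun z : ℝ => c1 * z) c1 z := by
        simpa using (hasDerivAt_id z).const_mul c1
      exact ha.add hb
    refine convexOn_of_hasDerivWithinAt2_nonneg (f' := fun z => deriv (fun z' => L z' θ w') z + c1 * z) (f'' := fun z => deriv (fun z => deriv (fun z' => L z' θ w') z) z + c1) convex_univ ?_ ?_ ?_ ?_
    · exact (Differentiable.continuous (fun z => (h1 z).differentiableAt)).continuousOn
    · intro z _
      exact (h1 z).hasDerivWithinAt
    · intro z _
      exact (h2 z).hasDerivWithinAt
    · intro z _
      show (0:ℝ) ≤ deriv (fun z => deriv (fun z' => L z' θ w') z) z + c1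
      have h3 := hL3 z θ w'
      have h4 : |deriv (fun z => deriv (fun z' => L z' θ w') z) z| ≤ c1 :=
        le_trans (le_add_of_nonneg_left (abs_nonneg _)) h3
      have := abs_le.1 h4
      linarith [this.1]
  -- G = H + c1/2 z^2 is convex
  have hGconv : ConvexOn ℝ univ (fun z => H z θ p + c1/2 * z^2) := by
    refine ⟨convex_univ, ?_⟩
    intro u _ v _ α β hα hβ hαβ
    simp only [smul_eq_mul]
    have hHle : H (α*u+β*v) θ p + c1/2 * (α*u+β*v)^2
        ≤ α * (H u θ p + c1/2*u^2) + β * (H v θ p + c1/2*v^2) := by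
      have hub : H (α*u+β*v) θ p ≤ α * (H u θ p + c1/2*u^2) + β * (H v θ p + c1/2*v^2)
          - c1/2 * (α*u+β*v)^2 := by
        refine (hH _ θ p).2 ?_
        rintro zz ⟨w', rfl⟩
        show L (α*u+β*v) θ w' - p * w' ≤ _
        have hcv := (hfam w').2 (mem_univ u) (mem_univ v) hα hβ hαβ
        simp only [smul_eq_mul] at hcv
        have hb1 : α * (L u θ w' - p * w') ≤ α * H u θ p :=
          mul_le_mul_of_nonneg_left ((hH u θ p).1 ⟨w', rfl⟩) hα
        have hb2 : β * (L v θ w' - p * w') ≤ β * H v θ p :=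
          mul_le_mul_of_nonneg_left ((hH v θ p).1 ⟨w', rfl⟩) hβ
        have hpw : α * (p * w') + β * (p * w') = p * w' := by
          rw [← add_mul, hαβ, one_mul]
        ring_nf at hcv hb1 hb2 hpw ⊢
        linarith
      linarith
    exact hHle
  -- boundedness of G on balls
  have hGbd : ∀ R : ℝ, ∃ M, ∀ z : ℝ, |z| < R → |H z θ p + c1/2 * z^2| ≤ M := by
    intro R
    refine ⟨c0 + p^2/(4*c2) + c1/2 * R^2, fun z hz => ?_⟩
    have h1 := hHub z
    have h2 := hHlb z
    have h3 : 0 ≤ p^2/(4*c2) := by positivity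
    have h4 : z^2 ≤ R^2 := by nlinarith [abs_nonneg z, sq_abs z]
    rw [abs_le]
    constructor <;> nlinarith [sq_nonneg z]
  -- almost-Lipschitz bound for H in the x-variable
  have hF1 : ∀ b : ℝ, |deriv (fun z => H z θ p) b| ≤ c1 := fun b =>
    le_trans (le_add_of_nonneg_right (abs_nonneg _)) (hH1 b θ p)
  have hder : ∀ z : ℝ, DifferentiableAt ℝ (fun z => H z θ p + c1/2 * z^2) z →
      -c1 + c1*z ≤ deriv (fun z => H z θ p + c1/2 * z^2) z ∧
      deriv (fun z => H z θ p + c1/2 * z^2) z ≤ c1 + c1*z := by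
    intro z hdz
    have hq : HasDerivAt (fun z : ℝ => c1/2 * z^2) (c1 * z) z := by
      have h := (hasDerivAt_pow 2 z).const_mul (c1/2)
      refine h.congr_deriv ?_
      push_cast; ring
    have hdF : DifferentiableAt ℝ (fun z => H z θ p) z := by
      have heq : (fun z : ℝ => H z θ p) = fun z => (H z θ p + c1/2*z^2) - c1/2*z^2 := by
        funext t; ring
      rw [heq]
      exact hdz.sub hq.differentiableAt
    have hGd : HasDerivAt (fun z => H z θ p + c1/2 * z^2)
        (deriv (fun z => H z θ p) z + c1 * z) z := hdF.hasDerivAt.add hq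
    rw [hGd.deriv]
    have hb := abs_le.1 (hF1 z)
    constructor <;> linarith [hb.1, hb.2]
  have key2 : ∀ u v : ℝ, u < v →
      H v θ p - H u θ p ≤ c1*(v-u) + c1/2*(v-u)^2 ∧
      H u θ p - H v θ p ≤ c1*(v-u) + c1/2*(v-u)^2 := by
    intro u v huv
    have hvu : (0:ℝ) < v - u := by linarith
    have hX : (0:ℝ) < c1 * (v - u) + 1 := by positivity
    constructor
    · refine le_of_forall_pos_le_add (fun ε hε => ?_)
      set d := ε / (c1 * (v - u) + 1) with hd
      have hd0 : 0 < d := by positivity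
      obtain ⟨z, hz, hdz⟩ := aux_exists_diffpt hGconv hGbd (show v < v + d by linarith)
      have hs1 := hGconv.slope_mono_adjacent (mem_univ u) (mem_univ z) huv hz.1
      have hs2 := hGconv.slope_le_deriv (mem_univ v) (mem_univ z) hz.1 hdz
      rw [slope_def_field] at hs2
      have hub := (hder z hdz).2
      have hA : ((H z θ p + c1/2*z^2) - (H v θ p + c1/2*v^2)) / (z - v) ≤ c1 + c1*z :=
        le_trans hs2 hub
      have hB : ((H v θ p + c1/2*v^2) - (H u θ p + c1/2*u^2)) / (v - u) ≤ c1 + c1*z :=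
        le_trans hs1 hA
      rw [div_le_iff₀ hvu] at hB
      have hdb : c1 * (v - u) * d ≤ ε := by
        rw [hd, ← mul_div_assoc]
        rw [div_le_iff₀ hX]
        ring_nf
        nlinarith [hε, mul_pos hc1 hvu]
      have hz2 : (c1*z)*(v-u) ≤ (c1*(v+d))*(v-u) := by
        have : c1*z ≤ c1*(v+d) := by nlinarith [hz.2]
        exact mul_le_mul_of_nonneg_right this hvu.le
      nlinarith [hB, hz2, hdb]
    · refine le_of_forall_pos_le_add (fun ε hε => ?_)
      set d := ε / (c1 * (v - u) + 1) with hd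
      have hd0 : 0 < d := by positivity
      obtain ⟨z, hz, hdz⟩ := aux_exists_diffpt hGconv hGbd (show u - d < u by linarith)
      have hs1 := hGconv.deriv_le_slope (mem_univ z) (mem_univ u) hz.2 hdz
      rw [slope_def_field] at hs1
      have hs2 := hGconv.slope_mono_adjacent (mem_univ z) (mem_univ v) hz.2 huv
      have hlb := (hder z hdz).1
      have hA : -c1 + c1*z ≤ ((H u θ p + c1/2*u^2) - (H z θ p + c1/2*z^2)) / (u - z) :=
        le_trans hlb hs1
      have hB : -c1 + c1*z ≤ ((H v θ p + c1/2*v^2) - (H u θ p + c1/2*u^2)) / (v - u) :=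
        le_trans hA hs2
      rw [le_div_iff₀ hvu] at hB
      have hdb : c1 * (v - u) * d ≤ ε := by
        rw [hd, ← mul_div_assoc]
        rw [div_le_iff₀ hX]
        ring_nf
        nlinarith [hε, mul_pos hc1 hvu]
      have hz2 : (c1*(u-d))*(v-u) ≤ (c1*z)*(v-u) := by
        have : c1*(u-d) ≤ c1*z := by nlinarith [hz.1]
        exact mul_le_mul_of_nonneg_right this hvu.le
      nlinarith [hB, hz2, hdb]
  -- final squeeze
  have hfC : ContDiff ℝ 2 (fun z => L z θ w) :=
    hL.comp (contDiff_id.prodMk (contDiff_const (c := (θ, w))))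
  have hfd : Differentiable ℝ (fun z => L z θ w) := hfC.differentiable two_ne_zero
  have hfa : HasDerivAt (fun z => L z θ w) (deriv (fun z => L z θ w) a) a := (hfd a).hasDerivAt
  have htend := hasDerivAt_iff_tendsto_slope.1 hfa
  have hdiff : ∀ z, L z θ w - L a θ w ≤ H z θ p - H a θ p := by
    intro z
    have := hHge z
    rw [hHval]
    linarith
  rw [abs_le]
  constructor
  · refine le_of_forall_pos_le_add (fun ε hε => ?_)
    have hε' : 0 < 2*ε/c1 := by positivity
    have htl : Filter.Tendsto (slope (fun z => L z θ w) a) (nhdsWithin a (Iio a))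
        (nhds (deriv (fun z => L z θ w) a)) :=
      htend.mono_left (nhdsWithin_mono a (fun z hz => (mem_compl_singleton_iff).2 (ne_of_lt hz)))
    have hm : -c1 - ε ≤ deriv (fun z => L z θ w) a := by
      refine ge_of_tendsto htl ?_
      filter_upwards [Ioo_mem_nhdsLT_of_mem (show a ∈ Ioc (a - 2*ε/c1) a from ⟨by linarith, le_refl a⟩)]
        with z hz
      rw [slope_def_field]
      have h1 : L z θ w - L a θ w ≤ c1*(a-z) + c1/2*(a-z)^2 :=
        le_trans (hdiff z) ((key2 z a hz.2).2)
      have hza : z - a < 0 := by linarith [hz.2]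
      have haz : 0 < a - z := by linarith
      have h2 : c1/2*(a-z) ≤ ε := by
        rw [div_mul_eq_mul_div, div_le_iff₀ (by norm_num : (0:ℝ) < 2)]
        have := hz.1
        calc c1*(a-z) ≤ c1*(2*ε/c1) := by
              apply mul_le_mul_of_nonneg_left _ hc1.le
              linarith
          _ = 2*ε := by field_simp
          _ ≤ ε*2 := by linarith
      have h3 : c1/2*(a-z)^2 ≤ ε*(a-z) := by
        have := mul_le_mul_of_nonneg_right h2 haz.le
        calc c1/2*(a-z)^2 = (c1/2*(a-z))*(a-z) := by ring
          _ ≤ ε*(a-z) := this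
      rw [le_div_iff_of_neg hza]
      nlinarith [h1, h3]
    linarith
  · refine le_of_forall_pos_le_add (fun ε hε => ?_)
    have hε' : 0 < 2*ε/c1 := by positivity
    have htr : Filter.Tendsto (slope (fun z => L z θ w) a) (nhdsWithin a (Ioi a))
        (nhds (deriv (fun z => L z θ w) a)) :=
      htend.mono_left (nhdsWithin_mono a (fun z hz => (mem_compl_singleton_iff).2 (ne_of_gt hz)))
    refine le_of_tendsto htr ?_
    filter_upwards [Ioo_mem_nhdsGT_of_mem (show a ∈ Ico a (a + 2*ε/c1) from ⟨le_refl a, by linarith⟩)]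
      with z hz
    rw [slope_def_field]
    have h1 : L z θ w - L a θ w ≤ c1*(z-a) + c1/2*(z-a)^2 :=
      le_trans (hdiff z) ((key2 a z hz.1).1)
    have hza : 0 < z - a := by linarith [hz.1]
    have h2 : c1/2*(z-a) ≤ ε := by
      rw [div_mul_eq_mul_div, div_le_iff₀ (by norm_num : (0:ℝ) < 2)]
      calc c1*(z-a) ≤ c1*(2*ε/c1) := by
            apply mul_le_mul_of_nonneg_left _ hc1.le
            linarith [hz.2]
        _ = 2*ε := by field_simp
        _ ≤ ε*2 := by linarith
    have h3 : c1/2*(z-a)^2 ≤ ε*(z-a) := by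
      have := mul_le_mul_of_nonneg_right h2 hza.le
      calc c1/2*(z-a)^2 = (c1/2*(z-a))*(z-a) := by ring
        _ ≤ ε*(z-a) := this
    rw [div_le_iff₀ hza]
    nlinarith [h1, h3]


end Aux

set_option maxHeartbeats 1000000 in
/-- Proposition 5.2(iii): for `|x|` large and `|y| ≤ (1−δ)|x|`, the terminal
momentum `p = L_v(x,t,ξ̇(t))` of any maximizing path from `(y,s)` to `(x,t)`
has sign opposite to `x` and magnitude at least `C₁|x|`. -/
theorem stmt12
    (L H : ℝ → ℝ → ℝ → ℝ) (s T c0 c1 c2 : ℝ)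
    (hsT : s < T)
    (hc0 : 0 < c0) (hc1 : 0 < c1) (hc2 : 0 < c2)
    (hL : ContDiff ℝ 2 (fun p : ℝ × ℝ × ℝ => L p.1 p.2.1 p.2.2))
    (hconc : ∀ a θ, StrictConcaveOn ℝ univ (fun w => L a θ w))
    (hL1 : ∀ a θ w, -c0 + c2 * w ^ 2 ≤ -(L a θ w) ∧ -(L a θ w) ≤ c0 + c1 * w ^ 2)
    (hL2 : ∀ a θ w, -c0 + c2 * |w| ≤ |deriv (fun u => L a θ u) w| ∧
      |deriv (fun u => L a θ u) w| ≤ c0 + c1 * |w|)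
    (hL3 : ∀ a θ w, |deriv (fun z => deriv (fun u => L z θ u) w) a|
      + |deriv (fun z => deriv (fun z' => L z' θ w) z) a| ≤ c1)
    (hH : ∀ a θ p, IsLUB (Set.range fun w => L a θ w - p * w) (H a θ p))
    (hH1 : ∀ a θ p, |deriv (fun z => H z θ p) a|
      + |deriv (fun z => deriv (fun q => H z θ q) p) a| ≤ c1)
    (hH2 : ∀ a θ r, -c0 + c2 * |deriv (fun q => H a θ q) r| ≤ |r| ∧
      |r| ≤ c0 + c1 * |deriv (fun q => H a θ q) r|) :
    ∀ δ ∈ Ioo (0 : ℝ) 1, ∃ C0 : ℝ, 0 < C0 ∧ ∃ C1 : ℝ, 0 < C1 ∧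
      ∀ t ∈ Ioc s T, ∀ x y : ℝ, C0 ≤ |x| → |y| ≤ (1 - δ) * |x| →
        ∀ ξ : ℝ → ℝ, C2On s t ξ → IsMaximizer L s t y x ξ (deriv ξ) →
          SatisfiesEL L s t ξ →
          x * deriv (fun w => L x t w) (deriv ξ t) < 0 ∧
          C1 * |x| ≤ |deriv (fun w => L x t w) (deriv ξ t)| := by
  intro δ hδ
  obtain ⟨hδ0, hδ1⟩ := hδ
  set T' : ℝ := T - s with hT'def
  have hT' : 0 < T' := by rw [hT'def]; linarith
  set V : ℝ := 2*c0/c2 + 1 with hVdef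
  have hV : 0 < V := by rw [hVdef]; positivity
  set C1 : ℝ := c2*δ/(2*T') with hC1def
  have hC1 : 0 < C1 := by rw [hC1def]; positivity
  set C0 : ℝ := (2*c0 + 2*c1*T' + c1*V + 1)/C1 with hC0def
  have hC0 : 0 < C0 := by rw [hC0def]; positivity
  refine ⟨C0, hC0, C1, hC1, ?_⟩
  intro t ht x y hxC0 hyx ξ hC2 hmax hEL
  obtain ⟨hst, htT⟩ := ht
  have hstle : s ≤ t := hst.le
  have htmem : t ∈ Icc s t := ⟨hstle, le_refl t⟩
  have hts : t - s ≤ T' := by rw [hT'def]; linarith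
  obtain ⟨⟨hξs, hξt, hrep, hint1, hint2⟩, _⟩ := hmax
  have hkey : ∀ a θ w, |deriv (fun z => L z θ w) a| ≤ c1 :=
    key_Lx hc0 hc1 hc2 hL hconc hL1 hL3 hH hH1
  set P : ℝ → ℝ := fun u => deriv (fun w => L (ξ u) u w) (deriv ξ u) with hPdef
  have hEL' : ∀ θ ∈ Icc s t, HasDerivAt P (deriv (fun a => L a θ (deriv ξ θ)) (ξ θ)) θ := hEL
  have hPlip : ∀ θ ∈ Icc s t, |P t - P θ| ≤ c1 * (t - θ) := by
    intro θ hθ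
    have hmv := (convex_Icc s t).norm_image_sub_le_of_norm_hasDerivWithin_le
      (f := P) (f' := fun θ => deriv (fun a => L a θ (deriv ξ θ)) (ξ θ))
      (fun u hu => (hEL' u hu).hasDerivWithinAt)
      (fun u hu => by simpa [Real.norm_eq_abs] using hkey (ξ u) u (deriv ξ u)) hθ htmem
    rw [Real.norm_eq_abs, Real.norm_eq_abs] at hmv
    rwa [abs_of_nonneg (by linarith [hθ.2] : (0:ℝ) ≤ t - θ)] at hmv
  have hvel1 : ∀ θ ∈ Icc s t, c2 * |deriv ξ θ| ≤ c0 + |P θ| := by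
    intro θ hθ
    have h : -c0 + c2 * |deriv ξ θ| ≤ |P θ| := (hL2 (ξ θ) θ (deriv ξ θ)).1
    linarith
  have hvel2' : ∀ θ ∈ Icc s t, |P θ| ≤ c0 + c1 * |deriv ξ θ| := by
    intro θ hθ
    exact (hL2 (ξ θ) θ (deriv ξ θ)).2
  have hPθ : ∀ θ ∈ Icc s t, |P θ| ≤ |P t| + c1*T' := by
    intro θ hθ
    have h := hPlip θ hθ
    have habs : |P θ| - |P t| ≤ |P θ - P t| := abs_sub_abs_le_abs_sub _ _
    rw [abs_sub_comm] at habs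
    have hc1T : c1*(t-θ) ≤ c1*T' := mul_le_mul_of_nonneg_left (by linarith [hθ.1]) hc1.le
    linarith
  have hxyint : x - y = ∫ u in s..t, deriv ξ u := by
    have h := hrep t htmem
    rw [hξt] at h
    linarith
  set M : ℝ := (c0 + |P t| + c1*T')/c2 with hMdef
  have hM0 : 0 ≤ M := by rw [hMdef]; positivity
  have hbnd : ∀ u ∈ Set.uIoc s t, ‖deriv ξ u‖ ≤ M := by
    intro u hu
    rw [Set.uIoc_of_le hstle] at hu
    have hu' : u ∈ Icc s t := ⟨hu.1.le, hu.2⟩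
    have h1 := hvel1 u hu'
    have h2 := hPθ u hu'
    rw [Real.norm_eq_abs, hMdef]
    rw [le_div_iff₀ hc2]
    nlinarith
  have hIb : |x - y| ≤ M * T' := by
    rw [hxyint]
    have h := intervalIntegral.norm_integral_le_of_norm_le_const hbnd
    rw [Real.norm_eq_abs] at h
    calc |∫ u in s..t, deriv ξ u| ≤ M * |t - s| := h
      _ ≤ M * T' := by
          apply mul_le_mul_of_nonneg_left _ hM0
          rw [abs_of_nonneg (by linarith : (0:ℝ) ≤ t - s)]
          exact hts
  have hdx : δ*|x| ≤ |x - y| := by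
    have h := abs_sub_abs_le_abs_sub x y
    nlinarith
  have hcore : c2*(δ*|x|) ≤ T' * (c0 + |P t| + c1*T') := by
    have h := le_trans hdx hIb
    calc c2*(δ*|x|) ≤ c2*(M*T') := mul_le_mul_of_nonneg_left h hc2.le
      _ = T' * (c0 + |P t| + c1*T') := by rw [hMdef]; field_simp
  have hPt1 : 2*C1*|x| - (c0 + c1*T') ≤ |P t| := by
    have h2 : 2*C1*|x| = c2*(δ*|x|)/T' := by rw [hC1def]; field_simp
    have h3 : c2*(δ*|x|)/T' ≤ c0 + |P t| + c1*T' := by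
      rw [div_le_iff₀ hT']
      nlinarith [hcore]
    rw [h2]
    linarith
  have hnum : 2*c0 + 2*c1*T' + c1*V + 1 ≤ C1*|x| := by
    have h := mul_le_mul_of_nonneg_left hxC0 hC1.le
    rw [hC0def] at h
    have heq : C1*((2*c0 + 2*c1*T' + c1*V + 1)/C1) = 2*c0 + 2*c1*T' + c1*V + 1 := by
      field_simp
    rw [heq] at h
    exact h
  have hmag : C1*|x| ≤ |P t| := by linarith [hPt1, hnum, (mul_pos hc1 hV).le, (mul_pos hc1 hT').le]
  have hPlow : ∀ θ ∈ Icc s t, c0 + c1*V < |P θ| := by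
    intro θ hθ
    have h := hPlip θ hθ
    have habs : |P t| - |P θ| ≤ |P t - P θ| := abs_sub_abs_le_abs_sub _ _
    have hc1T : c1*(t-θ) ≤ c1*T' := mul_le_mul_of_nonneg_left (by linarith [hθ.1]) hc1.le
    linarith [hPt1, hnum, mul_pos hc1 hT', mul_pos hc1 hV]
  have hvel2 : ∀ θ ∈ Icc s t, V < |deriv ξ θ| := by
    intro θ hθ
    have h := hvel2' θ hθ
    have h2 := hPlow θ hθ
    have h3 : c1*V < c1*|deriv ξ θ| := by linarith
    exact (mul_lt_mul_iff_right₀ hc1).1 h3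
  have hcont : ContinuousOn (deriv ξ) (Icc s t) := by
    intro θ hθ
    exact ((hC2.2.1 θ hθ).differentiableAt.continuousAt).continuousWithinAt
  have hne : ∀ θ ∈ Icc s t, deriv ξ θ ≠ 0 := by
    intro θ hθ h0
    have h := hvel2 θ hθ
    rw [h0, abs_zero] at h
    linarith
  have hsign : (∀ θ ∈ Icc s t, 0 < deriv ξ θ) ∨ (∀ θ ∈ Icc s t, deriv ξ θ < 0) := by
    by_contra hcon
    push_neg at hcon
    obtain ⟨⟨θ1, hθ1, hle1⟩, ⟨θ2, hθ2, hle2⟩⟩ := hcon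
    have h1 : deriv ξ θ1 < 0 := lt_of_le_of_ne hle1 (hne θ1 hθ1)
    have h2 : 0 < deriv ξ θ2 := lt_of_le_of_ne hle2 (Ne.symm (hne θ2 hθ2))
    have hsub : Set.uIcc θ1 θ2 ⊆ Icc s t := Set.uIcc_subset_Icc hθ1 hθ2
    have hivt := intermediate_value_uIcc (hcont.mono hsub)
    have h0mem : (0:ℝ) ∈ Set.uIcc (deriv ξ θ1) (deriv ξ θ2) := by
      rw [Set.mem_uIcc]
      left
      exact ⟨h1.le, h2.le⟩
    obtain ⟨θ0, hθ0, hval⟩ := hivt h0mem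
    exact hne θ0 (hsub hθ0) hval
  have hgoal : deriv (fun w => L x t w) (deriv ξ t) = P t := by
    show deriv (fun w => L x t w) (deriv ξ t) = deriv (fun w => L (ξ t) t w) (deriv ξ t)
    rw [hξt]
  rw [hgoal]
  have hx0 : x ≠ 0 := by
    intro h
    rw [h, abs_zero] at hxC0
    linarith
  refine ⟨?_, hmag⟩
  -- sign part
  have hLvC : ContDiff ℝ 2 (fun u => L x t u) :=
    hL.comp ((contDiff_const (c := x)).prodMk ((contDiff_const (c := t)).prodMk contDiff_id))
  have hLvd : Differentiable ℝ (fun u => L x t u) := hLvC.differentiable two_ne_zero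
  have hccx : ConcaveOn ℝ univ (fun u => L x t u) := (hconc x t).concaveOn
  have hq0 : |deriv (fun u => L x t u) 0| ≤ c0 := by
    have := (hL2 x t 0).2
    simpa using this
  have hq0' := abs_le.1 hq0
  have hPtV : c0 + c1*V < |P t| := hPlow t htmem
  have hPteq : P t = deriv (fun u => L x t u) (deriv ξ t) := hgoal.symm
  rcases lt_trichotomy x 0 with hxneg | hx0' | hxpos
  · -- x < 0
    have hyge : (1-δ)*x ≤ y := by
      have h1 : -|y| ≤ y := neg_abs_le y
      have h2 : |x| = -x := abs_of_neg hxneg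
      nlinarith
    have hxyneg : x - y < 0 := by nlinarith
    have hbranch : ∀ θ ∈ Icc s t, deriv ξ θ < 0 := by
      rcases hsign with hpos | hneg
      · exfalso
        have h : 0 ≤ ∫ u in s..t, deriv ξ u :=
          intervalIntegral.integral_nonneg hstle (fun u hu => (hpos u hu).le)
        rw [← hxyint] at h
        linarith
      · exact hneg
    have hdt : deriv ξ t < -V := by
      have h2 := hvel2 t htmem
      have h3 := hbranch t htmem
      rw [abs_of_neg h3] at h2
      linarith
    have hd0 : HasDerivAt (fun u => L x t u) (deriv (fun u => L x t u) 0) 0 :=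
      (hLvd 0).hasDerivAt
    have hdw : HasDerivAt (fun u => L x t u) (deriv (fun u => L x t u) (deriv ξ t)) (deriv ξ t) :=
      (hLvd (deriv ξ t)).hasDerivAt
    have hwneg : deriv ξ t < 0 := by linarith
    have hs1 := hccx.slope_le_of_hasDerivAt (mem_univ (deriv ξ t)) (mem_univ 0) hwneg hdw
    have hs2 := hccx.le_slope_of_hasDerivAt (mem_univ (deriv ξ t)) (mem_univ 0) hwneg hd0
    have hchain : deriv (fun u => L x t u) 0 ≤ deriv (fun u => L x t u) (deriv ξ t) :=
      le_trans hs2 hs1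
    have hPge : -c0 ≤ P t := by
      rw [hPteq]
      linarith [hq0'.1]
    have hPpos : 0 < P t := by
      by_contra hle
      push_neg at hle
      rw [abs_of_nonpos hle] at hPtV
      nlinarith [mul_pos hc1 hV]
    exact mul_neg_of_neg_of_pos hxneg hPpos
  · exact absurd hx0' hx0
  · -- x > 0
    have hyle : y ≤ (1-δ)*x := by
      have h1 : y ≤ |y| := le_abs_self y
      have h2 : |x| = x := abs_of_pos hxpos
      nlinarith
    have hxypos : 0 < x - y := by nlinarith
    have hbranch : ∀ θ ∈ Icc s t, 0 < deriv ξ θ := by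
      rcases hsign with hpos | hneg
      · exact hpos
      · exfalso
        have h : 0 ≤ ∫ u in s..t, -deriv ξ u :=
          intervalIntegral.integral_nonneg hstle (fun u hu => neg_nonneg.2 (hneg u hu).le)
        rw [intervalIntegral.integral_neg] at h
        rw [← hxyint] at h
        linarith
    have hdt : V < deriv ξ t := by
      have h2 := hvel2 t htmem
      have h3 := hbranch t htmem
      rwa [abs_of_pos h3] at h2
    have hd0 : HasDerivAt (fun u => L x t u) (deriv (fun u => L x t u) 0) 0 :=
      (hLvd 0).hasDerivAt
    have hdw : HasDerivAt (fun u => L x t u) (deriv (fun u => L x t u) (deriv ξ t)) (deriv ξ t) :=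
      (hLvd (deriv ξ t)).hasDerivAt
    have hwpos : 0 < deriv ξ t := by linarith
    have hs1 := hccx.slope_le_of_hasDerivAt (mem_univ (0:ℝ)) (mem_univ (deriv ξ t)) hwpos hd0
    have hs2 := hccx.le_slope_of_hasDerivAt (mem_univ (0:ℝ)) (mem_univ (deriv ξ t)) hwpos hdw
    have hchain : deriv (fun u => L x t u) (deriv ξ t) ≤ deriv (fun u => L x t u) 0 :=
      le_trans hs2 hs1
    have hPle : P t ≤ c0 := by
      rw [hPteq]
      linarith [hq0'.2]
    have hPneg : P t < 0 := by
      by_contra hle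
      push_neg at hle
      rw [abs_of_nonneg hle] at hPtV
      nlinarith [mul_pos hc1 hV]
    exact mul_neg_of_pos_of_neg hxpos hPneg
end

section
/- Let g(y₋,y₊) be a nonnegative continuous kernel vanishing unless Y₋ ≤ y₋ ≤ y₊ ≤ Y₊, and let v̂(y₋,y₊) be a bounded continuous function. Then the collision operator Q̂(g) := Q̂⁺(g) − g·Ĵ(g) has vanishing zeroth moment: ∫_{y₋}^∞ [Q̂⁺(g)(y₋,y₊) − g(y₋,y₊)Ĵ(g)(y₋,y₊)]dy₊ = 0 for every y₋. In fact Â(Q̂⁺(g))(y₋) = ∫ g(y₋,y★)Â(v̂g)(y★)dy★ − ∫ (v̂g)(y₋,y★)Â(g)(y★)dy★, and Â(g·Ĵ(g))(y₋) equals the same expression. -/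
open MeasureTheory Set

/-- `Ah k y = ∫_y^∞ k(y,y★) dy★`. -/
noncomputable def Ah (k : ℝ → ℝ → ℝ) (y : ℝ) : ℝ :=
  ∫ ys in Ioi y, k y ys

/-- The gain term `Q̂⁺(g)`. -/
noncomputable def Qh (v g : ℝ → ℝ → ℝ) (ym yp : ℝ) : ℝ :=
  ∫ ys in Ioo ym yp, (v ys yp - v ym ys) * g ym ys * g ys yp

/-- The loss kernel `Ĵ(g)`. -/
noncomputable def Jh (v g : ℝ → ℝ → ℝ) (ym yp : ℝ) : ℝ :=
  (Ah (fun a c => v a c * g a c) yp - Ah (fun a c => v a c * g a c) ym)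
    - v ym yp * (Ah g yp - Ah g ym)

lemma integrable_of_bdd_supp {α : Type*} [MeasurableSpace α] {μ : Measure α}
    {f : α → ℝ} {s : Set α} (hs : MeasurableSet s) (hμ : μ s < ⊤)
    (hm : AEStronglyMeasurable f μ) (C : ℝ)
    (hC : ∀ x, |f x| ≤ C) (h0 : ∀ x ∉ s, f x = 0) :
    Integrable f μ := by
  have hCint : Integrable (s.indicator fun _ => C) μ := by
    rw [integrable_indicator_iff hs]
    exact integrableOn_const hμ.ne
  refine hCint.mono' hm ?_
  filter_upwards with x
  by_cases hx : x ∈ s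
  · simpa [Set.indicator_of_mem hx, Real.norm_eq_abs] using hC x
  · simp [Set.indicator_of_notMem hx, h0 x hx, Real.norm_eq_abs]

lemma abs_setIntegral_le_of_bdd_supp {f : ℝ → ℝ} (a b C : ℝ) (hC0 : 0 ≤ C)
    (hm : AEStronglyMeasurable f volume)
    (hC : ∀ x, |f x| ≤ C) (h0 : ∀ x ∉ Icc a b, f x = 0) (s : Set ℝ) :
    |∫ x in s, f x| ≤ C * (volume (Icc a b)).toReal := by
  have hint : Integrable f volume :=
    integrable_of_bdd_supp measurableSet_Icc measure_Icc_lt_top hm C hC h0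
  have h1 : |∫ x in s, f x| ≤ ∫ x in s, |f x| := by
    simpa [Real.norm_eq_abs] using
      norm_integral_le_integral_norm (μ := volume.restrict s) f
  have h2 : ∫ x in s, |f x| ≤ ∫ x, |f x| :=
    setIntegral_le_integral hint.abs (Filter.Eventually.of_forall fun x => abs_nonneg _)
  have h3 : ∫ x, |f x| ≤ ∫ x, (Icc a b).indicator (fun _ => C) x := by
    refine integral_mono hint.abs ?_ ?_
    · rw [integrable_indicator_iff measurableSet_Icc]
      exact integrableOn_const measure_Icc_lt_top.ne
    · intro x
      by_cases hx : x ∈ Icc a b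
      · simpa [Set.indicator_of_mem hx] using hC x
      · simp [Set.indicator_of_notMem hx, h0 x hx]
  have h4 : ∫ x, (Icc a b).indicator (fun _ => C) x = C * (volume (Icc a b)).toReal := by
    rw [integral_indicator_const C measurableSet_Icc, smul_eq_mul, mul_comm]; rfl
  linarith

/-- The collision operator `Q̂(g) = Q̂⁺(g) − g·Ĵ(g)` has vanishing zeroth moment;
moreover both `Â(Q̂⁺(g))` and `Â(g·Ĵ(g))` equal
`∫ g(y₋,y★)Â(v̂g)(y★)dy★ − ∫ (v̂g)(y₋,y★)Â(g)(y★)dy★`. -/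
theorem stmt14
    (Ym Yp : ℝ) (v g : ℝ → ℝ → ℝ)
    (hg_nonneg : ∀ a c, 0 ≤ g a c)
    (hg_cont : Continuous (fun p : ℝ × ℝ => g p.1 p.2))
    (hg_supp : ∀ a c, ¬ (Ym ≤ a ∧ a ≤ c ∧ c ≤ Yp) → g a c = 0)
    (hv_bdd : ∃ M : ℝ, ∀ a c, |v a c| ≤ M)
    (hv_cont : Continuous (fun p : ℝ × ℝ => v p.1 p.2)) :
    ∀ ym : ℝ,
      (∫ yp in Ioi ym, (Qh v g ym yp - g ym yp * Jh v g ym yp)) = 0 ∧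
      Ah (Qh v g) ym
        = (∫ ys in Ioi ym, g ym ys * Ah (fun a c => v a c * g a c) ys)
          - ∫ ys in Ioi ym, v ym ys * g ym ys * Ah g ys ∧
      Ah (fun a c => g a c * Jh v g a c) ym
        = (∫ ys in Ioi ym, g ym ys * Ah (fun a c => v a c * g a c) ys)
          - ∫ ys in Ioi ym, v ym ys * g ym ys * Ah g ys := by
  classical
  obtain ⟨M0, hM0⟩ := hv_bdd
  set M : ℝ := max M0 0 with hMdef
  have hM : ∀ a c, |v a c| ≤ M := fun a c => (hM0 a c).trans (le_max_left _ _)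
  have hM0' : 0 ≤ M := le_max_right _ _
  -- bound on g
  obtain ⟨Cg, hCg0, hCg⟩ : ∃ C : ℝ, 0 ≤ C ∧ ∀ a c, |g a c| ≤ C := by
    have hK : IsCompact (Icc Ym Yp ×ˢ Icc Ym Yp) := isCompact_Icc.prod isCompact_Icc
    obtain ⟨C, hC⟩ := hK.exists_bound_of_continuousOn
      (hg_cont.continuousOn (s := Icc Ym Yp ×ˢ Icc Ym Yp))
    refine ⟨max C 0, le_max_right _ _, fun a c => ?_⟩
    by_cases h : (a, c) ∈ Icc Ym Yp ×ˢ Icc Ym Yp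
    · exact le_trans (by simpa [Real.norm_eq_abs] using hC (a, c) h) (le_max_left _ _)
    · have : g a c = 0 := by
        refine hg_supp a c fun ⟨h1, h2, h3⟩ => h ?_
        exact ⟨⟨h1, h2.trans h3⟩, ⟨h1.trans h2, h3⟩⟩
      simp [this, le_max_right]
  set L : ℝ := (volume (Icc Ym Yp)).toReal with hLdef
  have hL0 : 0 ≤ L := ENNReal.toReal_nonneg
  set k1 : ℝ → ℝ → ℝ := fun a c => v a c * g a c with hk1def
  -- support facts
  have hg0 : ∀ y c, c ∉ Icc Ym Yp → g y c = 0 := by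
    intro y c hc
    refine hg_supp y c fun ⟨h1, h2, h3⟩ => hc ⟨h1.trans h2, h3⟩
  have hg0' : ∀ y c, c < y → g y c = 0 := by
    intro y c hc
    exact hg_supp y c fun ⟨_, h2, _⟩ => absurd h2 (not_le.2 hc)
  have hk10 : ∀ y c, c ∉ Icc Ym Yp → k1 y c = 0 := fun y c hc => by
    simp [hk1def, hg0 y c hc]
  have hk10' : ∀ y c, c < y → k1 y c = 0 := fun y c hc => by
    simp [hk1def, hg0' y c hc]
  have hk1C : ∀ a c, |k1 a c| ≤ M * Cg := fun a c => by
    rw [hk1def]; simp only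
    rw [abs_mul]
    exact mul_le_mul (hM a c) (hCg a c) (abs_nonneg _) hM0'
  -- continuity of sections
  have hgc : ∀ y, Continuous (fun c => g y c) := fun y =>
    hg_cont.comp (continuous_const.prodMk continuous_id)
  have hvc : ∀ y, Continuous (fun c => v y c) := fun y =>
    hv_cont.comp (continuous_const.prodMk continuous_id)
  have hk1c : ∀ y, Continuous (fun c => k1 y c) := fun y => (hvc y).mul (hgc y)
  -- integrability of sections
  have hint_g : ∀ y, Integrable (fun c => g y c) volume := fun y =>
    integrable_of_bdd_supp measurableSet_Icc measure_Icc_lt_top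
      (hgc y).aestronglyMeasurable Cg (hCg y) (hg0 y)
  have hint_k1 : ∀ y, Integrable (fun c => k1 y c) volume := fun y =>
    integrable_of_bdd_supp measurableSet_Icc measure_Icc_lt_top
      (hk1c y).aestronglyMeasurable (M * Cg) (hk1C y) (hk10 y)
  -- Ah over the whole line
  have hAh_eq : ∀ (k : ℝ → ℝ → ℝ), (∀ y c, c < y → k y c = 0) →
      ∀ y, Ah k y = ∫ c, k y c := by
    intro k hk0 y
    rw [Ah, ← integral_Ici_eq_integral_Ioi,
      setIntegral_eq_integral_of_forall_compl_eq_zero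
        (fun c hc => hk0 y c (by simpa using hc))]
  set A1 : ℝ → ℝ := Ah k1 with hA1def
  set A2 : ℝ → ℝ := Ah g with hA2def
  -- measurability of A1 A2
  have hA1m : AEStronglyMeasurable A1 volume := by
    have : A1 = fun y => ∫ c, k1 y c := funext (hAh_eq k1 hk10')
    rw [this]
    exact (StronglyMeasurable.integral_prod_right'
      ((hv_cont.mul hg_cont).stronglyMeasurable)).aestronglyMeasurable
  have hA2m : AEStronglyMeasurable A2 volume := by
    have : A2 = fun y => ∫ c, g y c := funext (hAh_eq g hg0')
    rw [this]
    exact (StronglyMeasurable.integral_prod_right'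
      (hg_cont.stronglyMeasurable)).aestronglyMeasurable
  -- bounds on A1 A2
  have hA1b : ∀ y, |A1 y| ≤ M * Cg * L := fun y =>
    abs_setIntegral_le_of_bdd_supp Ym Yp (M * Cg) (mul_nonneg hM0' hCg0)
      (hk1c y).aestronglyMeasurable (hk1C y) (hk10 y) (Ioi y)
  have hA2b : ∀ y, |A2 y| ≤ Cg * L := by
    intro y
    have := abs_setIntegral_le_of_bdd_supp Ym Yp Cg hCg0
      (hgc y).aestronglyMeasurable (hCg y) (hg0 y) (Ioi y)
    exact this
  intro ym
  -- the 2D kernel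
  set F : ℝ × ℝ → ℝ := fun q => (v q.1 q.2 - v ym q.1) * g ym q.1 * g q.1 q.2 with hFdef
  have hFc : Continuous F := by
    refine ((hv_cont.sub (hv_cont.comp (continuous_const.prodMk continuous_fst))).mul
      (hg_cont.comp (continuous_const.prodMk continuous_fst))).mul hg_cont
  set U : Set (ℝ × ℝ) := {q | ym < q.1 ∧ q.1 < q.2} with hUdef
  have hUo : MeasurableSet U :=
    ((isOpen_lt continuous_const continuous_fst).inter
      (isOpen_lt continuous_fst continuous_snd)).measurableSet
  set H : ℝ × ℝ → ℝ := U.indicator F with hHdef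
  have hHm : AEStronglyMeasurable H (volume.prod volume) :=
    (hFc.stronglyMeasurable.indicator hUo).aestronglyMeasurable
  have hFb : ∀ q, |F q| ≤ (M + M) * Cg * Cg := by
    intro q
    rw [hFdef]; simp only
    rw [abs_mul, abs_mul]
    refine mul_le_mul (mul_le_mul ?_ (hCg ym q.1) (abs_nonneg _)
      (by positivity)) (hCg q.1 q.2) (abs_nonneg _) (by positivity)
    exact (abs_sub _ _).trans (add_le_add (hM _ _) (hM _ _))
  have hHb : ∀ q, |H q| ≤ (M + M) * Cg * Cg := by
    intro q
    rw [hHdef]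
    by_cases hq : q ∈ U
    · rw [Set.indicator_of_mem hq]; exact hFb q
    · rw [Set.indicator_of_notMem hq, abs_zero]; positivity
  have hHsupp : ∀ q : ℝ × ℝ, q ∉ Icc Ym Yp ×ˢ Icc Ym Yp → H q = 0 := by
    intro q hq
    rw [hHdef]
    by_cases hqU : q ∈ U
    · rw [Set.indicator_of_mem hqU, hFdef]
      by_cases h1 : g ym q.1 = 0
      · simp [h1]
      by_cases h2 : g q.1 q.2 = 0
      · simp [h2]
      exfalso
      have hs1 : Ym ≤ ym ∧ ym ≤ q.1 ∧ q.1 ≤ Yp := by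
        by_contra hcon; exact h1 (hg_supp _ _ hcon)
      have hs2 : Ym ≤ q.1 ∧ q.1 ≤ q.2 ∧ q.2 ≤ Yp := by
        by_contra hcon; exact h2 (hg_supp _ _ hcon)
      exact hq ⟨⟨hs2.1, hs1.2.2⟩, ⟨hs2.1.trans hs2.2.1, hs2.2.2⟩⟩
    · rw [Set.indicator_of_notMem hqU]
  have hprodfin : (volume.prod volume) (Icc Ym Yp ×ˢ Icc Ym Yp) < ⊤ := by
    rw [Measure.prod_prod]
    exact ENNReal.mul_lt_top measure_Icc_lt_top measure_Icc_lt_top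
  have hHint : Integrable H (volume.prod volume) :=
    integrable_of_bdd_supp (measurableSet_Icc.prod measurableSet_Icc) hprodfin
      hHm ((M + M) * Cg * Cg) hHb hHsupp
  -- Qh as full-line integral of H
  have hQeq : ∀ p, Qh v g ym p = ∫ s, H (s, p) := by
    intro p
    rw [Qh, ← integral_indicator measurableSet_Ioo]
    congr 1
  have hinner0 : ∀ p, p ≤ ym → (∫ s, H (s, p)) = 0 := by
    intro p hp
    have : ∀ s, H (s, p) = 0 := by
      intro s
      rw [hHdef]
      apply Set.indicator_of_notMem
      rw [hUdef]
      rintro ⟨h1, h2⟩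
      exact absurd (h1.trans h2) (not_lt.2 hp)
    simp only [this, integral_zero]
  -- target integrabilities
  have it1 : Integrable (fun s => g ym s * A1 s) volume := by
    refine integrable_of_bdd_supp (s := Icc Ym Yp) measurableSet_Icc measure_Icc_lt_top
      ((hgc ym).aestronglyMeasurable.mul hA1m) (Cg * (M * Cg * L)) ?_ ?_
    · intro x
      rw [abs_mul]
      exact mul_le_mul (hCg ym x) (hA1b x) (abs_nonneg _) hCg0
    · intro x hx; simp [hg0 ym x hx]
  have it2 : Integrable (fun s => v ym s * g ym s * A2 s) volume := by
    refine integrable_of_bdd_supp (s := Icc Ym Yp) measurableSet_Icc measure_Icc_lt_top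
      (((hvc ym).mul (hgc ym)).aestronglyMeasurable.mul hA2m) (M * Cg * (Cg * L)) ?_ ?_
    · intro x
      rw [abs_mul, abs_mul]
      refine mul_le_mul (mul_le_mul (hM ym x) (hCg ym x) (abs_nonneg _) hM0')
        (hA2b x) (abs_nonneg _) (by positivity)
    · intro x hx; simp [hg0 ym x hx]
  -- Part 2
  have part2 : Ah (Qh v g) ym
      = (∫ ys in Ioi ym, g ym ys * A1 ys) - ∫ ys in Ioi ym, v ym ys * g ym ys * A2 ys := by
    have step1 : Ah (Qh v g) ym = ∫ p, ∫ s, H (s, p) := by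
      rw [Ah]
      simp only [hQeq]
      exact setIntegral_eq_integral_of_forall_compl_eq_zero
        (fun p hp => hinner0 p (by simpa using hp))
    have step2 : (∫ p, ∫ s, H (s, p)) = ∫ s, ∫ p, H (s, p) := by
      exact integral_integral_swap (f := fun p s => H (s, p)) hHint.swap
    have step3 : ∀ s, (∫ p, H (s, p))
        = (Ioi ym).indicator (fun s => g ym s * A1 s - v ym s * g ym s * A2 s) s := by
      intro s
      by_cases hs : ym < s
      · rw [Set.indicator_of_mem (Set.mem_Ioi.2 hs)]
        have heq : (fun p => H (s, p)) = (Ioi s).indicator (fun p => F (s, p)) := by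
          funext p
          rw [hHdef, Set.indicator_apply, Set.indicator_apply]
          simp only [hUdef, Set.mem_setOf_eq, Set.mem_Ioi, hs, true_and]
        rw [heq, integral_indicator measurableSet_Ioi]
        have heq2 : (fun p => F (s, p))
            = fun p => g ym s * (k1 s p) - (v ym s * g ym s) * (g s p) := by
          funext p
          rw [hFdef, hk1def]; simp only; ring
        rw [heq2, integral_sub ((hint_k1 s).integrableOn.const_mul _)
          ((hint_g s).integrableOn.const_mul _), integral_const_mul, integral_const_mul]
        rw [hA1def, hA2def, Ah, Ah]
      · rw [Set.indicator_of_notMem (fun h => hs (Set.mem_Ioi.1 h))]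
        have : ∀ p, H (s, p) = 0 := by
          intro p
          rw [hHdef]
          apply Set.indicator_of_notMem
          rw [hUdef]
          rintro ⟨h1, _⟩
          exact hs h1
        simp only [this, integral_zero]
    rw [step1, step2]
    simp only [step3]
    rw [integral_indicator measurableSet_Ioi,
      integral_sub it1.integrableOn it2.integrableOn]
  -- Part 3
  have hIg : (∫ ys in Ioi ym, g ym ys) = A2 ym := by rw [hA2def, Ah]
  have hIk1 : (∫ ys in Ioi ym, v ym ys * g ym ys) = A1 ym := by rw [hA1def, Ah, hk1def]
  have part3 : Ah (fun a c => g a c * Jh v g a c) ym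
      = (∫ ys in Ioi ym, g ym ys * A1 ys) - ∫ ys in Ioi ym, v ym ys * g ym ys * A2 ys := by
    have heq : (fun p => g ym p * Jh v g ym p)
        = fun p => (g ym p * A1 p - v ym p * g ym p * A2 p)
            - (A1 ym * g ym p - A2 ym * (v ym p * g ym p)) := by
      funext p
      rw [Jh, ← hk1def, ← hA1def, ← hA2def]
      ring
    have i12 : Integrable (fun p => g ym p * A1 p - v ym p * g ym p * A2 p) volume :=
      it1.sub it2
    have i3 : Integrable (fun p => A1 ym * g ym p) volume := (hint_g ym).const_mul _
    have i4 : Integrable (fun p => A2 ym * (v ym p * g ym p)) volume :=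
      (hint_k1 ym).const_mul _
    have i34 : Integrable (fun p => A1 ym * g ym p - A2 ym * (v ym p * g ym p)) volume :=
      i3.sub i4
    rw [Ah]
    simp only [heq]  -- rewrite integrand
    rw [integral_sub i12.integrableOn i34.integrableOn,
      integral_sub it1.integrableOn it2.integrableOn,
      integral_sub i3.integrableOn i4.integrableOn,
      integral_const_mul, integral_const_mul]
    rw [hIg, hIk1]
    ring
  -- Part 1
  have hQint : IntegrableOn (fun p => Qh v g ym p) (Ioi ym) volume := by
    have : (fun p => Qh v g ym p) = fun p => ∫ s, H (s, p) := funext hQeq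
    rw [this]
    exact (hHint.swap.integral_prod_left).integrableOn
  have hGJint : IntegrableOn (fun p => g ym p * Jh v g ym p) (Ioi ym) volume := by
    have heq : (fun p => g ym p * Jh v g ym p)
        = fun p => (g ym p * A1 p - v ym p * g ym p * A2 p)
            - (A1 ym * g ym p - A2 ym * (v ym p * g ym p)) := by
      funext p
      rw [Jh, ← hk1def, ← hA1def, ← hA2def]
      ring
    have i12 : Integrable (fun p => g ym p * A1 p - v ym p * g ym p * A2 p) volume :=
      it1.sub it2
    have i34 : Integrable (fun p => A1 ym * g ym p - A2 ym * (v ym p * g ym p)) volume :=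
      ((hint_g ym).const_mul _).sub ((hint_k1 ym).const_mul _)
    rw [heq]
    exact (i12.sub i34).integrableOn
  refine ⟨?_, part2, part3⟩
  rw [integral_sub hQint hGJint]
  have e2 : (∫ yp in Ioi ym, Qh v g ym yp) = Ah (Qh v g) ym := by rw [Ah]
  have e3 : (∫ yp in Ioi ym, g ym yp * Jh v g ym yp)
      = Ah (fun a c => g a c * Jh v g a c) ym := by rw [Ah]
  rw [e2, e3, part2, part3, sub_self]
end
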